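/- arXiv:1502.00180 — 6 statements merged into one kernel-verified Lean document; each statement's English description precedes it below -/
import Mathlib

section
/- Let γ : S¹ → ℂⁿ be a C¹-smooth closed curve, and let α be the 1-form Σⱼ (xⱼ dyⱼ − yⱼ dxⱼ) on ℂⁿ = ℝ²ⁿ. Then the square of the length of γ is at least 2π times the integral of γ*α over S¹, i.e. (∫₀¹ |γ'(t)| dt)² ≥ 2π ∫₀¹ α(γ'(t)) dt. -/
open MeasureTheory Function Set intervalIntegral Complex Filter
open scoped Real ENNReal NNReal Topology

noncomputable section



theorem parseval_periodic (f : ℝ → ℂ) (hf : Continuous f) (hper : Function.Periodic f 1) :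
    Summable (fun m : ℤ => ‖fourierCoeffOn zero_lt_one f m‖ ^ 2) ∧
    ∑' m : ℤ, ‖fourierCoeffOn zero_lt_one f m‖ ^ 2 = ∫ t in (0:ℝ)..1, ‖f t‖ ^ 2 := by
  haveI : Fact ((0:ℝ) < 1) := ⟨one_pos⟩
  set F : C(AddCircle (1:ℝ), ℂ) := ⟨AddCircle.liftIco 1 0 f,
    AddCircle.liftIco_zero_continuous (by simpa using (hper 0).symm) hf.continuousOn⟩ with hF
  have hFcoe : (F : AddCircle (1:ℝ) → ℂ) = AddCircle.liftIco 1 0 f := rfl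
  have h1 : ∀ m : ℤ, fourierCoeff (F : AddCircle (1:ℝ) → ℂ) m = fourierCoeffOn zero_lt_one f m := by
    intro m
    rw [hFcoe]
    have := fourierCoeff_liftIco_eq (T := (1:ℝ)) (a := 0) f m
    simp only [zero_add] at this
    exact this
  set fL : Lp ℂ 2 (@AddCircle.haarAddCircle 1 _) := ContinuousMap.toLp 2 AddCircle.haarAddCircle ℂ F with hfL
  have h2 : ∀ m : ℤ, fourierCoeff (fL : AddCircle (1:ℝ) → ℂ) m = fourierCoeffOn zero_lt_one f m := by
    intro m; rw [hfL, fourierCoeff_toLp]; exact h1 m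
  have hsum : Summable (fun m : ℤ => ‖fourierCoeffOn zero_lt_one f m‖ ^ 2) := by
    have hs := (lp.memℓp ((@fourierBasis 1 _).repr fL)).summable
      (by norm_num : (0:ℝ) < (2:ℝ≥0∞).toReal)
    refine (summable_congr fun m => ?_).1 hs
    rw [fourierBasis_repr, h2 m]
    norm_num
  refine ⟨hsum, ?_⟩
  have hP := tsum_sq_fourierCoeff fL
  simp only [h2] at hP
  rw [hP]
  have hae : (fL : AddCircle (1:ℝ) → ℂ) =ᵐ[AddCircle.haarAddCircle] F :=
    ContinuousMap.coeFn_toLp (p := 2) (μ := AddCircle.haarAddCircle) (𝕜 := ℂ) F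
  rw [show (∫ t : AddCircle (1:ℝ), ‖(fL : AddCircle (1:ℝ) → ℂ) t‖ ^ 2 ∂AddCircle.haarAddCircle) = ∫ t : AddCircle (1:ℝ), ‖F t‖ ^ 2 ∂AddCircle.haarAddCircle from integral_congr_ae (hae.mono fun x hx => by simp only [hx])]
  have hvol : (volume : Measure (AddCircle (1:ℝ))) = AddCircle.haarAddCircle := by
    rw [AddCircle.volume_eq_smul_haarAddCircle]
    simp
  rw [← hvol]
  have hpre := AddCircle.intervalIntegral_preimage (1:ℝ) 0 (fun z => ‖F z‖^2)
  rw [zero_add] at hpre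
  rw [← hpre]
  refine intervalIntegral.integral_congr_ae ?_
  filter_upwards [MeasureTheory.compl_mem_ae_iff.mpr (show volume ({1} : Set ℝ) = 0 by simp)] with x hx1 hx
  rw [Set.uIoc_of_le zero_le_one] at hx
  have hx' : x ∈ Set.Ico (0:ℝ) (0+1) := ⟨le_of_lt hx.1, by rw [zero_add]; exact lt_of_le_of_ne hx.2 (by simpa using hx1)⟩
  simp [hF, AddCircle.liftIco_coe_apply hx']





theorem deriv_periodic_aux {g g' : ℝ → ℂ} (hd : ∀ t, HasDerivAt g (g' t) t)
    (hper : Function.Periodic g 1) : Function.Periodic g' 1 := by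
  intro t
  have h0 : HasDerivAt (fun s : ℝ => s + 1) 1 t := (hasDerivAt_id t).add_const 1
  have h1 : HasDerivAt (g ∘ fun s : ℝ => s + 1) ((1:ℝ) • g' (t + 1)) t := (hd (t + 1)).scomp t h0
  rw [one_smul] at h1
  have h2 : (g ∘ fun s : ℝ => s + 1) = g := funext fun s => hper s
  rw [h2] at h1
  exact h1.unique (hd t)

theorem wirtinger_scalar (g g' : ℝ → ℂ) (hd : ∀ t, HasDerivAt g (g' t) t) (hc : Continuous g')
    (hper : Function.Periodic g 1) (hzero : ∫ t in (0:ℝ)..1, g t = 0) :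
    ∫ t in (0:ℝ)..1, ‖g t‖ ^ 2 ≤ (1/(4*π^2)) * ∫ t in (0:ℝ)..1, ‖g' t‖ ^ 2 := by
  have hgc : Continuous g := continuous_iff_continuousAt.2 fun t => (hd t).continuousAt
  obtain ⟨S1, P1⟩ := parseval_periodic g hgc hper
  obtain ⟨S2, P2⟩ := parseval_periodic g' hc (deriv_periodic_aux hd hper)
  -- coefficient at 0 vanishes
  have hcoeff0 : fourierCoeffOn zero_lt_one g 0 = 0 := by
    rw [fourierCoeffOn_eq_integral]
    simp [hzero]
  -- termwise bound
  have hterm : ∀ m : ℤ, ‖fourierCoeffOn zero_lt_one g m‖ ^ 2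
      ≤ (1/(4*π^2)) * ‖fourierCoeffOn zero_lt_one g' m‖ ^ 2 := by
    intro m
    rcases eq_or_ne m 0 with rfl | hm
    · have h : (0:ℝ) ≤ (1/(4*π^2)) * ‖fourierCoeffOn zero_lt_one g' 0‖ ^ 2 := by positivity
      simpa [hcoeff0] using h
    · have key := fourierCoeffOn_of_hasDerivAt zero_lt_one hm
        (fun x _ => hd x) (hc.intervalIntegrable 0 1)
      have hg10 : g 1 - g 0 = 0 := by
        have := hper 0
        rw [zero_add] at this
        rw [this, sub_self]
      rw [hg10, mul_zero, zero_sub] at key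
      have hnorm : ‖fourierCoeffOn zero_lt_one g m‖
          = (1 / (2 * π * |(m:ℝ)|)) * ‖fourierCoeffOn zero_lt_one g' m‖ := by
        rw [key]
        rw [norm_mul, norm_neg, norm_mul, norm_div, norm_one]
        have h1 : ‖(-2 * ↑π * I * (m:ℂ) : ℂ)‖ = 2 * π * |(m:ℝ)| := by
          simp [norm_mul, Complex.norm_I, Complex.norm_real, Real.norm_eq_abs,
            abs_of_pos Real.pi_pos]
        have h2 : ‖((1:ℤ):ℂ) - ((0:ℤ):ℂ)‖ = (1:ℝ) := by norm_num
        rw [h1]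
        norm_num
      have hm1 : (1:ℝ) ≤ |(m:ℝ)| := by
        have := Int.one_le_abs hm
        exact_mod_cast this
      have hfrac : (1 / (2 * π * |(m:ℝ)|)) ≤ 1 / (2 * π) := by
        apply one_div_le_one_div_of_le (by positivity)
        nlinarith [Real.pi_pos]
      rw [hnorm, mul_pow]
      have hb : (1 / (2 * π * |(m:ℝ)|)) ^ 2 ≤ 1/(4*π^2) := by
        have : (1 / (2 * π)) ^ 2 = 1/(4*π^2) := by ring
        rw [← this]
        apply pow_le_pow_left₀ (by positivity) hfrac
      exact mul_le_mul_of_nonneg_right hb (by positivity)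
  calc ∫ t in (0:ℝ)..1, ‖g t‖ ^ 2 = ∑' m : ℤ, ‖fourierCoeffOn zero_lt_one g m‖ ^ 2 := P1.symm
    _ ≤ ∑' m : ℤ, (1/(4*π^2)) * ‖fourierCoeffOn zero_lt_one g' m‖ ^ 2 :=
        Summable.tsum_le_tsum hterm S1 (S2.mul_left _)
    _ = (1/(4*π^2)) * ∑' m : ℤ, ‖fourierCoeffOn zero_lt_one g' m‖ ^ 2 := tsum_mul_left
    _ = (1/(4*π^2)) * ∫ t in (0:ℝ)..1, ‖g' t‖ ^ 2 := by rw [P2]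





theorem energy_ineq (n : ℕ) (f f' : ℝ → EuclideanSpace ℂ (Fin n))
    (hd : ∀ t, HasDerivAt f (f' t) t) (hc : Continuous f') (hper : Function.Periodic f 1) :
    2 * π * (∫ t in (0:ℝ)..1, ∑ j, ((f t j).re * (f' t j).im - (f t j).im * (f' t j).re))
      ≤ ∫ t in (0:ℝ)..1, ‖f' t‖ ^ 2 := by
  classical
  have hfc : Continuous f := continuous_iff_continuousAt.2 fun t => (hd t).continuousAt
  have hdj : ∀ (j : Fin n) (t : ℝ), HasDerivAt (fun s => f s j) (f' t j) t := by
    intro j t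
    have := (((EuclideanSpace.proj j : EuclideanSpace ℂ (Fin n) →L[ℂ] ℂ).restrictScalars
      ℝ).hasFDerivAt (x := f t)).comp_hasDerivAt t (hd t)
    simpa [Function.comp_def] using this
  have hfcj : ∀ j : Fin n, Continuous fun t => f t j := by
    intro j
    have := (((EuclideanSpace.proj j : EuclideanSpace ℂ (Fin n) →L[ℂ] ℂ).restrictScalars
      ℝ).continuous).comp hfc
    simpa [Function.comp_def] using this
  have hcj : ∀ j : Fin n, Continuous fun t => f' t j := by
    intro j
    have := (((EuclideanSpace.proj j : EuclideanSpace ℂ (Fin n) →L[ℂ] ℂ).restrictScalars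
      ℝ).continuous).comp hc
    simpa [Function.comp_def] using this
  set c : Fin n → ℂ := fun j => ∫ t in (0:ℝ)..1, f t j with hcdef
  set g : Fin n → ℝ → ℂ := fun j t => f t j - c j with hgdef
  -- properties of g
  have hgd : ∀ (j : Fin n) (t : ℝ), HasDerivAt (g j) (f' t j) t := fun j t =>
    (hdj j t).sub_const (c j)
  have hgper : ∀ j : Fin n, Function.Periodic (g j) 1 := by
    intro j t
    simp only [hgdef]
    rw [hper t]
  have hgzero : ∀ j : Fin n, ∫ t in (0:ℝ)..1, g j t = 0 := by
    intro j
    simp only [hgdef]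
    rw [intervalIntegral.integral_sub ((hfcj j).intervalIntegrable 0 1)
      (intervalIntegrable_const), intervalIntegral.integral_const]
    simp [hcdef]
  have hgcont : ∀ j : Fin n, Continuous (g j) := fun j => (hfcj j).sub continuous_const
  -- Wirtinger per coordinate
  have hW : ∀ j : Fin n, ∫ t in (0:ℝ)..1, ‖g j t‖ ^ 2
      ≤ (1/(4*π^2)) * ∫ t in (0:ℝ)..1, ‖f' t j‖ ^ 2 := fun j =>
    wirtinger_scalar (g j) (fun t => f' t j) (hgd j) (hcj j) (hgper j) (hgzero j)
  -- ∫ f'ⱼ = 0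
  have hint0 : ∀ j : Fin n, ∫ t in (0:ℝ)..1, f' t j = 0 := by
    intro j
    rw [intervalIntegral.integral_eq_sub_of_hasDerivAt (fun x _ => hdj j x)
      ((hcj j).intervalIntegrable 0 1)]
    have := hper 0
    rw [zero_add] at this
    rw [this, sub_self]
  -- rewrite the α integrand
  have hA : ∀ t, (∑ j, ((f t j).re * (f' t j).im - (f t j).im * (f' t j).re))
      = (∑ j, ((starRingEnd ℂ) (g j t) * f' t j).im)
        + ∑ j, ((starRingEnd ℂ) (c j) * f' t j).im := by
    intro t
    rw [← Finset.sum_add_distrib]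
    congr 1
    ext j
    simp only [hgdef, map_sub, sub_mul, Complex.sub_im, Complex.mul_im, Complex.conj_re,
      Complex.conj_im]
    ring
  -- integrability
  have hi1 : IntervalIntegrable (fun t => ∑ j, ((starRingEnd ℂ) (g j t) * f' t j).im)
      volume 0 1 := by
    apply Continuous.intervalIntegrable
    exact continuous_finset_sum _ fun j _ =>
      (Complex.continuous_im.comp ((Complex.continuous_conj.comp (hgcont j)).mul (hcj j)))
  have hi2 : IntervalIntegrable (fun t => ∑ j, ((starRingEnd ℂ) (c j) * f' t j).im)
      volume 0 1 := by
    apply Continuous.intervalIntegrable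
    exact continuous_finset_sum _ fun j _ =>
      (Complex.continuous_im.comp (continuous_const.mul (hcj j)))
  -- the constant part integrates to 0
  have hcont2 : ∀ j : Fin n, Continuous fun t => ((starRingEnd ℂ) (c j) * f' t j).im := by
    intro j
    exact Complex.continuous_im.comp (continuous_const.mul (hcj j))
  have hC : ∫ t in (0:ℝ)..1, (∑ j, ((starRingEnd ℂ) (c j) * f' t j).im) = 0 := by
    rw [intervalIntegral.integral_finset_sum (fun j _ => ((hcont2 j).intervalIntegrable 0 1))]
    refine Finset.sum_eq_zero fun j _ => ?_
    have him : ∫ t in (0:ℝ)..1, ((starRingEnd ℂ) (c j) * f' t j).im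
        = (∫ t in (0:ℝ)..1, (starRingEnd ℂ) (c j) * f' t j).im := by
      have h := (Complex.imCLM.intervalIntegral_comp_comm
        (f := fun t => (starRingEnd ℂ) (c j) * f' t j) (a := 0) (b := 1)
        ((continuous_const.mul (hcj j)).intervalIntegrable (μ := volume) 0 1))
      simpa using h
    rw [him, intervalIntegral.integral_const_mul, hint0 j, mul_zero]
    simp
  -- main chain
  have hmain : ∫ t in (0:ℝ)..1, (∑ j, ((f t j).re * (f' t j).im - (f t j).im * (f' t j).re))
      = ∫ t in (0:ℝ)..1, (∑ j, ((starRingEnd ℂ) (g j t) * f' t j).im) := by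
    rw [intervalIntegral.integral_congr (fun t _ => hA t),
      intervalIntegral.integral_add hi1 hi2, hC, add_zero]
  rw [hmain]
  -- pointwise bound and Wirtinger
  have hpt : ∀ t ∈ Set.Icc (0:ℝ) 1,
      2 * π * (∑ j, ((starRingEnd ℂ) (g j t) * f' t j).im)
        ≤ ∑ j, (2*π^2 * ‖g j t‖^2 + (1/2) * ‖f' t j‖^2) := by
    intro t _
    rw [Finset.mul_sum]
    refine Finset.sum_le_sum fun j _ => ?_
    have h1 : ((starRingEnd ℂ) (g j t) * f' t j).im ≤ ‖g j t‖ * ‖f' t j‖ := by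
      refine le_trans (Complex.im_le_norm _) ?_
      rw [norm_mul, RCLike.norm_conj]
    nlinarith [Real.pi_pos, norm_nonneg (g j t), norm_nonneg (f' t j),
      sq_nonneg (2*π*‖g j t‖ - ‖f' t j‖), Real.pi_pos.le]
  -- continuity of the squares
  have hcg2 : ∀ j : Fin n, Continuous fun t => ‖g j t‖ ^ 2 := fun j =>
    ((hgcont j).norm.pow 2)
  have hcf2 : ∀ j : Fin n, Continuous fun t => ‖f' t j‖ ^ 2 := fun j =>
    ((hcj j).norm.pow 2)
  have hrhs_cont : Continuous fun t => ∑ j, (2*π^2 * ‖g j t‖^2 + (1/2) * ‖f' t j‖^2) :=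
    continuous_finset_sum _ fun j _ =>
      ((continuous_const.mul (hcg2 j)).add (continuous_const.mul (hcf2 j)))
  have step1 : 2 * π * ∫ t in (0:ℝ)..1, (∑ j, ((starRingEnd ℂ) (g j t) * f' t j).im)
      ≤ ∫ t in (0:ℝ)..1, ∑ j, (2*π^2 * ‖g j t‖^2 + (1/2) * ‖f' t j‖^2) := by
    rw [← intervalIntegral.integral_const_mul]
    exact intervalIntegral.integral_mono_on zero_le_one
      (by exact (continuous_const.mul (continuous_finset_sum _ fun j _ =>
        (Complex.continuous_im.comp ((Complex.continuous_conj.comp (hgcont j)).mul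
          (hcj j))))).intervalIntegrable 0 1)
      (hrhs_cont.intervalIntegrable 0 1) hpt
  have step2 : ∫ t in (0:ℝ)..1, ∑ j, (2*π^2 * ‖g j t‖^2 + (1/2) * ‖f' t j‖^2)
      = ∑ j, (2*π^2 * (∫ t in (0:ℝ)..1, ‖g j t‖^2)
          + (1/2) * (∫ t in (0:ℝ)..1, ‖f' t j‖^2)) := by
    rw [intervalIntegral.integral_finset_sum (fun j _ =>
      (show IntervalIntegrable (fun t => 2*π^2 * ‖g j t‖^2 + (1/2) * ‖f' t j‖^2) volume 0 1 from
        (((continuous_const.mul (hcg2 j)).add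
        (continuous_const.mul (hcf2 j))).intervalIntegrable 0 1)))]
    refine Finset.sum_congr rfl fun j _ => ?_
    rw [intervalIntegral.integral_add (show IntervalIntegrable (fun t => 2*π^2 * ‖g j t‖^2)
        volume 0 1 from (continuous_const.mul (hcg2 j)).intervalIntegrable 0 1)
      (show IntervalIntegrable (fun t => (1/2) * ‖f' t j‖^2) volume 0 1 from
        (continuous_const.mul (hcf2 j)).intervalIntegrable 0 1),
      intervalIntegral.integral_const_mul, intervalIntegral.integral_const_mul]
  have step3 : ∑ j, (2*π^2 * (∫ t in (0:ℝ)..1, ‖g j t‖^2)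
          + (1/2) * (∫ t in (0:ℝ)..1, ‖f' t j‖^2))
      ≤ ∑ j : Fin n, ∫ t in (0:ℝ)..1, ‖f' t j‖^2 := by
    refine Finset.sum_le_sum fun j _ => ?_
    have h1 : 2*π^2 * (∫ t in (0:ℝ)..1, ‖g j t‖^2)
        ≤ 2*π^2 * ((1/(4*π^2)) * ∫ t in (0:ℝ)..1, ‖f' t j‖^2) :=
      mul_le_mul_of_nonneg_left (hW j) (by positivity)
    have h2 : 2*π^2 * ((1/(4*π^2)) * ∫ t in (0:ℝ)..1, ‖f' t j‖^2)
        = (1/2) * ∫ t in (0:ℝ)..1, ‖f' t j‖^2 := by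
      field_simp
      ring
    linarith
  have step4 : ∑ j : Fin n, ∫ t in (0:ℝ)..1, ‖f' t j‖^2
      = ∫ t in (0:ℝ)..1, ‖f' t‖^2 := by
    rw [← intervalIntegral.integral_finset_sum (fun j _ => ((hcf2 j).intervalIntegrable 0 1))]
    refine intervalIntegral.integral_congr fun t _ => ?_
    rw [EuclideanSpace.norm_eq, Real.sq_sqrt (by positivity)]
  linarith





/-- **Generalized isoperimetric inequality** (Lemma A.2 of Chekanov–Schlenk).
For a `C¹` closed curve `γ : S¹ → ℂⁿ`, the square of its length is at least
`2π` times the integral of the pullback of `α = Σⱼ (xⱼ dyⱼ − yⱼ dxⱼ)`. -/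
theorem square_length_ge_two_pi_mul_integral_alpha
    (n : ℕ) (γ : ℝ → EuclideanSpace ℂ (Fin n))
    (hγ : ContDiff ℝ 1 γ) (hper : ∀ t, γ (t + 1) = γ t) :
    2 * Real.pi *
        (∫ t in (0:ℝ)..1,
          ∑ j, ((γ t j).re * (deriv γ t j).im - (γ t j).im * (deriv γ t j).re))
      ≤ (∫ t in (0:ℝ)..1, ‖deriv γ t‖) ^ 2 := by
  classical
  set v : ℝ → EuclideanSpace ℂ (Fin n) := deriv γ with hvdef
  have hv : ∀ t, HasDerivAt γ (v t) t := fun t =>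
    ((hγ.differentiable one_ne_zero) t).hasDerivAt
  have hvc : Continuous v := (hγ.continuous_deriv le_rfl)
  have hγper : Function.Periodic γ 1 := hper
  have hγc : Continuous γ := hγ.continuous
  have hvper : Function.Periodic v 1 := by
    intro t
    have h0 : HasDerivAt (fun s : ℝ => s + 1) 1 t := (hasDerivAt_id t).add_const 1
    have h1 : HasDerivAt (γ ∘ fun s : ℝ => s + 1) ((1:ℝ) • v (t + 1)) t := (hv (t + 1)).scomp t h0
    rw [one_smul] at h1
    have h2 : (γ ∘ fun s : ℝ => s + 1) = γ := funext fun s => hγper s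
    rw [h2] at h1
    exact h1.unique (hv t)
  set L : ℝ := ∫ t in (0:ℝ)..1, ‖v t‖ with hLdef
  have hL0 : 0 ≤ L := intervalIntegral.integral_nonneg zero_le_one fun t _ => norm_nonneg _
  set F : ℝ → ℝ := fun u => ∑ j, ((γ u j).re * (v u j).im - (γ u j).im * (v u j).re) with hFdef
  have hγcj : ∀ j : Fin n, Continuous fun t => γ t j := by
    intro j
    have := (((EuclideanSpace.proj j : EuclideanSpace ℂ (Fin n) →L[ℂ] ℂ).restrictScalars
      ℝ).continuous).comp hγc
    simpa [Function.comp_def] using this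
  have hvcj : ∀ j : Fin n, Continuous fun t => v t j := by
    intro j
    have := (((EuclideanSpace.proj j : EuclideanSpace ℂ (Fin n) →L[ℂ] ℂ).restrictScalars
      ℝ).continuous).comp hvc
    simpa [Function.comp_def] using this
  have hFc : Continuous F := by
    apply continuous_finset_sum
    intro j _
    exact ((Complex.continuous_re.comp (hγcj j)).mul
        (Complex.continuous_im.comp (hvcj j))).sub
      ((Complex.continuous_im.comp (hγcj j)).mul (Complex.continuous_re.comp (hvcj j)))
  -- it suffices to prove the bound with L replaced by L + ε
  have hsuff : ∀ ε : ℝ, 0 < ε → 2 * π * (∫ t in (0:ℝ)..1, F t) ≤ (L + ε) ^ 2 := by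
    intro ε hε
    set w : ℝ → ℝ := fun t => ‖v t‖ + ε with hwdef
    have hwc : Continuous w := hvc.norm.add continuous_const
    have hwpos : ∀ t, 0 < w t := fun t => by positivity
    have hwper : Function.Periodic w 1 := fun t => by simp only [hwdef]; rw [hvper t]
    have hwint : ∫ t in (0:ℝ)..1, w t = L + ε := by
      rw [intervalIntegral.integral_add (hvc.norm.intervalIntegrable 0 1)
        intervalIntegrable_const, intervalIntegral.integral_const]
      simp [hLdef]
    have hLε : 0 < L + ε := by positivity
    -- the rescaled arclength-type function
    set s : ℝ → ℝ := fun t => (∫ u in (0:ℝ)..t, w u) / (L + ε) with hsdef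
    have hsd : ∀ t, HasDerivAt s (w t / (L + ε)) t := by
      intro t
      apply HasDerivAt.div_const
      exact intervalIntegral.integral_hasDerivAt_right (hwc.intervalIntegrable 0 t)
        (hwc.stronglyMeasurableAtFilter _ _) hwc.continuousAt
    have hs0 : s 0 = 0 := by simp [hsdef]
    have hs_shift : ∀ t, s (t + 1) = s t + 1 := by
      intro t
      have h1 : ∫ u in (0:ℝ)..(t+1), w u = (∫ u in (0:ℝ)..t, w u) + ∫ u in t..(t+1), w u :=
        (intervalIntegral.integral_add_adjacent_intervals (hwc.intervalIntegrable 0 t)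
          (hwc.intervalIntegrable t (t+1))).symm
      have h2 : ∫ u in t..(t+1), w u = L + ε := by
        rw [hwper.intervalIntegral_add_eq t 0, zero_add, hwint]
      simp only [hsdef]
      rw [h1, h2, add_div, div_self hLε.ne']
    have hsmono : StrictMono s := by
      apply strictMono_of_deriv_pos
      intro x
      rw [(hsd x).deriv]
      positivity
    have hscont : Continuous s := continuous_iff_continuousAt.2 fun t => (hsd t).continuousAt
    have hsnat : ∀ m : ℕ, s m = s 0 + m := by
      intro m
      induction m with
      | zero => simp
      | succ k ih =>
        have : ((k:ℝ) + 1) = (k + 1 : ℕ) := by push_cast; ring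
        rw [← this, hs_shift k, ih]
        push_cast
        ring
    have hsneg : ∀ m : ℕ, s (-(m:ℝ)) = s 0 - m := by
      intro m
      induction m with
      | zero => simp
      | succ k ih =>
        have h := hs_shift (-((k+1:ℕ):ℝ))
        have e : -((k+1:ℕ):ℝ) + 1 = -(k:ℝ) := by push_cast; ring
        rw [e, ih] at h
        push_cast
        push_cast at h
        linarith
    have hssurj : Function.Surjective s := by
      apply hscont.surjective
      · apply tendsto_atTop_atTop_of_monotone hsmono.monotone
        intro b
        refine ⟨(⌈b - s 0⌉₊ : ℝ), ?_⟩
        rw [hsnat]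
        have := Nat.le_ceil (b - s 0)
        linarith
      · apply tendsto_atBot_atBot_of_monotone hsmono.monotone
        intro b
        refine ⟨(-(⌈s 0 - b⌉₊ : ℝ)), ?_⟩
        rw [hsneg]
        have := Nat.le_ceil (s 0 - b)
        linarith
    set σ : ℝ ≃o ℝ := StrictMono.orderIsoOfSurjective s hsmono hssurj with hσdef
    set φ : ℝ → ℝ := fun y => σ.symm y with hφdef
    have hσcoe : (σ : ℝ → ℝ) = s := StrictMono.coe_orderIsoOfSurjective s hsmono hssurj
    have hsφ : ∀ y, s (φ y) = y := by
      intro y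
      have := σ.apply_symm_apply y
      rw [← hσcoe]
      exact this
    have hφs : ∀ x, φ (s x) = x := fun x => hsmono.injective (hsφ (s x))
    have hφc : Continuous φ := (σ.symm.continuous)
    have hφd : ∀ y, HasDerivAt φ ((L + ε) / w (φ y)) y := by
      intro y
      have h := HasDerivAt.of_local_left_inverse (hφc.continuousAt)
        (hsd (φ y)) (by positivity : w (φ y) / (L + ε) ≠ 0)
        (Filter.Eventually.of_forall hsφ)
      rw [show (w (φ y) / (L + ε))⁻¹ = (L + ε) / w (φ y) by rw [inv_div]] at h
      exact h
    have hφshift : ∀ y, φ (y + 1) = φ y + 1 := by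
      intro y
      apply hsmono.injective
      rw [hsφ, hs_shift, hsφ]
    have hφ0 : φ 0 = 0 := by
      have h := hφs 0
      rw [hs0] at h
      exact h
    have hφ1 : φ 1 = 1 := by
      have hs1 : s 1 = 1 := by
        have h := hs_shift 0
        rw [hs0, zero_add] at h
        exact h
      have h := hφs 1
      rw [hs1] at h
      exact h
    -- the reparametrized curve
    set Γ : ℝ → EuclideanSpace ℂ (Fin n) := γ ∘ φ with hΓdef
    set Γ' : ℝ → EuclideanSpace ℂ (Fin n) := fun t => ((L + ε) / w (φ t)) • v (φ t) with hΓ'def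
    have hΓd : ∀ t, HasDerivAt Γ (Γ' t) t := fun t => (hv (φ t)).scomp t (hφd t)
    have hwφc : Continuous fun t => w (φ t) := hwc.comp hφc
    have hΓ'c : Continuous Γ' :=
      ((continuous_const.div hwφc fun t => (hwpos (φ t)).ne')).smul (hvc.comp hφc)
    have hΓper : Function.Periodic Γ 1 := by
      intro t
      simp only [hΓdef, Function.comp_apply]
      rw [hφshift, hγper]
    have hEnergy := energy_ineq n Γ Γ' hΓd hΓ'c hΓper
    -- identify the LHS with the original integral
    have hLHS : (∫ t in (0:ℝ)..1, ∑ j, ((Γ t j).re * (Γ' t j).im - (Γ t j).im * (Γ' t j).re))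
        = ∫ t in (0:ℝ)..1, F t := by
      have hptw : ∀ t, (∑ j, ((Γ t j).re * (Γ' t j).im - (Γ t j).im * (Γ' t j).re))
          = ((L + ε) / w (φ t)) • F (φ t) := by
        intro t
        simp only [hΓdef, hΓ'def, hFdef, Function.comp_apply, smul_eq_mul, Finset.mul_sum]
        refine Finset.sum_congr rfl fun j _ => ?_
        have hsm : (((L + ε) / w (φ t)) • v (φ t)) j = ((L + ε) / w (φ t)) • (v (φ t) j) := rfl
        rw [hsm]
        have him : (((L + ε) / w (φ t)) • (v (φ t) j)).im
            = ((L + ε) / w (φ t)) * (v (φ t) j).im := by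
          rw [Complex.real_smul, Complex.mul_im]
          simp
        have hre : (((L + ε) / w (φ t)) • (v (φ t) j)).re
            = ((L + ε) / w (φ t)) * (v (φ t) j).re := by
          rw [Complex.real_smul, Complex.mul_re]
          simp
        rw [him, hre]
        ring
      rw [intervalIntegral.integral_congr (fun t _ => hptw t)]
      have hchg := intervalIntegral.integral_comp_smul_deriv
        (f := φ) (f' := fun t => (L + ε) / w (φ t)) (g := F) (a := 0) (b := 1)
        (fun x _ => hφd x)
        ((continuous_const.div hwφc fun t => (hwpos (φ t)).ne').continuousOn)
        hFc
      simp only [Function.comp_apply] at hchg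
      rw [hchg, hφ0, hφ1]
    rw [hLHS] at hEnergy
    -- bound the energy
    have hRHS : (∫ t in (0:ℝ)..1, ‖Γ' t‖ ^ 2) ≤ (L + ε) ^ 2 := by
      have hbd : ∀ t ∈ Set.Icc (0:ℝ) 1, ‖Γ' t‖ ^ 2 ≤ (L + ε) ^ 2 := by
        intro t _
        have h1 : ‖Γ' t‖ = ((L + ε) / w (φ t)) * ‖v (φ t)‖ := by
          simp only [hΓ'def]
          rw [norm_smul, Real.norm_eq_abs, abs_of_pos (by positivity)]
        have h2 : ((L + ε) / w (φ t)) * ‖v (φ t)‖ ≤ L + ε := by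
          rw [div_mul_eq_mul_div, div_le_iff₀ (hwpos (φ t))]
          have : ‖v (φ t)‖ ≤ w (φ t) := by
            simp only [hwdef]
            linarith [hε]
          nlinarith [norm_nonneg (v (φ t)), hLε.le]
        rw [h1]
        have h3 : 0 ≤ ((L + ε) / w (φ t)) * ‖v (φ t)‖ := by positivity
        nlinarith
      calc (∫ t in (0:ℝ)..1, ‖Γ' t‖ ^ 2) ≤ ∫ t in (0:ℝ)..1, (L + ε) ^ 2 :=
            intervalIntegral.integral_mono_on zero_le_one
              ((hΓ'c.norm.pow 2).intervalIntegrable 0 1) intervalIntegrable_const hbd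
        _ = (L + ε) ^ 2 := by rw [intervalIntegral.integral_const]; simp
    linarith
  -- pass to the limit ε → 0⁺
  have hlim : Tendsto (fun ε : ℝ => (L + ε) ^ 2) (𝓝[>] 0) (𝓝 (L ^ 2)) := by
    have hcont : Tendsto (fun ε : ℝ => (L + ε) ^ 2) (𝓝 0) (𝓝 ((L + 0) ^ 2)) :=
      ((continuous_const.add continuous_id).pow 2).tendsto 0
    rw [add_zero] at hcont
    exact hcont.mono_left nhdsWithin_le_nhds
  have hev : ∀ᶠ ε in 𝓝[>] (0:ℝ), 2 * π * (∫ t in (0:ℝ)..1, F t) ≤ (L + ε) ^ 2 :=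
    eventually_nhdsWithin_of_forall fun ε hε => hsuff ε hε
  have hfin : 2 * π * (∫ t in (0:ℝ)..1, F t) ≤ L ^ 2 := ge_of_tendsto hlim hev
  exact hfin

end
end

section
/- Let u, u' ∈ ℝˡ be vectors whose components generate the same additive subgroup of ℝ (i.e., the subgroup of ℝ generated by u₁,…,u_l equals the subgroup generated by u'₁,…,u'_l). Then there exists a matrix A ∈ GL(l,ℤ) such that A u = u'. -/
open Module LinearMap

/-- A split surjection onto `M` with kernel `K` gives an equivalence with `M × K`. -/
noncomputable def splitEquiv {R N M : Type*} [CommRing R] [AddCommGroup N] [Module R N]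
    [AddCommGroup M] [Module R M] (φ : N →ₗ[R] M) (s : M →ₗ[R] N)
    (hs : φ ∘ₗ s = LinearMap.id) :
    N ≃ₗ[R] M × LinearMap.ker φ :=
  have hs' : ∀ m, φ (s m) = m := fun m => by simpa using LinearMap.ext_iff.mp hs m
  LinearEquiv.ofLinear
    (LinearMap.prod φ ((LinearMap.id - s ∘ₗ φ).codRestrict (LinearMap.ker φ) (fun x => by
      simp [LinearMap.mem_ker, map_sub, hs' (φ x)])))
    ((s ∘ₗ LinearMap.fst R M (LinearMap.ker φ)) +
      (LinearMap.ker φ).subtype ∘ₗ LinearMap.snd R M (LinearMap.ker φ))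
    (by
      apply LinearMap.ext
      rintro ⟨m, k⟩
      have hk : φ (k : N) = 0 := k.2
      refine Prod.ext ?_ (Subtype.ext ?_) <;>
        simp [LinearMap.codRestrict_apply, hs', hk])
    (by
      apply LinearMap.ext
      intro x
      simp [LinearMap.codRestrict_apply, hs'])

/-- **Lemma B.2 of Chekanov–Schlenk.** If the components of `u, u' ∈ ℝˡ` generate
the same additive subgroup of `ℝ`, then some `A ∈ GL(l,ℤ)` maps `u` to `u'`. -/
theorem exists_glZ_mulVec_eq_of_closure_range_eq
    (l : ℕ) (u u' : Fin l → ℝ)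
    (h : AddSubgroup.closure (Set.range u) = AddSubgroup.closure (Set.range u')) :
    ∃ A : Matrix (Fin l) (Fin l) ℤ,
      IsUnit A.det ∧ (A.map (Int.cast : ℤ → ℝ)).mulVec u = u' := by
  classical
  -- the common subgroup, as a ℤ-submodule of ℝ
  set M : Submodule ℤ ℝ := Submodule.span ℤ (Set.range u) with hMdef
  have hM' : Submodule.span ℤ (Set.range u') = M := by
    apply Submodule.toAddSubgroup_injective
    rw [Submodule.span_int_eq_addSubgroupClosure, hMdef,
      Submodule.span_int_eq_addSubgroupClosure, h]
  -- the two linear combination maps, corestricted to M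
  set T : (Fin l → ℤ) →ₗ[ℤ] ℝ := Fintype.linearCombination ℤ u with hT
  set T' : (Fin l → ℤ) →ₗ[ℤ] ℝ := Fintype.linearCombination ℤ u' with hT'
  have hTmem : ∀ x, T x ∈ M := by
    intro x
    have : T x ∈ LinearMap.range T := ⟨x, rfl⟩
    rwa [hT, Fintype.range_linearCombination] at this
  have hT'mem : ∀ x, T' x ∈ M := by
    intro x
    have : T' x ∈ LinearMap.range T' := ⟨x, rfl⟩
    rwa [hT', Fintype.range_linearCombination, hM'] at this
  set φ : (Fin l → ℤ) →ₗ[ℤ] M := T.codRestrict M hTmem with hφ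
  set ψ : (Fin l → ℤ) →ₗ[ℤ] M := T'.codRestrict M hT'mem with hψ
  have hφsurj : Function.Surjective φ := by
    rintro ⟨m, hm⟩
    rw [hMdef, ← Fintype.range_linearCombination ℤ u, ← hT] at hm
    obtain ⟨x, hx⟩ := hm
    exact ⟨x, Subtype.ext hx⟩
  have hψsurj : Function.Surjective ψ := by
    rintro ⟨m, hm⟩
    rw [← hM', ← Fintype.range_linearCombination ℤ u', ← hT'] at hm
    obtain ⟨x, hx⟩ := hm
    exact ⟨x, Subtype.ext hx⟩
  -- instances
  haveI : Module.Finite ℤ M := Module.Finite.span_of_finite ℤ (Set.finite_range u)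
  haveI : Module.Free ℤ M := Module.free_of_finite_type_torsion_free'
  haveI : Module.Finite ℤ (LinearMap.ker φ) :=
    Module.Finite.iff_fg.mpr (IsNoetherian.noetherian _)
  haveI : Module.Finite ℤ (LinearMap.ker ψ) :=
    Module.Finite.iff_fg.mpr (IsNoetherian.noetherian _)
  haveI : Module.Free ℤ (LinearMap.ker φ) := Module.free_of_finite_type_torsion_free'
  haveI : Module.Free ℤ (LinearMap.ker ψ) := Module.free_of_finite_type_torsion_free'
  -- splittings
  obtain ⟨sφ, hsφ⟩ := φ.exists_rightInverse_of_surjective (LinearMap.range_eq_top.2 hφsurj)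
  obtain ⟨sψ, hsψ⟩ := ψ.exists_rightInverse_of_surjective (LinearMap.range_eq_top.2 hψsurj)
  set eφ := splitEquiv φ sφ hsφ with heφ
  set eψ := splitEquiv ψ sψ hsψ with heψ
  -- the kernels have the same rank, hence are isomorphic
  have hrank : Module.finrank ℤ (LinearMap.ker φ) = Module.finrank ℤ (LinearMap.ker ψ) := by
    have h1 : Module.finrank ℤ (Fin l → ℤ)
        = Module.finrank ℤ M + Module.finrank ℤ (LinearMap.ker φ) := by
      rw [eφ.finrank_eq, Module.finrank_prod]
    have h2 : Module.finrank ℤ (Fin l → ℤ)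
        = Module.finrank ℤ M + Module.finrank ℤ (LinearMap.ker ψ) := by
      rw [eψ.finrank_eq, Module.finrank_prod]
    omega
  have hcard : Fintype.card (Module.Free.ChooseBasisIndex ℤ (LinearMap.ker φ))
      = Fintype.card (Module.Free.ChooseBasisIndex ℤ (LinearMap.ker ψ)) := by
    rw [← Module.finrank_eq_card_chooseBasisIndex, ← Module.finrank_eq_card_chooseBasisIndex,
      hrank]
  set ek : (LinearMap.ker φ) ≃ₗ[ℤ] (LinearMap.ker ψ) :=
    (Module.Free.chooseBasis ℤ (LinearMap.ker φ)).equiv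
      (Module.Free.chooseBasis ℤ (LinearMap.ker ψ)) (Fintype.equivOfCardEq hcard) with hek
  -- the automorphism α with φ ∘ α = ψ
  set α : (Fin l → ℤ) ≃ₗ[ℤ] (Fin l → ℤ) :=
    (eψ.trans (LinearEquiv.prodCongr (LinearEquiv.refl ℤ M) ek.symm)).trans eφ.symm with hα
  have hφα : ∀ x, φ (α x) = ψ x := by
    intro x
    have key : ∀ (m : M) (k : LinearMap.ker φ), φ (eφ.symm (m, k)) = m := by
      intro m k
      have he : eφ.symm (m, k) = sφ m + (k : Fin l → ℤ) := by
        simp [heφ, splitEquiv]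
      rw [he]
      have hsm : φ (sφ m) = m := by simpa using LinearMap.ext_iff.mp hsφ m
      simp [hsm, k.2]
    have h1 : φ (eφ.symm ((LinearEquiv.prodCongr (LinearEquiv.refl ℤ M) ek.symm) (eψ x)))
        = (eψ x).1 := by
      simpa using key (eψ x).1 (ek.symm (eψ x).2)
    have h2 : (eψ x).1 = ψ x := by simp [heψ, splitEquiv]
    simp only [hα, LinearEquiv.trans_apply]
    rw [h1, h2]
  -- build the matrix
  set b := Pi.basisFun ℤ (Fin l) with hb
  set B : Matrix (Fin l) (Fin l) ℤ := LinearMap.toMatrix b b α with hB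
  refine ⟨B.transpose, ?_, ?_⟩
  · rw [Matrix.det_transpose]
    exact α.isUnit_det b b
  · funext i
    have hBij : ∀ i j, B i j = α (b j) i := by
      intro i j
      rw [hB, LinearMap.toMatrix_apply]
      simp [hb]
    have key := congrArg Subtype.val (hφα (b i))
    have hTv : T (α (b i)) = T' (b i) := key
    have hT'bi : T' (b i) = u' i := by
      rw [hT', hb]
      set_option linter.unnecessarySimpa false in simpa using Fintype.linearCombination_apply_single ℤ u' i (1 : ℤ)
    have hsum : (∑ j, (α (b i)) j • u j) = u' i := by
      rw [← Fintype.linearCombination_apply ℤ u, ← hT]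
      · rw [hTv, hT'bi]
    rw [← hsum]
    simp only [Matrix.mulVec, dotProduct, Matrix.map_apply, Matrix.transpose_apply]
    refine Finset.sum_congr rfl fun j _ => ?_
    rw [hBij j i]
    simp [zsmul_eq_mul]
end

section
/- Given d, e ∈ ℝ₊² with ⟨d⟩ = ⟨e⟩ (the components generate the same additive subgroup of ℝ), and given A ∈ GL(2,ℤ) with A d = e, there exists an admissible path from d to e: a finite sequence d = d⁰, d¹, …, dˡ = e of vectors in ℝ₊² such that each dˢ⁺¹ is obtained from dˢ by one of the operators P₁₂, P₂₁, M₁₂, M₂₁, I₁₂. -/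
/-- One admissible step: for some pair of different indices `i ≠ j`, the vector `w`
is obtained from `v` by the operator `P_{ij}` (add the `j`-th component to the `i`-th),
`M_{ij}` (subtract the `j`-th component from the `i`-th), or `I_{ij}` (swap the `i`-th
and `j`-th components). -/
def AdmStep {k : ℕ} (v w : Fin k → ℝ) : Prop :=
  ∃ i j : Fin k, i ≠ j ∧
    (w = Function.update v i (v i + v j) ∨
     w = Function.update v i (v i - v j) ∨
     w = v ∘ Equiv.swap i j)

/-- An admissible path from `d` to `e`: a finite sequence of vectors with all components
positive, starting at `d`, ending at `e`, each obtained from the previous by an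
admissible step. -/
def AdmPath {k : ℕ} (d e : Fin k → ℝ) : Prop :=
  ∃ (l : ℕ) (f : ℕ → Fin k → ℝ),
    f 0 = d ∧ f l = e ∧
    (∀ s < l, AdmStep (f s) (f (s + 1))) ∧
    (∀ s ≤ l, ∀ i, 0 < f s i)

namespace AdmAux

lemma step_add1 (x y : ℝ) : AdmStep ![x, y] ![x + y, y] := by
  refine ⟨0, 1, by decide, Or.inl ?_⟩
  funext i; fin_cases i <;> simp [Function.update]

lemma step_sub1 (x y : ℝ) : AdmStep ![x, y] ![x - y, y] := by
  refine ⟨0, 1, by decide, Or.inr (Or.inl ?_)⟩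
  funext i; fin_cases i <;> simp [Function.update]

lemma step_add2 (x y : ℝ) : AdmStep ![x, y] ![x, y + x] := by
  refine ⟨1, 0, by decide, Or.inl ?_⟩
  funext i; fin_cases i <;> simp [Function.update]

lemma step_sub2 (x y : ℝ) : AdmStep ![x, y] ![x, y - x] := by
  refine ⟨1, 0, by decide, Or.inr (Or.inl ?_)⟩
  funext i; fin_cases i <;> simp [Function.update]

lemma step_swap (x y : ℝ) : AdmStep ![x, y] ![y, x] := by
  refine ⟨0, 1, by decide, Or.inr (Or.inr ?_)⟩
  funext i; fin_cases i <;> simp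

lemma pos_pair {x y : ℝ} (hx : 0 < x) (hy : 0 < y) : ∀ i, 0 < (![x, y] : Fin 2 → ℝ) i := by
  intro i; fin_cases i <;> simpa

lemma admPath_refl {k : ℕ} (d : Fin k → ℝ) (hd : ∀ i, 0 < d i) : AdmPath d d := by
  exact ⟨0, fun _ => d, rfl, rfl, fun s hs => absurd hs (by omega), fun s _ i => hd i⟩

lemma AdmPath.snoc {k : ℕ} {d e e' : Fin k → ℝ} (h : AdmPath d e) (hs : AdmStep e e')
    (he' : ∀ i, 0 < e' i) : AdmPath d e' := by
  obtain ⟨l, f, h0, hl, hstep, hpos⟩ := h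
  refine ⟨l + 1, fun s => if s ≤ l then f s else e', by simp [h0], by simp, ?_, ?_⟩
  · intro s hs'
    rcases lt_or_ge s l with h' | h'
    · simpa [show s ≤ l by omega, show s + 1 ≤ l by omega] using hstep s h'
    · have hsl : s = l := by omega
      simpa [hsl, show ¬ (l + 1 ≤ l) by omega, hl] using hs
  · intro s hs' i
    rcases le_or_gt s l with h' | h'
    · simpa [h'] using hpos s h' i
    · simpa [show ¬ (s ≤ l) by omega] using he' i

lemma AdmPath.cons {k : ℕ} {d d' e : Fin k → ℝ} (hd : ∀ i, 0 < d i) (hs : AdmStep d d')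
    (h : AdmPath d' e) : AdmPath d e := by
  obtain ⟨l, f, h0, hl, hstep, hpos⟩ := h
  refine ⟨l + 1, fun s => if s = 0 then d else f (s - 1), by simp, by simp [hl], ?_, ?_⟩
  · intro s hs'
    rcases Nat.eq_zero_or_pos s with rfl | h'
    · simpa [h0] using hs
    · have h1 : ¬ (s = 0) := by omega
      have h2 : ¬ (s + 1 = 0) := by omega
      have h3 : s - 1 + 1 = s := by omega
      simp only [h1, h2, if_false]
      have := hstep (s - 1) (by omega)
      rwa [h3] at this
  · intro s hs' i
    rcases Nat.eq_zero_or_pos s with rfl | h'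
    · simpa using hd i
    · have h1 : ¬ (s = 0) := by omega
      simp only [h1, if_false]
      exact hpos (s - 1) (by omega) i




-- arithmetic helpers
lemma coeff_pos {p q : ℤ} {x y : ℝ} (hx : 0 < x) (hy : 0 < y) (hq : q ≤ 0)
    (h : 0 < (p : ℝ) * x + (q : ℝ) * y) : 0 < p := by
  by_contra hp
  push_neg at hp
  have hp' : (p : ℝ) ≤ 0 := by exact_mod_cast hp
  have hq' : (q : ℝ) ≤ 0 := by exact_mod_cast hq
  nlinarith

lemma coeff_pos' {p q : ℤ} {x y : ℝ} (hx : 0 < x) (hy : 0 < y) (hp : p ≤ 0)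
    (h : 0 < (p : ℝ) * x + (q : ℝ) * y) : 0 < q :=
  coeff_pos hy hx hp (by linarith)

lemma gt_combo {p q : ℤ} {x y : ℝ} (hx : 0 < x) (hy : 0 < y) (hp : 0 < p) (hsum : p + q ≤ 0)
    (h : 0 < (p : ℝ) * x + (q : ℝ) * y) : y < x := by
  have h1 : (q : ℝ) ≤ -(p : ℝ) := by exact_mod_cast (show q ≤ -p by omega)
  have hp' : (0 : ℝ) < (p : ℝ) := by exact_mod_cast hp
  nlinarith

lemma lt_combo {p q : ℤ} {x y : ℝ} (hx : 0 < x) (hy : 0 < y) (hq : 0 < q) (hsum : p + q ≤ 0)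
    (h : 0 < (p : ℝ) * x + (q : ℝ) * y) : x < y := by
  have h1 : (p : ℝ) ≤ -(q : ℝ) := by exact_mod_cast (show p ≤ -q by omega)
  have hq' : (0 : ℝ) < (q : ℝ) := by exact_mod_cast hq
  nlinarith

lemma pos_combo {p q : ℤ} {x y : ℝ} (hx : 0 < x) (hy : 0 < y) (hp : 0 ≤ p) (hq : 0 ≤ q)
    (hpq : 0 < p + q) : 0 < (p : ℝ) * x + (q : ℝ) * y := by
  rcases lt_or_ge 0 p with h | h
  · have h1 : (1 : ℝ) ≤ (p : ℝ) := by exact_mod_cast h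
    have h2 : (0 : ℝ) ≤ (q : ℝ) := by exact_mod_cast hq
    nlinarith
  · have hq1 : (1 : ℝ) ≤ (q : ℝ) := by exact_mod_cast (show 1 ≤ q by omega)
    have h2 : (0 : ℝ) ≤ (p : ℝ) := by exact_mod_cast hp
    nlinarith

-- moves
lemma colmove1 {a b c f : ℤ} {d₁ d₂ : ℝ} (h2 : 0 < d₂) (h12 : d₂ < d₁)
    (rec : AdmPath ![d₁ - d₂, d₂]
      ![(a : ℝ) * (d₁ - d₂) + ((a + b : ℤ) : ℝ) * d₂, (c : ℝ) * (d₁ - d₂) + ((c + f : ℤ) : ℝ) * d₂]) :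
    AdmPath ![d₁, d₂] ![(a : ℝ) * d₁ + (b : ℝ) * d₂, (c : ℝ) * d₁ + (f : ℝ) * d₂] := by
  have e1 : (a : ℝ) * (d₁ - d₂) + ((a + b : ℤ) : ℝ) * d₂ = (a : ℝ) * d₁ + (b : ℝ) * d₂ := by
    push_cast; ring
  have e2 : (c : ℝ) * (d₁ - d₂) + ((c + f : ℤ) : ℝ) * d₂ = (c : ℝ) * d₁ + (f : ℝ) * d₂ := by
    push_cast; ring
  rw [e1, e2] at rec
  exact AdmPath.cons (pos_pair (by linarith) h2) (step_sub1 d₁ d₂) rec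

lemma colmove2 {a b c f : ℤ} {d₁ d₂ : ℝ} (h1 : 0 < d₁) (h12 : d₁ < d₂)
    (rec : AdmPath ![d₁, d₂ - d₁]
      ![((a + b : ℤ) : ℝ) * d₁ + (b : ℝ) * (d₂ - d₁), ((c + f : ℤ) : ℝ) * d₁ + (f : ℝ) * (d₂ - d₁)]) :
    AdmPath ![d₁, d₂] ![(a : ℝ) * d₁ + (b : ℝ) * d₂, (c : ℝ) * d₁ + (f : ℝ) * d₂] := by
  have e1 : ((a + b : ℤ) : ℝ) * d₁ + (b : ℝ) * (d₂ - d₁) = (a : ℝ) * d₁ + (b : ℝ) * d₂ := by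
    push_cast; ring
  have e2 : ((c + f : ℤ) : ℝ) * d₁ + (f : ℝ) * (d₂ - d₁) = (c : ℝ) * d₁ + (f : ℝ) * d₂ := by
    push_cast; ring
  rw [e1, e2] at rec
  exact AdmPath.cons (pos_pair h1 (by linarith)) (step_sub2 d₁ d₂) rec

lemma rowmove1 {a b c f : ℤ} {d₁ d₂ : ℝ}
    (he1 : 0 < (a : ℝ) * d₁ + (b : ℝ) * d₂) (he2 : 0 < (c : ℝ) * d₁ + (f : ℝ) * d₂)
    (rec : AdmPath ![d₁, d₂]
      ![((a + c : ℤ) : ℝ) * d₁ + ((b + f : ℤ) : ℝ) * d₂, (c : ℝ) * d₁ + (f : ℝ) * d₂]) :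
    AdmPath ![d₁, d₂] ![(a : ℝ) * d₁ + (b : ℝ) * d₂, (c : ℝ) * d₁ + (f : ℝ) * d₂] := by
  have h := AdmPath.snoc rec
    (step_sub1 (((a + c : ℤ) : ℝ) * d₁ + ((b + f : ℤ) : ℝ) * d₂) ((c : ℝ) * d₁ + (f : ℝ) * d₂))
    (pos_pair (by push_cast; push_cast at he1; linarith) he2)
  have e1 : (((a + c : ℤ) : ℝ) * d₁ + ((b + f : ℤ) : ℝ) * d₂) - ((c : ℝ) * d₁ + (f : ℝ) * d₂)
      = (a : ℝ) * d₁ + (b : ℝ) * d₂ := by push_cast; ring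
  rwa [e1] at h

lemma rowmove2 {a b c f : ℤ} {d₁ d₂ : ℝ}
    (he1 : 0 < (a : ℝ) * d₁ + (b : ℝ) * d₂) (he2 : 0 < (c : ℝ) * d₁ + (f : ℝ) * d₂)
    (rec : AdmPath ![d₁, d₂]
      ![(a : ℝ) * d₁ + (b : ℝ) * d₂, ((a + c : ℤ) : ℝ) * d₁ + ((b + f : ℤ) : ℝ) * d₂]) :
    AdmPath ![d₁, d₂] ![(a : ℝ) * d₁ + (b : ℝ) * d₂, (c : ℝ) * d₁ + (f : ℝ) * d₂] := by
  have h := AdmPath.snoc rec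
    (step_sub2 ((a : ℝ) * d₁ + (b : ℝ) * d₂) (((a + c : ℤ) : ℝ) * d₁ + ((b + f : ℤ) : ℝ) * d₂))
    (pos_pair he1 (by push_cast; push_cast at he2; linarith))
  have e2 : (((a + c : ℤ) : ℝ) * d₁ + ((b + f : ℤ) : ℝ) * d₂) - ((a : ℝ) * d₁ + (b : ℝ) * d₂)
      = (c : ℝ) * d₁ + (f : ℝ) * d₂ := by push_cast; ring
  rwa [e2] at h

lemma rowmoveP1 {a b c f : ℤ} {d₁ d₂ : ℝ}
    (rec : AdmPath ![d₁, d₂]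
      ![((a - c : ℤ) : ℝ) * d₁ + ((b - f : ℤ) : ℝ) * d₂, (c : ℝ) * d₁ + (f : ℝ) * d₂])
    (hx : 0 < ((a - c : ℤ) : ℝ) * d₁ + ((b - f : ℤ) : ℝ) * d₂)
    (he2 : 0 < (c : ℝ) * d₁ + (f : ℝ) * d₂) :
    AdmPath ![d₁, d₂] ![(a : ℝ) * d₁ + (b : ℝ) * d₂, (c : ℝ) * d₁ + (f : ℝ) * d₂] := by
  have h := AdmPath.snoc rec
    (step_add1 (((a - c : ℤ) : ℝ) * d₁ + ((b - f : ℤ) : ℝ) * d₂) ((c : ℝ) * d₁ + (f : ℝ) * d₂))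
    (pos_pair (by push_cast; push_cast at hx he2; linarith) he2)
  have e1 : (((a - c : ℤ) : ℝ) * d₁ + ((b - f : ℤ) : ℝ) * d₂) + ((c : ℝ) * d₁ + (f : ℝ) * d₂)
      = (a : ℝ) * d₁ + (b : ℝ) * d₂ := by push_cast; ring
  rwa [e1] at h

lemma rowmoveP2 {a b c f : ℤ} {d₁ d₂ : ℝ}
    (rec : AdmPath ![d₁, d₂]
      ![(a : ℝ) * d₁ + (b : ℝ) * d₂, ((c - a : ℤ) : ℝ) * d₁ + ((f - b : ℤ) : ℝ) * d₂])
    (hx : 0 < ((c - a : ℤ) : ℝ) * d₁ + ((f - b : ℤ) : ℝ) * d₂)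
    (he1 : 0 < (a : ℝ) * d₁ + (b : ℝ) * d₂) :
    AdmPath ![d₁, d₂] ![(a : ℝ) * d₁ + (b : ℝ) * d₂, (c : ℝ) * d₁ + (f : ℝ) * d₂] := by
  have h := AdmPath.snoc rec
    (step_add2 ((a : ℝ) * d₁ + (b : ℝ) * d₂) (((c - a : ℤ) : ℝ) * d₁ + ((f - b : ℤ) : ℝ) * d₂))
    (pos_pair he1 (by push_cast; push_cast at hx he1; linarith))
  have e2 : (((c - a : ℤ) : ℝ) * d₁ + ((f - b : ℤ) : ℝ) * d₂) + ((a : ℝ) * d₁ + (b : ℝ) * d₂)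
      = (c : ℝ) * d₁ + (f : ℝ) * d₂ := by push_cast; ring
  rwa [e2] at h


lemma cast_mul_pos {u : ℤ} {t : ℝ} (hu : 0 < u) (ht : 0 < t) : 0 < (u : ℝ) * t :=
  mul_pos (by exact_mod_cast hu) ht

lemma euclid (K : ℕ) : ∀ (u w : ℤ) (t : ℝ), 0 < t → 0 < u → 0 < w → IsCoprime u w →
    u.toNat + w.toNat ≤ K → AdmPath ![t, t] ![(u : ℝ) * t, (w : ℝ) * t] := by
  induction K using Nat.strong_induction_on with
  | _ K ih =>
    intro u w t ht hu hw hco hK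
    rcases lt_trichotomy u w with h | h | h
    · -- u < w : recurse with (u, w - u), then P₂₁ step
      obtain ⟨x, y, hxy⟩ := hco
      have hco' : IsCoprime u (w - u) := ⟨x + y, y, by ring_nf; linear_combination hxy⟩
      have hrec := ih (u.toNat + (w - u).toNat) (by omega) u (w - u) t ht hu (by omega) hco' le_rfl
      have hpath := AdmPath.snoc hrec (step_add2 ((u : ℝ) * t) (((w - u : ℤ) : ℝ) * t))
        (pos_pair (cast_mul_pos hu ht) (by have h1 := cast_mul_pos hu ht; have h2 := cast_mul_pos (show (0:ℤ) < w - u by omega) ht; linarith))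
      have e2 : ((w - u : ℤ) : ℝ) * t + (u : ℝ) * t = (w : ℝ) * t := by push_cast; ring
      rwa [e2] at hpath
    · -- u = w forces u = 1
      obtain ⟨x, y, hxy⟩ := hco
      have hdvd : u ∣ 1 := ⟨x + y, by rw [← h] at hxy; linear_combination - hxy⟩
      have hu1 : u = 1 := by
        rcases Int.isUnit_iff.mp (isUnit_of_dvd_one hdvd) with h1 | h1 <;> omega
      have hw1 : w = 1 := by omega
      subst hu1; subst hw1
      have h1t : ((1 : ℤ) : ℝ) * t = t := by norm_num
      rw [h1t]
      exact admPath_refl _ (pos_pair ht ht)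
    · obtain ⟨x, y, hxy⟩ := hco
      have hco' : IsCoprime (u - w) w := ⟨x, x + y, by ring_nf; linear_combination hxy⟩
      have hrec := ih ((u - w).toNat + w.toNat) (by omega) (u - w) w t ht (by omega) hw hco' le_rfl
      have hpath := AdmPath.snoc hrec (step_add1 (((u - w : ℤ) : ℝ) * t) ((w : ℝ) * t))
        (pos_pair (by have h1 := cast_mul_pos hw ht; have h2 := cast_mul_pos (show (0:ℤ) < u - w by omega) ht; linarith) (cast_mul_pos hw ht))
      have e1 : ((u - w : ℤ) : ℝ) * t + (w : ℝ) * t = (u : ℝ) * t := by push_cast; ring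
      rwa [e1] at hpath


lemma row_contra {p q : ℤ} {x y : ℝ} (hx : 0 < x) (hy : 0 < y) (hp : p < 0) (hq : q < 0) :
    ¬ (0 < (p : ℝ) * x + (q : ℝ) * y) := by
  intro h
  have hp' : (p : ℝ) ≤ -1 := by exact_mod_cast (show p ≤ -1 by omega)
  have hq' : (q : ℝ) ≤ -1 := by exact_mod_cast (show q ≤ -1 by omega)
  nlinarith

lemma he_col1 {p q : ℤ} {d₁ d₂ : ℝ} (h : 0 < (p : ℝ) * d₁ + (q : ℝ) * d₂) :
    0 < (p : ℝ) * (d₁ - d₂) + ((p + q : ℤ) : ℝ) * d₂ := by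
  have e : (p : ℝ) * (d₁ - d₂) + ((p + q : ℤ) : ℝ) * d₂ = (p : ℝ) * d₁ + (q : ℝ) * d₂ := by
    push_cast; ring
  rw [e]; exact h

lemma he_col2 {p q : ℤ} {d₁ d₂ : ℝ} (h : 0 < (p : ℝ) * d₁ + (q : ℝ) * d₂) :
    0 < ((p + q : ℤ) : ℝ) * d₁ + (q : ℝ) * (d₂ - d₁) := by
  have e : ((p + q : ℤ) : ℝ) * d₁ + (q : ℝ) * (d₂ - d₁) = (p : ℝ) * d₁ + (q : ℝ) * d₂ := by
    push_cast; ring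
  rw [e]; exact h

lemma he_row_add {p q r s : ℤ} {d₁ d₂ : ℝ} (hx : 0 < (p : ℝ) * d₁ + (q : ℝ) * d₂)
    (hy : 0 < (r : ℝ) * d₁ + (s : ℝ) * d₂) :
    0 < ((p + r : ℤ) : ℝ) * d₁ + ((q + s : ℤ) : ℝ) * d₂ := by
  have e : ((p + r : ℤ) : ℝ) * d₁ + ((q + s : ℤ) : ℝ) * d₂
      = ((p : ℝ) * d₁ + (q : ℝ) * d₂) + ((r : ℝ) * d₁ + (s : ℝ) * d₂) := by push_cast; ring
  rw [e]; linarith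

lemma det_keep {a b c f a' b' c' f' : ℤ} (h : a * f - b * c = 1 ∨ a * f - b * c = -1)
    (e : a' * f' - b' * c' = a * f - b * c) : a' * f' - b' * c' = 1 ∨ a' * f' - b' * c' = -1 := by
  rw [e]; exact h

set_option maxHeartbeats 1000000 in
lemma engine (N : ℕ) : ∀ (M : ℕ) (a b c f : ℤ) (d₁ d₂ : ℝ),
    0 < d₁ → 0 < d₂ →
    0 < (a : ℝ) * d₁ + (b : ℝ) * d₂ → 0 < (c : ℝ) * d₁ + (f : ℝ) * d₂ →
    (a * f - b * c = 1 ∨ a * f - b * c = -1) →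
    (-a).toNat + (-b).toNat + (-c).toNat + (-f).toNat = N →
    a.natAbs + b.natAbs + c.natAbs + f.natAbs ≤ M →
    AdmPath ![d₁, d₂] ![(a : ℝ) * d₁ + (b : ℝ) * d₂, (c : ℝ) * d₁ + (f : ℝ) * d₂] := by
  induction N using Nat.strong_induction_on with
  | _ N ihN =>
  intro M
  induction M using Nat.strong_induction_on with
  | _ M ihM =>
  intro a b c f d₁ d₂ h1 h2 he1 he2 hdet hN hM
  by_cases hdd : d₁ = d₂
  · -- equal components : Euclid on integer vector (a+b, c+f)
    subst hdd
    have hu : 0 < a + b := by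
      by_contra h
      push_neg at h
      have h' : ((a + b : ℤ) : ℝ) ≤ 0 := by exact_mod_cast h
      push_cast at h'
      nlinarith
    have hw : 0 < c + f := by
      by_contra h
      push_neg at h
      have h' : ((c + f : ℤ) : ℝ) ≤ 0 := by exact_mod_cast h
      push_cast at h'
      nlinarith
    have hco : IsCoprime (a + b) (c + f) := by
      rcases hdet with h | h
      · exact ⟨f, -b, by linear_combination h⟩
      · exact ⟨-f, b, by linear_combination -h⟩
    have hp := euclid ((a + b).toNat + (c + f).toNat) (a + b) (c + f) d₁ h1 hu hw hco le_rfl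
    have e1 : ((a + b : ℤ) : ℝ) * d₁ = (a : ℝ) * d₁ + (b : ℝ) * d₁ := by push_cast; ring
    have e2 : ((c + f : ℤ) : ℝ) * d₁ = (c : ℝ) * d₁ + (f : ℝ) * d₁ := by push_cast; ring
    rwa [e1, e2] at hp
  · rcases lt_or_ge a 0 with ha | ha
    · rcases lt_or_ge b 0 with hb | hb
      · exact absurd he1 (row_contra h1 h2 ha hb)
      · have hb1 : 0 < b := coeff_pos' h1 h2 (by omega) he1
        rcases lt_or_ge c 0 with hc | hc
        · rcases lt_or_ge f 0 with hf | hf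
          · exact absurd he2 (row_contra h1 h2 hc hf)
          · -- CASE 6 : a<0, c<0, b≥1, f≥1
            have hf1 : 0 < f := coeff_pos' h1 h2 (by omega) he2
            rcases le_or_gt (a + b) 0 with hab | hab
            · have h12 : d₁ < d₂ := lt_combo h1 h2 hb1 hab he1
              exact colmove2 h1 h12 (ihN ((-(a+b)).toNat + (-b).toNat + (-(c+f)).toNat + (-f).toNat)
                (by omega) ((a+b).natAbs + b.natAbs + (c+f).natAbs + f.natAbs)
                (a+b) b (c+f) f d₁ (d₂ - d₁) h1 (by linarith)
                (he_col2 he1) (he_col2 he2) (det_keep hdet (by ring)) rfl le_rfl)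
            · rcases le_or_gt (c + f) 0 with hcf | hcf
              · have h12 : d₁ < d₂ := lt_combo h1 h2 hf1 hcf he2
                exact colmove2 h1 h12 (ihN ((-(a+b)).toNat + (-b).toNat + (-(c+f)).toNat + (-f).toNat)
                  (by omega) ((a+b).natAbs + b.natAbs + (c+f).natAbs + f.natAbs)
                  (a+b) b (c+f) f d₁ (d₂ - d₁) h1 (by linarith)
                  (he_col2 he1) (he_col2 he2) (det_keep hdet (by ring)) rfl le_rfl)
              · rcases lt_or_gt_of_ne hdd with h12 | h12
                · exact colmove2 h1 h12 (ihN
                    ((-(a+b)).toNat + (-b).toNat + (-(c+f)).toNat + (-f).toNat)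
                    (by omega) ((a+b).natAbs + b.natAbs + (c+f).natAbs + f.natAbs)
                    (a+b) b (c+f) f d₁ (d₂ - d₁) h1 (by linarith)
                    (he_col2 he1) (he_col2 he2) (det_keep hdet (by ring)) rfl le_rfl)
                · exact colmove1 h2 h12 (ihM
                    (a.natAbs + (a+b).natAbs + c.natAbs + (c+f).natAbs) (by omega)
                    a (a+b) c (c+f) (d₁ - d₂) d₂ (by linarith) h2
                    (he_col1 he1) (he_col1 he2) (det_keep hdet (by ring)) (by omega) le_rfl)
        · rcases lt_or_ge f 0 with hf | hf
          · -- CASE 8 : a<0, f<0, b≥1, c≥1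
            have hc1 : 0 < c := coeff_pos h1 h2 (by omega) he2
            rcases le_or_gt (a + c) 0 with hac | hac
            · have hbf : 0 < b + f := by
                by_contra hbf
                push_neg at hbf
                have h1' : ((a + c : ℤ) : ℝ) ≤ 0 := by exact_mod_cast hac
                have h2' : ((b + f : ℤ) : ℝ) ≤ 0 := by exact_mod_cast hbf
                push_cast at h1' h2'
                nlinarith
              exact rowmove1 he1 he2 (ihN
                ((-(a+c)).toNat + (-(b+f)).toNat + (-c).toNat + (-f).toNat) (by omega)
                ((a+c).natAbs + (b+f).natAbs + c.natAbs + f.natAbs)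
                (a+c) (b+f) c f d₁ d₂ h1 h2 (he_row_add he1 he2) he2
                (det_keep hdet (by ring)) rfl le_rfl)
            · exact rowmove2 he1 he2 (ihN
                ((-a).toNat + (-b).toNat + (-(a+c)).toNat + (-(b+f)).toNat) (by omega)
                (a.natAbs + b.natAbs + (a+c).natAbs + (b+f).natAbs)
                a b (a+c) (b+f) d₁ d₂ h1 h2 he1 (he_row_add he1 he2)
                (det_keep hdet (by ring)) rfl le_rfl)
          · -- CASE 2 : a<0 only
            rcases le_or_gt c 0 with hc0 | hc0
            · have hc0' : c = 0 := by omega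
              have haf : (-a) * f = 1 := by
                rcases hdet with h | h
                · rw [hc0'] at h
                  exfalso
                  nlinarith [mul_nonneg (show (0:ℤ) ≤ -a by omega) hf]
                · rw [hc0'] at h
                  linear_combination -h
              have ha1 : a = -1 := by
                rcases Int.isUnit_iff.mp (isUnit_of_dvd_one ⟨f, haf.symm⟩) with h | h <;> omega
              have hf1' : f = 1 := by rw [ha1] at haf; omega
              rcases lt_or_gt_of_ne hdd with h12 | h12
              · exact colmove2 h1 h12 (ihN
                  ((-(a+b)).toNat + (-b).toNat + (-(c+f)).toNat + (-f).toNat) (by omega)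
                  ((a+b).natAbs + b.natAbs + (c+f).natAbs + f.natAbs)
                  (a+b) b (c+f) f d₁ (d₂ - d₁) h1 (by linarith)
                  (he_col2 he1) (he_col2 he2) (det_keep hdet (by ring)) rfl le_rfl)
              · exact colmove1 h2 h12 (ihM
                  (a.natAbs + (a+b).natAbs + c.natAbs + (c+f).natAbs) (by omega)
                  a (a+b) c (c+f) (d₁ - d₂) d₂ (by linarith) h2
                  (he_col1 he1) (he_col1 he2) (det_keep hdet (by ring)) (by omega) le_rfl)
            · exact rowmove1 he1 he2 (ihN
                ((-(a+c)).toNat + (-(b+f)).toNat + (-c).toNat + (-f).toNat) (by omega)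
                ((a+c).natAbs + (b+f).natAbs + c.natAbs + f.natAbs)
                (a+c) (b+f) c f d₁ d₂ h1 h2 (he_row_add he1 he2) he2
                (det_keep hdet (by ring)) rfl le_rfl)
    · rcases lt_or_ge b 0 with hb | hb
      · have ha1 : 0 < a := coeff_pos h1 h2 (by omega) he1
        rcases lt_or_ge c 0 with hc | hc
        · rcases lt_or_ge f 0 with hf | hf
          · exact absurd he2 (row_contra h1 h2 hc hf)
          · -- CASE 7 : b<0, c<0, a≥1, f≥1
            have hf1 : 0 < f := coeff_pos' h1 h2 (by omega) he2
            rcases le_or_gt (a + c) 0 with hac | hac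
            · have hbf : 0 < b + f := by
                by_contra hbf
                push_neg at hbf
                have h1' : ((a + c : ℤ) : ℝ) ≤ 0 := by exact_mod_cast hac
                have h2' : ((b + f : ℤ) : ℝ) ≤ 0 := by exact_mod_cast hbf
                push_cast at h1' h2'
                nlinarith
              exact rowmove2 he1 he2 (ihN
                ((-a).toNat + (-b).toNat + (-(a+c)).toNat + (-(b+f)).toNat) (by omega)
                (a.natAbs + b.natAbs + (a+c).natAbs + (b+f).natAbs)
                a b (a+c) (b+f) d₁ d₂ h1 h2 he1 (he_row_add he1 he2)
                (det_keep hdet (by ring)) rfl le_rfl)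
            · exact rowmove1 he1 he2 (ihN
                ((-(a+c)).toNat + (-(b+f)).toNat + (-c).toNat + (-f).toNat) (by omega)
                ((a+c).natAbs + (b+f).natAbs + c.natAbs + f.natAbs)
                (a+c) (b+f) c f d₁ d₂ h1 h2 (he_row_add he1 he2) he2
                (det_keep hdet (by ring)) rfl le_rfl)
        · rcases lt_or_ge f 0 with hf | hf
          · -- CASE 5 : b<0, f<0, a≥1, c≥1
            have hc1 : 0 < c := coeff_pos h1 h2 (by omega) he2
            rcases le_or_gt (a + b) 0 with hab | hab
            · have h12 : d₂ < d₁ := gt_combo h1 h2 ha1 hab he1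
              exact colmove1 h2 h12 (ihN
                ((-a).toNat + (-(a+b)).toNat + (-c).toNat + (-(c+f)).toNat) (by omega)
                (a.natAbs + (a+b).natAbs + c.natAbs + (c+f).natAbs)
                a (a+b) c (c+f) (d₁ - d₂) d₂ (by linarith) h2
                (he_col1 he1) (he_col1 he2) (det_keep hdet (by ring)) rfl le_rfl)
            · rcases le_or_gt (c + f) 0 with hcf | hcf
              · have h12 : d₂ < d₁ := gt_combo h1 h2 hc1 hcf he2
                exact colmove1 h2 h12 (ihN
                  ((-a).toNat + (-(a+b)).toNat + (-c).toNat + (-(c+f)).toNat) (by omega)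
                  (a.natAbs + (a+b).natAbs + c.natAbs + (c+f).natAbs)
                  a (a+b) c (c+f) (d₁ - d₂) d₂ (by linarith) h2
                  (he_col1 he1) (he_col1 he2) (det_keep hdet (by ring)) rfl le_rfl)
              · rcases lt_or_gt_of_ne hdd with h12 | h12
                · exact colmove2 h1 h12 (ihM
                    ((a+b).natAbs + b.natAbs + (c+f).natAbs + f.natAbs) (by omega)
                    (a+b) b (c+f) f d₁ (d₂ - d₁) h1 (by linarith)
                    (he_col2 he1) (he_col2 he2) (det_keep hdet (by ring)) (by omega) le_rfl)
                · exact colmove1 h2 h12 (ihN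
                    ((-a).toNat + (-(a+b)).toNat + (-c).toNat + (-(c+f)).toNat) (by omega)
                    (a.natAbs + (a+b).natAbs + c.natAbs + (c+f).natAbs)
                    a (a+b) c (c+f) (d₁ - d₂) d₂ (by linarith) h2
                    (he_col1 he1) (he_col1 he2) (det_keep hdet (by ring)) rfl le_rfl)
          · -- CASE 1 : b<0 only, a≥1
            rcases le_or_gt f 0 with hf0 | hf0
            · have hf0' : f = 0 := by omega
              have hc1 : 0 < c := coeff_pos h1 h2 (by omega) he2
              have hbc : (-b) * c = 1 := by
                rcases hdet with h | h
                · rw [hf0'] at h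
                  linear_combination h
                · rw [hf0'] at h
                  exfalso
                  nlinarith [mul_pos (show (0:ℤ) < -b by omega) hc1]
              have hb1' : b = -1 := by
                rcases Int.isUnit_iff.mp (isUnit_of_dvd_one ⟨c, hbc.symm⟩) with h | h <;> omega
              have hc1' : c = 1 := by rw [hb1'] at hbc; omega
              rcases lt_or_gt_of_ne hdd with h12 | h12
              · exact colmove2 h1 h12 (ihM
                  ((a+b).natAbs + b.natAbs + (c+f).natAbs + f.natAbs) (by omega)
                  (a+b) b (c+f) f d₁ (d₂ - d₁) h1 (by linarith)
                  (he_col2 he1) (he_col2 he2) (det_keep hdet (by ring)) (by omega) le_rfl)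
              · exact colmove1 h2 h12 (ihN
                  ((-a).toNat + (-(a+b)).toNat + (-c).toNat + (-(c+f)).toNat) (by omega)
                  (a.natAbs + (a+b).natAbs + c.natAbs + (c+f).natAbs)
                  a (a+b) c (c+f) (d₁ - d₂) d₂ (by linarith) h2
                  (he_col1 he1) (he_col1 he2) (det_keep hdet (by ring)) rfl le_rfl)
            · exact rowmove1 he1 he2 (ihN
                ((-(a+c)).toNat + (-(b+f)).toNat + (-c).toNat + (-f).toNat) (by omega)
                ((a+c).natAbs + (b+f).natAbs + c.natAbs + f.natAbs)
                (a+c) (b+f) c f d₁ d₂ h1 h2 (he_row_add he1 he2) he2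
                (det_keep hdet (by ring)) rfl le_rfl)
      · rcases lt_or_ge c 0 with hc | hc
        · rcases lt_or_ge f 0 with hf | hf
          · exact absurd he2 (row_contra h1 h2 hc hf)
          · -- CASE 3 : c<0 only
            have hf1 : 0 < f := coeff_pos' h1 h2 (by omega) he2
            rcases le_or_gt a 0 with ha0 | ha0
            · have ha0' : a = 0 := by omega
              have hb1 : 0 < b := coeff_pos' h1 h2 (by omega) he1
              have hbc : b * (-c) = 1 := by
                rcases hdet with h | h
                · rw [ha0'] at h
                  linear_combination h
                · rw [ha0'] at h
                  exfalso
                  nlinarith [mul_pos hb1 (show (0:ℤ) < -c by omega)]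
              have hb1' : b = 1 := by
                rcases Int.isUnit_iff.mp (isUnit_of_dvd_one ⟨-c, hbc.symm⟩) with h | h <;> omega
              have hc1' : c = -1 := by rw [hb1'] at hbc; omega
              rcases lt_or_gt_of_ne hdd with h12 | h12
              · exact colmove2 h1 h12 (ihN
                  ((-(a+b)).toNat + (-b).toNat + (-(c+f)).toNat + (-f).toNat) (by omega)
                  ((a+b).natAbs + b.natAbs + (c+f).natAbs + f.natAbs)
                  (a+b) b (c+f) f d₁ (d₂ - d₁) h1 (by linarith)
                  (he_col2 he1) (he_col2 he2) (det_keep hdet (by ring)) rfl le_rfl)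
              · exact colmove1 h2 h12 (ihM
                  (a.natAbs + (a+b).natAbs + c.natAbs + (c+f).natAbs) (by omega)
                  a (a+b) c (c+f) (d₁ - d₂) d₂ (by linarith) h2
                  (he_col1 he1) (he_col1 he2) (det_keep hdet (by ring)) (by omega) le_rfl)
            · exact rowmove2 he1 he2 (ihN
                ((-a).toNat + (-b).toNat + (-(a+c)).toNat + (-(b+f)).toNat) (by omega)
                (a.natAbs + b.natAbs + (a+c).natAbs + (b+f).natAbs)
                a b (a+c) (b+f) d₁ d₂ h1 h2 he1 (he_row_add he1 he2)
                (det_keep hdet (by ring)) rfl le_rfl)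
        · rcases lt_or_ge f 0 with hf | hf
          · -- CASE 4 : f<0 only
            have hc1 : 0 < c := coeff_pos h1 h2 (by omega) he2
            rcases le_or_gt b 0 with hb0 | hb0
            · have hb0' : b = 0 := by omega
              have ha1 : 0 < a := coeff_pos h1 h2 (by omega) he1
              have haf : a * (-f) = 1 := by
                rcases hdet with h | h
                · rw [hb0'] at h
                  exfalso
                  nlinarith [mul_pos ha1 (show (0:ℤ) < -f by omega)]
                · rw [hb0'] at h
                  linear_combination -h
              have ha1' : a = 1 := by
                rcases Int.isUnit_iff.mp (isUnit_of_dvd_one ⟨-f, haf.symm⟩) with h | h <;> omega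
              have hf1' : f = -1 := by rw [ha1'] at haf; omega
              rcases lt_or_gt_of_ne hdd with h12 | h12
              · exact colmove2 h1 h12 (ihM
                  ((a+b).natAbs + b.natAbs + (c+f).natAbs + f.natAbs) (by omega)
                  (a+b) b (c+f) f d₁ (d₂ - d₁) h1 (by linarith)
                  (he_col2 he1) (he_col2 he2) (det_keep hdet (by ring)) (by omega) le_rfl)
              · exact colmove1 h2 h12 (ihN
                  ((-a).toNat + (-(a+b)).toNat + (-c).toNat + (-(c+f)).toNat) (by omega)
                  (a.natAbs + (a+b).natAbs + c.natAbs + (c+f).natAbs)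
                  a (a+b) c (c+f) (d₁ - d₂) d₂ (by linarith) h2
                  (he_col1 he1) (he_col1 he2) (det_keep hdet (by ring)) rfl le_rfl)
            · exact rowmove2 he1 he2 (ihN
                ((-a).toNat + (-b).toNat + (-(a+c)).toNat + (-(b+f)).toNat) (by omega)
                (a.natAbs + b.natAbs + (a+c).natAbs + (b+f).natAbs)
                a b (a+c) (b+f) d₁ d₂ h1 h2 he1 (he_row_add he1 he2)
                (det_keep hdet (by ring)) rfl le_rfl)
          · -- NONNEGATIVE CASE
            rcases le_or_gt c a with hca | hca
            · rcases le_or_gt f b with hfb | hfb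
              · -- row1 dominates row2
                have hne : ¬ (a = c ∧ b = f) := by
                  rintro ⟨rfl, rfl⟩
                  rcases hdet with h | h <;> nlinarith
                have hcf : ¬ (c = 0 ∧ f = 0) := by
                  rintro ⟨rfl, rfl⟩
                  rcases hdet with h | h <;> simp at h
                refine rowmoveP1 (ihM
                  ((a-c).natAbs + (b-f).natAbs + c.natAbs + f.natAbs) (by omega)
                  (a-c) (b-f) c f d₁ d₂ h1 h2
                  (pos_combo h1 h2 (by omega) (by omega) (by omega)) he2
                  (det_keep hdet (by ring)) (by omega) le_rfl) ?_ he2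
                exact pos_combo h1 h2 (by omega) (by omega) (by omega)
              · by_cases hac : a = c
                · -- row2 dominates row1
                  have hab : ¬ (a = 0 ∧ b = 0) := by
                    rintro ⟨rfl, rfl⟩
                    rcases hdet with h | h <;> simp at h
                  refine rowmoveP2 (ihM
                    (a.natAbs + b.natAbs + (c-a).natAbs + (f-b).natAbs) (by omega)
                    a b (c-a) (f-b) d₁ d₂ h1 h2 he1
                    (pos_combo h1 h2 (by omega) (by omega) (by omega))
                    (det_keep hdet (by ring)) (by omega) le_rfl) ?_ he1
                  exact pos_combo h1 h2 (by omega) (by omega) (by omega)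
                · -- c < a and b < f : identity matrix
                  have key : (c+1)*(b+1) ≤ a*f :=
                    mul_le_mul (show c+1 ≤ a by omega) (show b+1 ≤ f by omega)
                      (show (0:ℤ) ≤ b+1 by omega) (show (0:ℤ) ≤ a by omega)
                  have hsum : b + c ≤ 0 := by
                    rcases hdet with h | h
                    · nlinarith [key]
                    · nlinarith [key]
                  have hb0 : b = 0 := by omega
                  have hc0 : c = 0 := by omega
                  subst hb0; subst hc0
                  have haf : a * f = 1 := by
                    rcases hdet with h | h
                    · linear_combination h
                    · exfalso
                      nlinarith [mul_pos (show (0:ℤ) < a by omega) (show (0:ℤ) < f by omega)]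
                  have ha1' : a = 1 := by
                    rcases Int.isUnit_iff.mp (isUnit_of_dvd_one ⟨f, haf.symm⟩) with h | h <;> omega
                  have hf1' : f = 1 := by rw [ha1'] at haf; omega
                  subst ha1'; subst hf1'
                  have e1 : ((1:ℤ):ℝ) * d₁ + ((0:ℤ):ℝ) * d₂ = d₁ := by norm_num
                  have e2 : ((0:ℤ):ℝ) * d₁ + ((1:ℤ):ℝ) * d₂ = d₂ := by norm_num
                  rw [e1, e2]
                  exact admPath_refl _ (pos_pair h1 h2)
            · rcases le_or_gt b f with hbf | hbf
              · -- row2 dominates row1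
                have hab : ¬ (a = 0 ∧ b = 0) := by
                  rintro ⟨rfl, rfl⟩
                  rcases hdet with h | h <;> simp at h
                have hne : ¬ (c = a ∧ f = b) := by
                  rintro ⟨h', h''⟩
                  rcases hdet with h | h <;> rw [h', h''] at h <;> nlinarith
                refine rowmoveP2 (ihM
                  (a.natAbs + b.natAbs + (c-a).natAbs + (f-b).natAbs) (by omega)
                  a b (c-a) (f-b) d₁ d₂ h1 h2 he1
                  (pos_combo h1 h2 (by omega) (by omega) (by omega))
                  (det_keep hdet (by ring)) (by omega) le_rfl) ?_ he1
                exact pos_combo h1 h2 (by omega) (by omega) (by omega)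
              · -- a < c and f < b : swap matrix
                have key : (a+1)*(f+1) ≤ c*b :=
                  mul_le_mul (show a+1 ≤ c by omega) (show f+1 ≤ b by omega)
                    (show (0:ℤ) ≤ f+1 by omega) (show (0:ℤ) ≤ c by omega)
                have hsum : a + f ≤ 0 := by
                  rcases hdet with h | h
                  · nlinarith [key]
                  · nlinarith [key]
                have ha0 : a = 0 := by omega
                have hf0 : f = 0 := by omega
                subst ha0; subst hf0
                have hbc : b * c = 1 := by
                  rcases hdet with h | h
                  · exfalso
                    nlinarith [mul_pos (show (0:ℤ) < b by omega) (show (0:ℤ) < c by omega)]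
                  · linear_combination -h
                have hb1' : b = 1 := by
                  rcases Int.isUnit_iff.mp (isUnit_of_dvd_one ⟨c, hbc.symm⟩) with h | h <;> omega
                have hc1' : c = 1 := by rw [hb1'] at hbc; omega
                subst hb1'; subst hc1'
                have e1 : ((0:ℤ):ℝ) * d₁ + ((1:ℤ):ℝ) * d₂ = d₂ := by norm_num
                have e2 : ((1:ℤ):ℝ) * d₁ + ((0:ℤ):ℝ) * d₂ = d₁ := by norm_num
                rw [e1, e2]
                exact AdmPath.snoc (admPath_refl _ (pos_pair h1 h2)) (step_swap d₁ d₂)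
                  (pos_pair h2 h1)

end AdmAux


open AdmAux

/-- **Lemma B.4 of Chekanov–Schlenk.** Given `d, e ∈ ℝ₊²` generating the same additive
subgroup of `ℝ` and `A ∈ GL(2,ℤ)` with `A d = e`, there is an admissible path from
`d` to `e` (in dimension 2 the admissible operators are exactly
`P₁₂, P₂₁, M₁₂, M₂₁, I₁₂`). -/
theorem admPath_of_glZ
    (d e : Fin 2 → ℝ) (hd : ∀ i, 0 < d i) (he : ∀ i, 0 < e i)
    (hgen : AddSubgroup.closure (Set.range d) = AddSubgroup.closure (Set.range e))
    (A : Matrix (Fin 2) (Fin 2) ℤ) (hA : IsUnit A.det)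
    (hAd : (A.map (Int.cast : ℤ → ℝ)).mulVec d = e) :
    AdmPath d e := by
  have h00 := congrFun hAd 0
  have h10 := congrFun hAd 1
  simp [Matrix.mulVec, dotProduct, Fin.sum_univ_two, Matrix.map_apply] at h00 h10
  have hdet : A 0 0 * A 1 1 - A 0 1 * A 1 0 = 1 ∨ A 0 0 * A 1 1 - A 0 1 * A 1 0 = -1 := by
    have hD := Matrix.det_fin_two A
    rcases Int.isUnit_iff.mp hA with h | h
    · left; rw [← hD]; exact h
    · right; rw [← hD]; exact h
  have he1' : 0 < (A 0 0 : ℝ) * d 0 + (A 0 1 : ℝ) * d 1 := by rw [h00]; exact he 0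
  have he2' : 0 < (A 1 0 : ℝ) * d 0 + (A 1 1 : ℝ) * d 1 := by rw [h10]; exact he 1
  have hmain := engine
    ((-(A 0 0)).toNat + (-(A 0 1)).toNat + (-(A 1 0)).toNat + (-(A 1 1)).toNat)
    ((A 0 0).natAbs + (A 0 1).natAbs + (A 1 0).natAbs + (A 1 1).natAbs)
    (A 0 0) (A 0 1) (A 1 0) (A 1 1) (d 0) (d 1)
    (hd 0) (hd 1) he1' he2' hdet rfl le_rfl
  have hdvec : (![d 0, d 1] : Fin 2 → ℝ) = d := by
    funext i; fin_cases i <;> simp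
  have hevec : (![(A 0 0 : ℝ) * d 0 + (A 0 1 : ℝ) * d 1,
      (A 1 0 : ℝ) * d 0 + (A 1 1 : ℝ) * d 1] : Fin 2 → ℝ) = e := by
    funext i; fin_cases i
    · simpa using h00
    · simpa using h10
  rwa [hdvec, hevec] at hmain
end

section
/- Let d = (d₁,…,d_k) and e = (e₁,…,e_k) be vectors of positive reals such that the additive subgroup of ℝ generated by the dᵢ equals that generated by the eᵢ, and suppose this common subgroup has rank 1 (is infinite cyclic). Then there is a low admissible path from d to e: a finite sequence of vectors in ℝ₊ᵏ starting at d and ending at e, each obtained from the previous by applying P_{ij}, M_{ij}, or I_{ij}, such that every vector in the sequence is ≤ d or ≤ e in the componentwise-up-to-permutation order. -/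
/-- `v ≤ w` up to a permutation of the components. -/
def PermLE {k : ℕ} (v w : Fin k → ℝ) : Prop :=
  ∃ σ : Equiv.Perm (Fin k), ∀ i, v i ≤ w (σ i)

/-- A low admissible path from `d` to `e`: a finite sequence of positive vectors from
`d` to `e`, each step admissible, with every vector of the sequence `≤ d` or `≤ e`
in the componentwise-up-to-permutation order. -/
def LowAdmPath {k : ℕ} (d e : Fin k → ℝ) : Prop :=
  ∃ (l : ℕ) (f : ℕ → Fin k → ℝ),
    f 0 = d ∧ f l = e ∧
    (∀ s < l, AdmStep (f s) (f (s + 1))) ∧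
    (∀ s ≤ l, ∀ i, 0 < f s i) ∧
    (∀ s ≤ l, PermLE (f s) d ∨ PermLE (f s) e)

lemma permLE_refl {k : ℕ} (v : Fin k → ℝ) : PermLE v v :=
  ⟨Equiv.refl _, fun _ => le_rfl⟩

lemma permLE_trans {k : ℕ} {u v w : Fin k → ℝ} (h1 : PermLE u v) (h2 : PermLE v w) :
    PermLE u w := by
  obtain ⟨σ, hσ⟩ := h1
  obtain ⟨τ, hτ⟩ := h2
  exact ⟨σ.trans τ, fun i => (hσ i).trans (hτ (σ i))⟩

lemma permLE_of_le {k : ℕ} {v w : Fin k → ℝ} (h : ∀ i, v i ≤ w i) : PermLE v w :=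
  ⟨Equiv.refl _, h⟩

lemma admStep_symm {k : ℕ} {v w : Fin k → ℝ} (h : AdmStep v w) : AdmStep w v := by
  obtain ⟨i, j, hij, h⟩ := h
  refine ⟨i, j, hij, ?_⟩
  rcases h with h | h | h
  · right; left
    subst h
    funext t
    by_cases ht : t = i
    · subst ht
      simp [Function.update_self, Function.update_of_ne (Ne.symm hij)]
    · simp [Function.update_of_ne ht]
  · left
    subst h
    funext t
    by_cases ht : t = i
    · subst ht
      simp [Function.update_self, Function.update_of_ne (Ne.symm hij)]
    · simp [Function.update_of_ne ht]
  · right; right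
    subst h
    funext t
    simp [Function.comp, Equiv.swap_apply_self]

def APath {k : ℕ} (Q : (Fin k → ℝ) → Prop) (v w : Fin k → ℝ) : Prop :=
  ∃ (l : ℕ) (f : ℕ → Fin k → ℝ), f 0 = v ∧ f l = w ∧
    (∀ s < l, AdmStep (f s) (f (s + 1))) ∧ (∀ s ≤ l, Q (f s))

lemma apath_refl {k : ℕ} {Q : (Fin k → ℝ) → Prop} {v : Fin k → ℝ} (h : Q v) :
    APath Q v v :=
  ⟨0, fun _ => v, rfl, rfl, fun s hs => absurd hs (Nat.not_lt_zero s), fun _ _ => h⟩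

lemma apath_mono {k : ℕ} {Q Q' : (Fin k → ℝ) → Prop} (h : ∀ u, Q u → Q' u)
    {v w : Fin k → ℝ} (hp : APath Q v w) : APath Q' v w := by
  obtain ⟨l, f, h0, hl, hs, hq⟩ := hp
  exact ⟨l, f, h0, hl, hs, fun s hsl => h _ (hq s hsl)⟩

lemma apath_single {k : ℕ} {Q : (Fin k → ℝ) → Prop} {v w : Fin k → ℝ}
    (h : AdmStep v w) (hv : Q v) (hw : Q w) : APath Q v w := by
  refine ⟨1, fun s => if s = 0 then v else w, by simp, by simp, ?_, ?_⟩
  · intro s hs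
    interval_cases s
    simpa using h
  · intro s hs
    interval_cases s
    · simpa using hv
    · simpa using hw

lemma apath_trans {k : ℕ} {Q : (Fin k → ℝ) → Prop} {v w u : Fin k → ℝ}
    (h1 : APath Q v w) (h2 : APath Q w u) : APath Q v u := by
  obtain ⟨l₁, f₁, h10, h1l, h1s, h1q⟩ := h1
  obtain ⟨l₂, f₂, h20, h2l, h2s, h2q⟩ := h2
  refine ⟨l₁ + l₂, fun s => if s < l₁ then f₁ s else f₂ (s - l₁), ?_, ?_, ?_, ?_⟩
  · by_cases h : 0 < l₁
    · simp [h, h10]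
    · have hl0 : l₁ = 0 := by omega
      simp [hl0, h20, ← h10, hl0, ← h1l, hl0]
  · have : ¬ (l₁ + l₂ < l₁) := by omega
    simp [this, h2l]
  · intro s hs
    by_cases hsl : s < l₁
    · have hfs : (if s < l₁ then f₁ s else f₂ (s - l₁)) = f₁ s := by simp [hsl]
      have hfs1 : (if s + 1 < l₁ then f₁ (s + 1) else f₂ (s + 1 - l₁)) = f₁ (s + 1) := by
        by_cases h : s + 1 < l₁
        · simp [h]
        · have : s + 1 = l₁ := by omega
          simp [h, this, h20, ← h1l]
      simp only [hfs, hfs1]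
      exact h1s s hsl
    · have h1 : (if s < l₁ then f₁ s else f₂ (s - l₁)) = f₂ (s - l₁) := by simp [hsl]
      have h2 : (if s + 1 < l₁ then f₁ (s + 1) else f₂ (s + 1 - l₁)) = f₂ (s - l₁ + 1) := by
        have hn : ¬ (s + 1 < l₁) := by omega
        have : s + 1 - l₁ = s - l₁ + 1 := by omega
        simp [hn, this]
      simp only [h1, h2]
      exact h2s (s - l₁) (by omega)
  · intro s hs
    by_cases hsl : s < l₁
    · simpa [hsl] using h1q s (by omega)
    · simpa [hsl] using h2q (s - l₁) (by omega)

lemma apath_symm {k : ℕ} {Q : (Fin k → ℝ) → Prop} {v w : Fin k → ℝ}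
    (h : APath Q v w) : APath Q w v := by
  obtain ⟨l, f, h0, hl, hs, hq⟩ := h
  refine ⟨l, fun s => f (l - s), by simp [hl], by simp [h0], ?_, ?_⟩
  · intro s hsl
    show AdmStep (f (l - s)) (f (l - (s + 1)))
    have e1 : l - s = (l - (s + 1)) + 1 := by omega
    rw [e1]
    exact admStep_symm (hs _ (by omega))
  · intro s hsl
    exact hq _ (by omega)

lemma reach_const {k : ℕ} (x : ℝ) (hx : 0 < x) :
    ∀ (N : ℕ) (n : Fin k → ℕ), (∑ i, n i) ≤ N → (∀ i, 0 < n i) →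
      Finset.univ.gcd n = 1 →
      APath (fun u => (∀ i, 0 < u i) ∧ PermLE u (fun i => (n i : ℝ) * x))
        (fun i => (n i : ℝ) * x) (fun _ => x) := by
  intro N
  induction N with
  | zero =>
    intro n hsum hpos hg
    have hall : ∀ i, n i = 1 := by
      intro i
      have h1 := hpos i
      have h2 : n i ≤ ∑ t, n t :=
        Finset.single_le_sum (fun t _ => Nat.zero_le _) (Finset.mem_univ i)
      omega
    have hv : (fun i => (n i : ℝ) * x) = (fun _ : Fin k => x) := by
      funext i; rw [hall i]; simp
    rw [hv]
    exact apath_refl ⟨fun _ => hx, permLE_refl _⟩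
  | succ N ih =>
    intro n hsum hpos hg
    by_cases hall : ∀ i, n i = 1
    · have hv : (fun i => (n i : ℝ) * x) = (fun _ : Fin k => x) := by
        funext i; rw [hall i]; simp
      rw [hv]
      exact apath_refl ⟨fun _ => hx, permLE_refl _⟩
    · push_neg at hall
      obtain ⟨i₀, hi₀⟩ := hall
      have hi₀2 : 2 ≤ n i₀ := by have := hpos i₀; omega
      -- find i ≠ j with n j < n i
      have hpair : ∃ i j : Fin k, i ≠ j ∧ n j < n i := by
        by_cases hconst : ∀ t, n t = n i₀
        · exfalso
          have : n i₀ ∣ Finset.univ.gcd n :=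
            Finset.dvd_gcd (fun b _ => (hconst b) ▸ dvd_refl _)
          rw [hg] at this
          exact hi₀ (Nat.dvd_one.mp this)
        · push_neg at hconst
          obtain ⟨j₀, hj₀⟩ := hconst
          rcases lt_or_gt_of_ne hj₀ with h | h
          · exact ⟨i₀, j₀, fun he => hj₀ (he ▸ rfl), h⟩
          · exact ⟨j₀, i₀, fun he => hj₀ (he.symm ▸ rfl), h⟩
      obtain ⟨i, j, hij, hji⟩ := hpair
      set m : Fin k → ℕ := Function.update n i (n i - n j) with hm
      have hmj : m j = n j := Function.update_of_ne (Ne.symm hij) _ n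
      have hmi : m i = n i - n j := Function.update_self _ _ _
      have hmo : ∀ t, t ≠ i → m t = n t := fun t ht => Function.update_of_ne ht _ n
      have hmpos : ∀ t, 0 < m t := by
        intro t
        by_cases ht : t = i
        · subst ht; rw [hmi]; omega
        · rw [hmo t ht]; exact hpos t
      have hmn : ∀ t, m t ≤ n t := by
        intro t
        by_cases ht : t = i
        · subst ht; rw [hmi]; omega
        · rw [hmo t ht]
      have hmg : Finset.univ.gcd m = 1 := by
        have hdvd : Finset.univ.gcd m ∣ Finset.univ.gcd n := by
          apply Finset.dvd_gcd
          intro b _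
          by_cases hb : b = i
          · subst hb
            have h1 : Finset.univ.gcd m ∣ m b := Finset.gcd_dvd (Finset.mem_univ b)
            have h2 : Finset.univ.gcd m ∣ m j := Finset.gcd_dvd (Finset.mem_univ j)
            have heq : n b = m b + m j := by rw [hmi, hmj]; omega
            rw [heq]
            exact dvd_add h1 h2
          · exact (hmo b hb) ▸ Finset.gcd_dvd (Finset.mem_univ b)
        rw [hg] at hdvd
        exact Nat.dvd_one.mp hdvd
      have hmsum : ∑ t, m t ≤ N := by
        have h1 : ∑ t, m t = (n i - n j) + ∑ t ∈ Finset.univ \ {i}, n t :=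
          Finset.sum_update_of_mem (Finset.mem_univ i) n _
        have h2 : ∑ t, n t = n i + ∑ t ∈ Finset.univ \ {i}, n t := by
          have := Finset.sum_update_of_mem (Finset.mem_univ i) n (n i)
          rw [Function.update_eq_self] at this
          exact this
        have h3 := hpos j
        omega
      -- the real vectors
      set vn : Fin k → ℝ := fun t => (n t : ℝ) * x with hvn
      set vm : Fin k → ℝ := fun t => (m t : ℝ) * x with hvm
      have hvmeq : vm = Function.update vn i (vn i - vn j) := by
        funext t
        by_cases ht : t = i
        · subst ht
          rw [hvm]
          simp only [Function.update_self, hmi]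
          rw [hvn]
          push_cast [Nat.cast_sub hji.le]
          ring
        · show (m t : ℝ) * x = Function.update vn i (vn i - vn j) t
          rw [Function.update_of_ne ht, hmo t ht]
      have hstep : AdmStep vn vm := ⟨i, j, hij, Or.inr (Or.inl hvmeq)⟩
      have hvnpos : ∀ t, 0 < vn t := fun t => by
        have := hpos t
        positivity
      have hvmpos : ∀ t, 0 < vm t := fun t => by
        have := hmpos t
        positivity
      have hmle : PermLE vm vn := permLE_of_le (fun t => by
        exact mul_le_mul_of_nonneg_right (Nat.cast_le.mpr (hmn t)) hx.le)
      have ihm := ih m hmsum hmpos hmg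
      refine apath_trans (apath_single hstep ⟨hvnpos, permLE_refl _⟩ ⟨hvmpos, hmle⟩) ?_
      exact apath_mono (fun u hu => ⟨hu.1, permLE_trans hu.2 hmle⟩) ihm

lemma exists_rep {k : ℕ} (y : ℝ) (hy : 0 < y) (d : Fin k → ℝ) (hd : ∀ i, 0 < d i)
    (h : AddSubgroup.closure (Set.range d) = AddSubgroup.closure {y}) :
    ∃ n : Fin k → ℕ, (∀ i, 0 < n i) ∧ (∀ i, (n i : ℝ) * y = d i) ∧
      Finset.univ.gcd n = 1 := by
  have hmem : ∀ i, ∃ c : ℤ, c • y = d i := by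
    intro i
    have : d i ∈ AddSubgroup.closure (Set.range d) :=
      AddSubgroup.subset_closure (Set.mem_range_self i)
    rw [h] at this
    exact AddSubgroup.mem_closure_singleton.mp this
  choose c hc using hmem
  have hcpos : ∀ i, 0 < c i := by
    intro i
    have h1 : (c i : ℝ) * y = d i := by rw [← hc i]; simp [zsmul_eq_mul]
    by_contra hcon
    push_neg at hcon
    have : (c i : ℝ) ≤ 0 := by exact_mod_cast hcon
    nlinarith [hd i]
  refine ⟨fun i => (c i).toNat, ?_, ?_, ?_⟩
  · intro i
    show 0 < (c i).toNat
    have := hcpos i; omega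
  · intro i
    show ((c i).toNat : ℝ) * y = d i
    have h1 : ((c i).toNat : ℝ) = (c i : ℝ) := by
      exact_mod_cast Int.toNat_of_nonneg (hcpos i).le
    rw [h1, ← hc i]; simp [zsmul_eq_mul]
  · set n : Fin k → ℕ := fun i => (c i).toNat with hn
    set g : ℕ := Finset.univ.gcd n with hgdef
    have hdn : ∀ i, (n i : ℝ) * y = d i := by
      intro i
      show ((c i).toNat : ℝ) * y = d i
      have h1 : ((c i).toNat : ℝ) = (c i : ℝ) := by
        exact_mod_cast Int.toNat_of_nonneg (hcpos i).le
      rw [h1, ← hc i]; simp [zsmul_eq_mul]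
    have hsub : AddSubgroup.closure (Set.range d) ≤ AddSubgroup.zmultiples ((g : ℝ) * y) := by
      rw [AddSubgroup.closure_le]
      rintro _ ⟨i, rfl⟩
      rw [SetLike.mem_coe, AddSubgroup.mem_zmultiples_iff]
      refine ⟨((n i / g : ℕ) : ℤ), ?_⟩
      have hgd : g ∣ n i := Finset.gcd_dvd (Finset.mem_univ i)
      rw [← hdn i, zsmul_eq_mul, Int.cast_natCast, ← mul_assoc, ← Nat.cast_mul,
        Nat.div_mul_cancel hgd]
    have hymem : y ∈ AddSubgroup.zmultiples ((g : ℝ) * y) := by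
      apply hsub
      rw [h]
      exact AddSubgroup.subset_closure rfl
    rw [AddSubgroup.mem_zmultiples_iff] at hymem
    obtain ⟨a, ha⟩ := hymem
    rw [zsmul_eq_mul] at ha
    have h1 : ((a * (g : ℤ) : ℤ) : ℝ) * y = 1 * y := by
      push_cast
      linear_combination ha
    have h2 : ((a * (g : ℤ) : ℤ) : ℝ) = 1 := mul_right_cancel₀ hy.ne' h1
    have h3 : a * (g : ℤ) = 1 := by exact_mod_cast h2
    have h4 : (g : ℤ) ∣ 1 := Dvd.intro_left a h3
    have h5 : g ∣ 1 := by exact_mod_cast h4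
    exact Nat.dvd_one.mp h5


/-- **Lemma B.3 of Chekanov–Schlenk (rank 1 case).** If `d, e ∈ ℝ₊ᵏ` generate
the same additive subgroup of `ℝ` and this subgroup is infinite cyclic
(has rank 1), then there is a low admissible path from `d` to `e`. -/
theorem lowAdmPath_of_rank_one
    (k : ℕ) (d e : Fin k → ℝ) (hd : ∀ i, 0 < d i) (he : ∀ i, 0 < e i)
    (hgen : AddSubgroup.closure (Set.range d) = AddSubgroup.closure (Set.range e))
    (hrk : ∃ x : ℝ, x ≠ 0 ∧
      AddSubgroup.closure (Set.range d) = AddSubgroup.closure {x}) :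
    LowAdmPath d e := by
  obtain ⟨x, hx0, hdx⟩ := hrk
  have hy : 0 < |x| := abs_pos.mpr hx0
  have hdy : AddSubgroup.closure (Set.range d) = AddSubgroup.closure {|x|} := by
    rcases abs_choice x with h | h
    · rw [hdx, h]
    · rw [hdx, h]
      apply le_antisymm
      · rw [AddSubgroup.closure_le, Set.singleton_subset_iff]
        have hxx : -(-x) ∈ AddSubgroup.closure ({-x} : Set ℝ) :=
          neg_mem (AddSubgroup.subset_closure rfl)
        simpa using hxx
      · rw [AddSubgroup.closure_le, Set.singleton_subset_iff]
        have hxx : -x ∈ AddSubgroup.closure ({x} : Set ℝ) :=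
          neg_mem (AddSubgroup.subset_closure rfl)
        simpa using hxx
  have hey : AddSubgroup.closure (Set.range e) = AddSubgroup.closure {|x|} := by
    rw [← hgen]; exact hdy
  obtain ⟨n, hnpos, hnd, hng⟩ := exists_rep _ hy d hd hdy
  obtain ⟨m, hmpos, hme, hmg⟩ := exists_rep _ hy e he hey
  have hdv : d = fun i => (n i : ℝ) * |x| := funext fun i => (hnd i).symm
  have hev : e = fun i => (m i : ℝ) * |x| := funext fun i => (hme i).symm
  have p1 := reach_const (k := k) |x| hy (∑ i, n i) n le_rfl hnpos hng
  have p2 := reach_const (k := k) |x| hy (∑ i, m i) m le_rfl hmpos hmg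
  rw [← hdv] at p1
  rw [← hev] at p2
  have p1' : APath (fun u => (∀ i, 0 < u i) ∧ (PermLE u d ∨ PermLE u e)) d (fun _ => |x|) :=
    apath_mono (fun u hu => ⟨hu.1, Or.inl hu.2⟩) p1
  have p2' : APath (fun u => (∀ i, 0 < u i) ∧ (PermLE u d ∨ PermLE u e)) (fun _ => |x|) e :=
    apath_symm (apath_mono (fun u hu => ⟨hu.1, Or.inr hu.2⟩) p2)
  obtain ⟨l, f, h0, hl, hs, hq⟩ := apath_trans p1' p2'
  exact ⟨l, f, h0, hl, hs, fun s hsl => (hq s hsl).1, fun s hsl => (hq s hsl).2⟩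
end

section
/- Let u = (u₁,…,u_k) ∈ ℝ₊ᵏ. Then there is a low admissible path from u to a vector u⁺ = (u⁺₁,…,u⁺_k) ∈ ℝ₊ᵏ such that u⁺ ≤ u, u⁺_k ≤ u⁺_j for all j, and u⁺_k is indivisible (primitive) in the additive subgroup ⟨u⟩ ⊂ ℝ generated by u₁,…,u_k. -/
namespace CSAux

open Finset

variable {n : ℕ}

/-- One admissible step which moreover stays positive and low relative to `u`. -/
def Step (u v w : Fin n → ℝ) : Prop :=
  AdmStep v w ∧ (∀ i, 0 < w i) ∧ PermLE w u

/-- Reachability by a low admissible path (relative to `u`). -/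
def Reach (u : Fin n → ℝ) : (Fin n → ℝ) → (Fin n → ℝ) → Prop :=
  Relation.ReflTransGen (Step u)

lemma permLE_refl (v : Fin n → ℝ) : PermLE v v :=
  ⟨Equiv.refl _, fun _ => le_rfl⟩

lemma permLE_update_le {u v : Fin n → ℝ} (h : PermLE v u) {i : Fin n} {a : ℝ}
    (ha : a ≤ v i) : PermLE (Function.update v i a) u := by
  obtain ⟨σ, hσ⟩ := h
  refine ⟨σ, fun t => ?_⟩
  by_cases ht : t = i
  · subst ht; rw [Function.update_self]; exact ha.trans (hσ t)
  · rw [Function.update_of_ne ht]; exact hσ t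

lemma permLE_of_le_min {u v : Fin n → ℝ} {μ : ℝ} (hμ : ∀ i, μ ≤ u i)
    (h : ∀ i, v i ≤ μ) : PermLE v u :=
  ⟨Equiv.refl _, fun i => (h i).trans (hμ i)⟩

lemma permLE_comp_equiv {u v : Fin n → ℝ} (h : PermLE v u) (e : Equiv.Perm (Fin n)) :
    PermLE (v ∘ e) u := by
  obtain ⟨σ, hσ⟩ := h
  exact ⟨e.trans σ, fun t => hσ (e t)⟩

/-- Convert a `Reach` chain into the explicit path format of `LowAdmPath`. -/
lemma reach_to_path {u v w : Fin n → ℝ} (h : Reach u v w)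
    (hv : ∀ i, 0 < v i) (hvu : PermLE v u) :
    ∃ (l : ℕ) (f : ℕ → Fin n → ℝ),
      f 0 = v ∧ f l = w ∧
      (∀ s < l, AdmStep (f s) (f (s + 1))) ∧
      (∀ s ≤ l, ∀ i, 0 < f s i) ∧
      (∀ s ≤ l, PermLE (f s) u) := by
  induction h with
  | refl =>
      exact ⟨0, fun _ => v, rfl, rfl, by omega, fun s _ => hv, fun s _ => hvu⟩
  | @tail b c hab hbc IH =>
      obtain ⟨l, f, hf0, hfl, hstep, hpos, hperm⟩ := IH
      refine ⟨l + 1, fun s => if s ≤ l then f s else c, ?_, ?_, ?_, ?_, ?_⟩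
      · simp [hf0]
      · simp
      · intro s hs
        rcases Nat.lt_or_ge s l with hsl | hsl
        · have h1 : s ≤ l := hsl.le
          have h2 : s + 1 ≤ l := hsl
          simp only [if_pos h1, if_pos h2]
          exact hstep s hsl
        · have hsl' : s = l := by omega
          subst hsl'
          simp only [if_pos le_rfl, if_neg (by omega : ¬ s + 1 ≤ s), hfl]
          exact hbc.1
      · intro s _ i
        by_cases h1 : s ≤ l
        · simp only [if_pos h1]; exact hpos s h1 i
        · simp only [if_neg h1]; exact hbc.2.1 i
      · intro s _
        by_cases h1 : s ≤ l
        · simp only [if_pos h1]; exact hperm s h1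
        · simp only [if_neg h1]; exact hbc.2.2

lemma sum_pair {M : Type*} [AddCommMonoid M] {i j : Fin n} (hij : i ≠ j) (F : Fin n → M) :
    ∑ l, F l = F i + F j + ∑ l ∈ (univ.erase i).erase j, F l := by
  have hj : j ∈ univ.erase i := Finset.mem_erase.mpr ⟨hij.symm, Finset.mem_univ j⟩
  rw [← Finset.add_sum_erase _ F (Finset.mem_univ i), ← Finset.add_sum_erase _ F hj,
    add_assoc]

lemma mem_doubly_erased {i j l : Fin n} (hl : l ∈ (univ.erase i).erase j) :
    l ≠ i ∧ l ≠ j := by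
  rcases Finset.mem_erase.mp hl with ⟨hlj, hl'⟩
  exact ⟨(Finset.mem_erase.mp hl').1, hlj⟩

/-- Span of the components only grows when one component is replaced by a value
from which the old component can be recovered. -/
lemma span_le_update {v : Fin n → ℝ} {i : Fin n} (z : ℝ)
    (hz : v i ∈ Submodule.span ℤ (Set.range (Function.update v i z))) :
    Submodule.span ℤ (Set.range v) ≤ Submodule.span ℤ (Set.range (Function.update v i z)) := by
  apply Submodule.span_le.mpr
  rintro _ ⟨l, rfl⟩
  by_cases hl : l = i
  · subst hl; exact hz
  · exact Submodule.subset_span ⟨l, Function.update_of_ne hl _ _⟩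

lemma mem_span_range_self' (v : Fin n → ℝ) (l : Fin n) :
    v l ∈ Submodule.span ℤ (Set.range v) :=
  Submodule.subset_span ⟨l, rfl⟩

/-- The core induction: given an integer representation of an indivisible `x` in terms
of the current positive small vector `v`, we can reach (by a low admissible path)
a vector having `x` as one of its components.  Lexicographic induction on
(total negative coefficient mass, total positive coefficient mass). -/
lemma core (u : Fin n → ℝ) (μ : ℝ) (hμ : ∀ i, μ ≤ u i)
    (N : Submodule ℤ ℝ) (x : ℝ) (hx : 0 < x) (hxμ : 2 * x ≤ μ)
    (hind : ∀ y ∈ N, ∀ d : ℕ, 0 < d → x = d • y → d = 1) :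
    ∀ a b : ℕ, ∀ v : Fin n → ℝ, ∀ c : Fin n → ℤ,
      (∑ l, (-(c l)).toNat) = a → (∑ l, (c l).toNat) = b →
      (∀ i, 0 < v i) → (∀ i, v i ≤ μ) →
      (∀ i, c i < 0 → 4 * v i ≤ μ) →
      (∀ i, v i ∈ N) →
      (∑ l, (c l : ℝ) * v l) = x →
      ∃ w : Fin n → ℝ, ∃ i : Fin n, Reach u v w ∧ w i = x ∧
        (∀ i, 0 < w i) ∧ (∀ i, w i ≤ μ) ∧ (∀ i, w i ∈ N) := by
  intro a
  induction a using Nat.strong_induction_on with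
  | _ a IHa =>
  intro b
  induction b using Nat.strong_induction_on with
  | _ b IHb =>
  intro v c ha hb hpos hle hB hmem hsum
  by_cases h1 : ∃ i, ∀ l, l ≠ i → c l = 0
  · -- single support: terminal case
    obtain ⟨i, hi⟩ := h1
    have hxi : x = (c i : ℝ) * v i := by
      rw [← hsum, Finset.sum_eq_single i]
      · intro l _ hl; rw [hi l hl]; simp
      · intro h; exact absurd (Finset.mem_univ i) h
    have hci : 0 < c i := by
      rcases le_or_gt (c i) 0 with h | h
      · exfalso
        have : (c i : ℝ) ≤ 0 := by exact_mod_cast h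
        nlinarith [hpos i]
      · exact h
    have hone : (c i).toNat = 1 := by
      refine hind (v i) (hmem i) (c i).toNat (by omega) ?_
      rw [hxi, nsmul_eq_mul]
      congr 1
      have h := Int.toNat_of_nonneg hci.le
      exact_mod_cast h.symm
    have hci1 : c i = 1 := by omega
    refine ⟨v, i, Relation.ReflTransGen.refl, ?_, hpos, hle, hmem⟩
    rw [hxi, hci1]; push_cast; ring
  · push_neg at h1
    have hexpos : ∃ i, 0 < c i := by
      by_contra h
      push_neg at h
      have hless : ∑ l, (c l : ℝ) * v l ≤ 0 := by
        apply Finset.sum_nonpos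
        intro l _
        have : (c l : ℝ) ≤ 0 := by exact_mod_cast h l
        exact mul_nonpos_of_nonpos_of_nonneg this (hpos l).le
      linarith [hsum ▸ hless]
    by_cases h2 : ∃ j, c j < 0
    · -- mixed signs
      by_cases hge : ∃ p, ∃ q, 0 < c p ∧ c q < 0 ∧ v q ≤ v p
      · obtain ⟨i, j, hci, hcj, hvji⟩ := hge
        have hij : i ≠ j := by intro h; rw [h] at hci; omega
        have hmdec : ∀ l, l ∈ (univ.erase i).erase j → l ≠ i ∧ l ≠ j := fun l hl =>
          mem_doubly_erased hl
        rcases eq_or_lt_of_le hvji with hv | hv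
        · -- v j = v i : merge coefficients, no step
          set c' := Function.update (Function.update c i 0) j (c i + c j) with hc'def
          have hc'j : c' j = c i + c j := Function.update_self _ _ _
          have hc'i : c' i = 0 := by
            rw [hc'def, Function.update_of_ne hij, Function.update_self]
          have hc'other : ∀ l, l ≠ i → l ≠ j → c' l = c l := by
            intro l hli hlj
            rw [hc'def, Function.update_of_ne hlj, Function.update_of_ne hli]
          have hsum' : ∑ l, (c' l : ℝ) * v l = x := by
            rw [sum_pair hij (fun l => (c' l : ℝ) * v l)]
            rw [sum_pair hij (fun l => (c l : ℝ) * v l)] at hsum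
            have hrest : ∑ l ∈ (univ.erase i).erase j, (c' l : ℝ) * v l
                = ∑ l ∈ (univ.erase i).erase j, (c l : ℝ) * v l := by
              apply Finset.sum_congr rfl
              intro l hl
              rw [hc'other l (hmdec l hl).1 (hmdec l hl).2]
            rw [hrest, hc'i, hc'j]
            push_cast
            push_cast at hsum
            linear_combination hsum + (c i : ℝ) * hv
          have hlt : ∑ l, (-(c' l)).toNat < a := by
            rw [← ha]
            rw [sum_pair hij (fun l => (-(c l)).toNat),
              sum_pair hij (fun l => (-(c' l)).toNat)]
            have hrest : ∑ l ∈ (univ.erase i).erase j, (-(c' l)).toNat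
                = ∑ l ∈ (univ.erase i).erase j, (-(c l)).toNat := by
              apply Finset.sum_congr rfl
              intro l hl
              rw [hc'other l (hmdec l hl).1 (hmdec l hl).2]
            rw [hrest, hc'i, hc'j]
            omega
          have hB' : ∀ l, c' l < 0 → 4 * v l ≤ μ := by
            intro l hl
            by_cases hlj : l = j
            · subst hlj; exact hB l hcj
            · by_cases hli : l = i
              · subst hli; rw [hc'i] at hl; omega
              · rw [hc'other l hli hlj] at hl; exact hB l hl
          exact IHa _ hlt _ v c' rfl rfl hpos hle hB' hmem hsum'
        · -- v j < v i : step  v i ← v i - v j ;  c j ← c j + c i  (neg mass drops)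
          set v' := Function.update v i (v i - v j) with hv'def
          set c' := Function.update c j (c j + c i) with hc'def
          have hv'i : v' i = v i - v j := Function.update_self _ _ _
          have hv'other : ∀ l, l ≠ i → v' l = v l := fun l hl => Function.update_of_ne hl _ _
          have hc'j : c' j = c j + c i := Function.update_self _ _ _
          have hc'other : ∀ l, l ≠ j → c' l = c l := fun l hl => Function.update_of_ne hl _ _
          have hpos' : ∀ t, 0 < v' t := by
            intro t
            by_cases ht : t = i
            · rw [ht, hv'i]; linarith
            · rw [hv'other t ht]; exact hpos t
          have hle' : ∀ t, v' t ≤ μ := by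
            intro t
            by_cases ht : t = i
            · rw [ht, hv'i]; linarith [hle i, hpos j]
            · rw [hv'other t ht]; exact hle t
          have hmem' : ∀ t, v' t ∈ N := by
            intro t
            by_cases ht : t = i
            · rw [ht, hv'i]; exact sub_mem (hmem i) (hmem j)
            · rw [hv'other t ht]; exact hmem t
          have hstep : Step u v v' :=
            ⟨⟨i, j, hij, Or.inr (Or.inl rfl)⟩, hpos', permLE_of_le_min hμ hle'⟩
          have hsum' : ∑ l, (c' l : ℝ) * v' l = x := by
            rw [sum_pair hij (fun l => (c' l : ℝ) * v' l)]
            rw [sum_pair hij (fun l => (c l : ℝ) * v l)] at hsum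
            have hrest : ∑ l ∈ (univ.erase i).erase j, (c' l : ℝ) * v' l
                = ∑ l ∈ (univ.erase i).erase j, (c l : ℝ) * v l := by
              apply Finset.sum_congr rfl
              intro l hl
              rw [hc'other l (hmdec l hl).2, hv'other l (hmdec l hl).1]
            rw [hrest, hc'j, hc'other i hij, hv'i, hv'other j (fun h => hij h.symm)]
            push_cast
            push_cast at hsum
            linarith
          have hlt : ∑ l, (-(c' l)).toNat < a := by
            rw [← ha]
            rw [sum_pair hij (fun l => (-(c l)).toNat),
              sum_pair hij (fun l => (-(c' l)).toNat)]
            have hrest : ∑ l ∈ (univ.erase i).erase j, (-(c' l)).toNat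
                = ∑ l ∈ (univ.erase i).erase j, (-(c l)).toNat := by
              apply Finset.sum_congr rfl
              intro l hl
              rw [hc'other l (hmdec l hl).2]
            rw [hrest, hc'j, hc'other i hij]
            omega
          have hB' : ∀ l, c' l < 0 → 4 * v' l ≤ μ := by
            intro l hl
            by_cases hlj : l = j
            · subst hlj
              rw [hv'other l hij.symm]
              exact hB l hcj
            · rw [hc'other l hlj] at hl
              by_cases hli : l = i
              · subst hli; omega
              · rw [hv'other l hli]; exact hB l hl
          obtain ⟨w, iw, hreach, hwi, hwpos, hwle, hwmem⟩ :=
            IHa _ hlt _ v' c' rfl rfl hpos' hle' hB' hmem' hsum'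
          exact ⟨w, iw, Relation.ReflTransGen.head hstep hreach, hwi, hwpos, hwle, hwmem⟩
      · -- all positive-coefficient slots have values strictly below all
        -- negative-coefficient slots
        push_neg at hge
        have hlt : ∀ p q, 0 < c p → c q < 0 → v p < v q := by
          intro p q hp hq
          have := hge p q hp hq
          linarith
        obtain ⟨j, hcj⟩ := h2
        by_cases htwo : ∃ p, ∃ q, p ≠ q ∧ 0 < c p ∧ 0 < c q
        · -- climb: two positive slots, add the larger-coefficient one into the other
          obtain ⟨p, q, hpq, hcp, hcq⟩ := htwo
          -- choose s (small coefficient) and s' (large coefficient)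
          obtain ⟨s, s', hss', hcs, hcs', hord⟩ :
              ∃ s s', s ≠ s' ∧ 0 < c s ∧ 0 < c s' ∧ c s ≤ c s' := by
            rcases le_total (c p) (c q) with h | h
            · exact ⟨p, q, hpq, hcp, hcq, h⟩
            · exact ⟨q, p, hpq.symm, hcq, hcp, h⟩
          have hmdec : ∀ l, l ∈ (univ.erase s).erase s' → l ≠ s ∧ l ≠ s' := fun l hl =>
            mem_doubly_erased hl
          set v' := Function.update v s (v s + v s') with hv'def
          set c' := Function.update c s' (c s' - c s) with hc'def
          have hv's : v' s = v s + v s' := Function.update_self _ _ _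
          have hv'other : ∀ l, l ≠ s → v' l = v l := fun l hl => Function.update_of_ne hl _ _
          have hc's' : c' s' = c s' - c s := Function.update_self _ _ _
          have hc'other : ∀ l, l ≠ s' → c' l = c l := fun l hl => Function.update_of_ne hl _ _
          have hvs : v s < v j := hlt s j hcs hcj
          have hvs' : v s' < v j := hlt s' j hcs' hcj
          have hvj4 : 4 * v j ≤ μ := hB j hcj
          have hpos' : ∀ t, 0 < v' t := by
            intro t
            by_cases ht : t = s
            · rw [ht, hv's]; linarith [hpos s, hpos s']
            · rw [hv'other t ht]; exact hpos t
          have hle' : ∀ t, v' t ≤ μ := by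
            intro t
            by_cases ht : t = s
            · rw [ht, hv's]; linarith
            · rw [hv'other t ht]; exact hle t
          have hmem' : ∀ t, v' t ∈ N := by
            intro t
            by_cases ht : t = s
            · rw [ht, hv's]; exact add_mem (hmem s) (hmem s')
            · rw [hv'other t ht]; exact hmem t
          have hstep : Step u v v' :=
            ⟨⟨s, s', hss', Or.inl rfl⟩, hpos', permLE_of_le_min hμ hle'⟩
          have hsum' : ∑ l, (c' l : ℝ) * v' l = x := by
            rw [sum_pair hss' (fun l => (c' l : ℝ) * v' l)]
            rw [sum_pair hss' (fun l => (c l : ℝ) * v l)] at hsum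
            have hrest : ∑ l ∈ (univ.erase s).erase s', (c' l : ℝ) * v' l
                = ∑ l ∈ (univ.erase s).erase s', (c l : ℝ) * v l := by
              apply Finset.sum_congr rfl
              intro l hl
              rw [hc'other l (hmdec l hl).2, hv'other l (hmdec l hl).1]
            rw [hrest, hc's', hc'other s hss', hv's, hv'other s' (fun h => hss' h.symm)]
            push_cast
            push_cast at hsum
            linarith
          have haeq : ∑ l, (-(c' l)).toNat = a := by
            rw [← ha]
            rw [sum_pair hss' (fun l => (-(c l)).toNat),
              sum_pair hss' (fun l => (-(c' l)).toNat)]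
            have hrest : ∑ l ∈ (univ.erase s).erase s', (-(c' l)).toNat
                = ∑ l ∈ (univ.erase s).erase s', (-(c l)).toNat := by
              apply Finset.sum_congr rfl
              intro l hl
              rw [hc'other l (hmdec l hl).2]
            rw [hrest, hc's', hc'other s hss']
            omega
          have hblt : ∑ l, (c' l).toNat < b := by
            rw [← hb]
            rw [sum_pair hss' (fun l => (c l).toNat),
              sum_pair hss' (fun l => (c' l).toNat)]
            have hrest : ∑ l ∈ (univ.erase s).erase s', (c' l).toNat
                = ∑ l ∈ (univ.erase s).erase s', (c l).toNat := by
              apply Finset.sum_congr rfl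
              intro l hl
              rw [hc'other l (hmdec l hl).2]
            rw [hrest, hc's', hc'other s hss']
            omega
          have hB' : ∀ l, c' l < 0 → 4 * v' l ≤ μ := by
            intro l hl
            by_cases hls' : l = s'
            · subst hls'; rw [hc's'] at hl; omega
            · rw [hc'other l hls'] at hl
              by_cases hls : l = s
              · subst hls; omega
              · rw [hv'other l hls]; exact hB l hl
          obtain ⟨w, iw, hreach, hwi, hwpos, hwle, hwmem⟩ :=
            IHb _ hblt v' c' haeq rfl hpos' hle' hB' hmem' hsum'
          exact ⟨w, iw, Relation.ReflTransGen.head hstep hreach, hwi, hwpos, hwle, hwmem⟩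
        · -- a single positive slot: strike the negative slot with it
          push_neg at htwo
          obtain ⟨s, hcs⟩ := hexpos
          have honly : ∀ l, l ≠ s → c l ≤ 0 := by
            intro l hl
            have := htwo s l (fun h => hl h.symm) hcs
            omega
          have hsj : s ≠ j := by intro h; rw [h] at hcs; omega
          have hmdec : ∀ l, l ∈ (univ.erase s).erase j → l ≠ s ∧ l ≠ j := fun l hl =>
            mem_doubly_erased hl
          have hvsj : v s < v j := hlt s j hcs hcj
          -- budget: c s + c j ≥ 0
          have hbudget : 0 ≤ c s + c j := by
            by_contra hcon
            push_neg at hcon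
            -- then x = c s * v s + (≤ c j * v j) would be ≤ (c s + c j) v s < 0 -ish
            rw [sum_pair hsj (fun l => (c l : ℝ) * v l)] at hsum
            have hrest : ∑ l ∈ (univ.erase s).erase j, (c l : ℝ) * v l ≤ 0 := by
              apply Finset.sum_nonpos
              intro l hl
              have hcl : c l ≤ 0 := honly l (hmdec l hl).1
              have : (c l : ℝ) ≤ 0 := by exact_mod_cast hcl
              exact mul_nonpos_of_nonpos_of_nonneg this (hpos l).le
            have hcsr : (0:ℝ) < (c s : ℝ) := by exact_mod_cast hcs
            have hcjr : (c j : ℝ) < 0 := by exact_mod_cast hcj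
            have hsum2 : (c s : ℝ) + (c j : ℝ) < 0 := by exact_mod_cast hcon
            nlinarith [hpos s, hpos j, hvsj]
          set v' := Function.update v j (v j - v s) with hv'def
          set c' := Function.update c s (c s + c j) with hc'def
          have hv'j : v' j = v j - v s := Function.update_self _ _ _
          have hv'other : ∀ l, l ≠ j → v' l = v l := fun l hl => Function.update_of_ne hl _ _
          have hc's : c' s = c s + c j := Function.update_self _ _ _
          have hc'other : ∀ l, l ≠ s → c' l = c l := fun l hl => Function.update_of_ne hl _ _
          have hpos' : ∀ t, 0 < v' t := by
            intro t
            by_cases ht : t = j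
            · rw [ht, hv'j]; linarith
            · rw [hv'other t ht]; exact hpos t
          have hle' : ∀ t, v' t ≤ μ := by
            intro t
            by_cases ht : t = j
            · rw [ht, hv'j]; linarith [hle j, hpos s]
            · rw [hv'other t ht]; exact hle t
          have hmem' : ∀ t, v' t ∈ N := by
            intro t
            by_cases ht : t = j
            · rw [ht, hv'j]; exact sub_mem (hmem j) (hmem s)
            · rw [hv'other t ht]; exact hmem t
          have hstep : Step u v v' :=
            ⟨⟨j, s, fun h => hsj h.symm, Or.inr (Or.inl rfl)⟩, hpos',
              permLE_of_le_min hμ hle'⟩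
          have hsum' : ∑ l, (c' l : ℝ) * v' l = x := by
            rw [sum_pair hsj (fun l => (c' l : ℝ) * v' l)]
            rw [sum_pair hsj (fun l => (c l : ℝ) * v l)] at hsum
            have hrest : ∑ l ∈ (univ.erase s).erase j, (c' l : ℝ) * v' l
                = ∑ l ∈ (univ.erase s).erase j, (c l : ℝ) * v l := by
              apply Finset.sum_congr rfl
              intro l hl
              rw [hc'other l (hmdec l hl).1, hv'other l (hmdec l hl).2]
            rw [hrest, hc's, hc'other j (fun h => hsj h.symm), hv'j, hv'other s hsj]
            push_cast
            push_cast at hsum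
            linarith
          have haeq : ∑ l, (-(c' l)).toNat = a := by
            rw [← ha]
            rw [sum_pair hsj (fun l => (-(c l)).toNat),
              sum_pair hsj (fun l => (-(c' l)).toNat)]
            have hrest : ∑ l ∈ (univ.erase s).erase j, (-(c' l)).toNat
                = ∑ l ∈ (univ.erase s).erase j, (-(c l)).toNat := by
              apply Finset.sum_congr rfl
              intro l hl
              rw [hc'other l (hmdec l hl).1]
            rw [hrest, hc's, hc'other j (fun h => hsj h.symm)]
            omega
          have hblt : ∑ l, (c' l).toNat < b := by
            rw [← hb]
            rw [sum_pair hsj (fun l => (c l).toNat),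
              sum_pair hsj (fun l => (c' l).toNat)]
            have hrest : ∑ l ∈ (univ.erase s).erase j, (c' l).toNat
                = ∑ l ∈ (univ.erase s).erase j, (c l).toNat := by
              apply Finset.sum_congr rfl
              intro l hl
              rw [hc'other l (hmdec l hl).1]
            rw [hrest, hc's, hc'other j (fun h => hsj h.symm)]
            omega
          have hB' : ∀ l, c' l < 0 → 4 * v' l ≤ μ := by
            intro l hl
            by_cases hls : l = s
            · subst hls; rw [hc's] at hl; omega
            · rw [hc'other l hls] at hl
              by_cases hlj : l = j
              · subst hlj
                rw [hv'j]
                have := hB l hl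
                linarith [hpos s]
              · rw [hv'other l hlj]; exact hB l hl
          obtain ⟨w, iw, hreach, hwi, hwpos, hwle, hwmem⟩ :=
            IHb _ hblt v' c' haeq rfl hpos' hle' hB' hmem' hsum'
          exact ⟨w, iw, Relation.ReflTransGen.head hstep hreach, hwi, hwpos, hwle, hwmem⟩
    · -- all coefficients nonnegative, at least two in the support
      push_neg at h2
      obtain ⟨p, hcp⟩ := hexpos
      obtain ⟨q, hqne, hcq0⟩ := h1 p
      have hcq : 0 < c q := lt_of_le_of_ne (h2 q) (Ne.symm hcq0)
      obtain ⟨s, s', hss', hcs, hcs', hord⟩ :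
          ∃ s s', s ≠ s' ∧ 0 < c s ∧ 0 < c s' ∧ c s ≤ c s' := by
        rcases le_total (c p) (c q) with h | h
        · exact ⟨p, q, fun h' => hqne h'.symm, hcp, hcq, h⟩
        · exact ⟨q, p, hqne, hcq, hcp, h⟩
      have hmdec : ∀ l, l ∈ (univ.erase s).erase s' → l ≠ s ∧ l ≠ s' := fun l hl =>
        mem_doubly_erased hl
      have htermnn : ∀ l, 0 ≤ (c l : ℝ) * v l := by
        intro l
        have : (0 : ℝ) ≤ (c l : ℝ) := by exact_mod_cast h2 l
        exact mul_nonneg this (hpos l).le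
      have hvs : v s ≤ x := by
        have hterm : (c s : ℝ) * v s ≤ x := by
          rw [← hsum]
          exact Finset.single_le_sum (fun l _ => htermnn l) (Finset.mem_univ s)
        have h1r : (1:ℝ) ≤ (c s : ℝ) := by exact_mod_cast hcs
        nlinarith [hpos s]
      have hvs' : v s' ≤ x := by
        have hterm : (c s' : ℝ) * v s' ≤ x := by
          rw [← hsum]
          exact Finset.single_le_sum (fun l _ => htermnn l) (Finset.mem_univ s')
        have h1r : (1:ℝ) ≤ (c s' : ℝ) := by exact_mod_cast hcs'
        nlinarith [hpos s']
      set v' := Function.update v s (v s + v s') with hv'def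
      set c' := Function.update c s' (c s' - c s) with hc'def
      have hv's : v' s = v s + v s' := Function.update_self _ _ _
      have hv'other : ∀ l, l ≠ s → v' l = v l := fun l hl => Function.update_of_ne hl _ _
      have hc's' : c' s' = c s' - c s := Function.update_self _ _ _
      have hc'other : ∀ l, l ≠ s' → c' l = c l := fun l hl => Function.update_of_ne hl _ _
      have hpos' : ∀ t, 0 < v' t := by
        intro t
        by_cases ht : t = s
        · rw [ht, hv's]; linarith [hpos s, hpos s']
        · rw [hv'other t ht]; exact hpos t
      have hle' : ∀ t, v' t ≤ μ := by
        intro t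
        by_cases ht : t = s
        · rw [ht, hv's]; linarith
        · rw [hv'other t ht]; exact hle t
      have hmem' : ∀ t, v' t ∈ N := by
        intro t
        by_cases ht : t = s
        · rw [ht, hv's]; exact add_mem (hmem s) (hmem s')
        · rw [hv'other t ht]; exact hmem t
      have hstep : Step u v v' :=
        ⟨⟨s, s', hss', Or.inl rfl⟩, hpos', permLE_of_le_min hμ hle'⟩
      have hsum' : ∑ l, (c' l : ℝ) * v' l = x := by
        rw [sum_pair hss' (fun l => (c' l : ℝ) * v' l)]
        rw [sum_pair hss' (fun l => (c l : ℝ) * v l)] at hsum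
        have hrest : ∑ l ∈ (univ.erase s).erase s', (c' l : ℝ) * v' l
            = ∑ l ∈ (univ.erase s).erase s', (c l : ℝ) * v l := by
          apply Finset.sum_congr rfl
          intro l hl
          rw [hc'other l (hmdec l hl).2, hv'other l (hmdec l hl).1]
        rw [hrest, hc's', hc'other s hss', hv's, hv'other s' (fun h => hss' h.symm)]
        push_cast
        push_cast at hsum
        linarith
      have haeq : ∑ l, (-(c' l)).toNat = a := by
        rw [← ha]
        rw [sum_pair hss' (fun l => (-(c l)).toNat),
          sum_pair hss' (fun l => (-(c' l)).toNat)]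
        have hrest : ∑ l ∈ (univ.erase s).erase s', (-(c' l)).toNat
            = ∑ l ∈ (univ.erase s).erase s', (-(c l)).toNat := by
          apply Finset.sum_congr rfl
          intro l hl
          rw [hc'other l (hmdec l hl).2]
        rw [hrest, hc's', hc'other s hss']
        omega
      have hblt : ∑ l, (c' l).toNat < b := by
        rw [← hb]
        rw [sum_pair hss' (fun l => (c l).toNat),
          sum_pair hss' (fun l => (c' l).toNat)]
        have hrest : ∑ l ∈ (univ.erase s).erase s', (c' l).toNat
            = ∑ l ∈ (univ.erase s).erase s', (c l).toNat := by
          apply Finset.sum_congr rfl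
          intro l hl
          rw [hc'other l (hmdec l hl).2]
        rw [hrest, hc's', hc'other s hss']
        omega
      have hB' : ∀ l, c' l < 0 → 4 * v' l ≤ μ := by
        intro l hl
        exfalso
        by_cases hls' : l = s'
        · subst hls'; rw [hc's'] at hl; omega
        · rw [hc'other l hls'] at hl
          have := h2 l
          omega
      obtain ⟨w, iw, hreach, hwi, hwpos, hwle, hwmem⟩ :=
        IHb _ hblt v' c' haeq rfl hpos' hle' hB' hmem' hsum'
      exact ⟨w, iw, Relation.ReflTransGen.head hstep hreach, hwi, hwpos, hwle, hwmem⟩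

/-- Existence of an "indivisible divisor" of any positive element of a finitely
generated subgroup (submodule) of `ℝ`. -/
lemma exists_indivisible (N : Submodule ℤ ℝ) (hfg : N.FG) (γ : ℝ) (hγN : γ ∈ N)
    (hγ0 : 0 < γ) :
    ∃ x : ℝ, x ∈ N ∧ 0 < x ∧ x ≤ γ ∧
      ∀ y ∈ N, ∀ d : ℕ, 0 < d → x = d • y → d = 1 := by
  classical
  haveI : Module.Finite ℤ N := Module.Finite.iff_fg.mpr hfg
  haveI : Module.Free ℤ N := Module.free_of_finite_type_torsion_free'
  set b := Module.Free.chooseBasis ℤ N with hbdef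
  set γ' : N := ⟨γ, hγN⟩ with hγ'def
  have hγ'ne : γ' ≠ 0 := by
    intro h
    apply hγ0.ne'
    have := congrArg (Subtype.val) h
    exact this
  have hrepr : b.repr γ' ≠ 0 := fun h => hγ'ne (b.repr.injective (by simp [h]))
  obtain ⟨i₀, hi₀⟩ : ∃ i₀, b.repr γ' i₀ ≠ 0 := by
    by_contra h
    push_neg at h
    exact hrepr (Finsupp.ext h)
  set B := (b.repr γ' i₀).natAbs with hBdef
  have hB1 : 1 ≤ B := by omega
  set P : ℕ → Prop := fun d => ∃ y : ℝ, y ∈ N ∧ γ = d • y with hPdef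
  have hbound : ∀ d : ℕ, P d → d ≤ B := by
    rintro d ⟨y, hyN, hy⟩
    have hd0 : d ≠ 0 := by
      intro h
      subst h
      simp at hy
      exact hγ0.ne' hy
    set y' : N := ⟨y, hyN⟩ with hy'def
    have hsm : γ' = (d : ℤ) • y' := by
      apply Subtype.ext
      push_cast
      simpa using hy
    have hdvd : (d : ℤ) ∣ b.repr γ' i₀ := by
      rw [hsm]
      simp only [map_smul, Finsupp.smul_apply]
      exact Dvd.intro _ rfl
    have hdvd' : d ∣ B := by
      have h2 := Int.natAbs_dvd_natAbs.mpr hdvd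
      simpa using h2
    exact Nat.le_of_dvd (by omega) hdvd'
  have hP1 : P 1 := ⟨γ, hγN, by simp⟩
  set d₀ := Nat.findGreatest P B with hd₀def
  have hPd₀ : P d₀ := Nat.findGreatest_spec hB1 hP1
  have hd₀1 : 1 ≤ d₀ := Nat.le_findGreatest hB1 hP1
  obtain ⟨y, hyN, hy⟩ := hPd₀
  have hy0 : 0 < y := by
    rcases le_or_gt y 0 with h | h
    · exfalso
      have : γ ≤ 0 := by
        rw [hy, nsmul_eq_mul]
        apply mul_nonpos_of_nonneg_of_nonpos (by positivity) h
      linarith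
    · exact h
  refine ⟨y, hyN, hy0, ?_, ?_⟩
  · rw [hy, nsmul_eq_mul]
    nlinarith [(by exact_mod_cast hd₀1 : (1:ℝ) ≤ (d₀:ℝ))]
  · intro z hzN d hd hzd
    have hPd : P (d₀ * d) := by
      refine ⟨z, hzN, ?_⟩
      rw [hy, hzd, smul_smul]
    have hle2 : d₀ * d ≤ d₀ := Nat.le_findGreatest (hbound _ hPd) hPd
    have := Nat.le_of_mul_le_mul_left (by omega : d₀ * d ≤ d₀ * 1) (by omega : 0 < d₀)
    omega

/-- Euclidean shrinking of a pair of components with irrational ratio. -/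
lemma pairE (u : Fin n → ℝ) (hμu : PermLE u u) (N : Submodule ℤ ℝ)
    (i j : Fin n) (hij : i ≠ j) (ε : ℝ) (hε : 0 < ε) :
    ∀ K : ℕ, ∀ w : Fin n → ℝ,
      (∀ l, 0 < w l) → (∀ l, w l ∈ N) → PermLE w u →
      N ≤ Submodule.span ℤ (Set.range w) →
      (∀ q : ℚ, w i ≠ (q : ℝ) * w j) →
      w i + w j ≤ K * ε →
      ∃ w', Reach u w w' ∧ (∀ l, 0 < w' l) ∧ (∀ l, w' l ∈ N) ∧ PermLE w' u ∧
        N ≤ Submodule.span ℤ (Set.range w') ∧ (∀ l, w' l ≤ w l) ∧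
        (w' i < ε ∨ w' j < ε) := by
  intro K
  induction K with
  | zero =>
      intro w hpos _ _ _ _ hK
      exfalso
      have := hpos i
      have := hpos j
      simp at hK
      linarith
  | succ K IH =>
      intro w hpos hmem hperm hspan hirr hK
      by_cases hi : w i < ε
      · exact ⟨w, Relation.ReflTransGen.refl, hpos, hmem, hperm, hspan,
          fun l => le_rfl, Or.inl hi⟩
      by_cases hj : w j < ε
      · exact ⟨w, Relation.ReflTransGen.refl, hpos, hmem, hperm, hspan,
          fun l => le_rfl, Or.inr hj⟩
      push_neg at hi hj
      have hne : w i ≠ w j := by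
        intro h
        exact hirr 1 (by rw [h]; simp)
      rcases hne.lt_or_gt with hlt | hlt
      · -- w i < w j : subtract i from j
        set w₁ := Function.update w j (w j - w i) with hw₁def
        have hw₁j : w₁ j = w j - w i := Function.update_self _ _ _
        have hw₁other : ∀ l, l ≠ j → w₁ l = w l := fun l hl => Function.update_of_ne hl _ _
        have hw₁i : w₁ i = w i := hw₁other i hij
        have hpos₁ : ∀ l, 0 < w₁ l := by
          intro l
          by_cases hl : l = j
          · rw [hl, hw₁j]; linarith
          · rw [hw₁other l hl]; exact hpos l
        have hmem₁ : ∀ l, w₁ l ∈ N := by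
          intro l
          by_cases hl : l = j
          · rw [hl, hw₁j]; exact sub_mem (hmem j) (hmem i)
          · rw [hw₁other l hl]; exact hmem l
        have hperm₁ : PermLE w₁ u := permLE_update_le hperm (by linarith [hpos i])
        have hspan₁ : N ≤ Submodule.span ℤ (Set.range w₁) := by
          have hw : w j ∈ Submodule.span ℤ (Set.range w₁) := by
            have h1 : w j = w₁ j + w₁ i := by rw [hw₁j, hw₁i]; ring
            rw [h1]
            exact add_mem (mem_span_range_self' w₁ j) (mem_span_range_self' w₁ i)
          rw [hw₁def] at hw ⊢
          exact le_trans hspan (span_le_update _ hw)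
        have hirr₁ : ∀ q : ℚ, w₁ i ≠ (q : ℝ) * w₁ j := by
          intro q hq
          rw [hw₁i, hw₁j] at hq
          -- w i = q (w j - w i)  ⇒  (1+q) w i = q w j
          have h2 : (1 + (q : ℝ)) * w i = (q : ℝ) * w j := by linear_combination hq
          by_cases hq1 : (1 : ℝ) + (q : ℝ) = 0
          · rw [hq1, zero_mul] at h2
            have hqne : (q : ℝ) ≠ 0 := by
              intro h; rw [h] at hq1; norm_num at hq1
            rcases mul_eq_zero.mp h2.symm with h | h
            · exact hqne h
            · exact (hpos j).ne' h
          · apply hirr (q / (1 + q))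
            push_cast
            rw [div_mul_eq_mul_div, eq_div_iff hq1]
            linear_combination h2
        have hstep : Step u w w₁ :=
          ⟨⟨j, i, fun h => hij h.symm, Or.inr (Or.inl rfl)⟩, hpos₁, hperm₁⟩
        have hK₁ : w₁ i + w₁ j ≤ K * ε := by
          rw [hw₁i, hw₁j]
          push_cast at hK ⊢
          linarith
        obtain ⟨w', hreach, hp, hm, hpm, hsp, hmono, hsmall⟩ :=
          IH w₁ hpos₁ hmem₁ hperm₁ hspan₁ hirr₁ hK₁
        refine ⟨w', Relation.ReflTransGen.head hstep hreach, hp, hm, hpm, hsp, ?_, hsmall⟩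
        intro l
        by_cases hl : l = j
        · rw [hl]
          calc w' j ≤ w₁ j := hmono j
          _ ≤ w j := by rw [hw₁j]; linarith [hpos i]
        · rw [← hw₁other l hl]; exact hmono l
      · -- w j < w i : subtract j from i
        set w₁ := Function.update w i (w i - w j) with hw₁def
        have hw₁i : w₁ i = w i - w j := Function.update_self _ _ _
        have hw₁other : ∀ l, l ≠ i → w₁ l = w l := fun l hl => Function.update_of_ne hl _ _
        have hw₁j : w₁ j = w j := hw₁other j (fun h => hij h.symm)
        have hpos₁ : ∀ l, 0 < w₁ l := by
          intro l
          by_cases hl : l = i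
          · rw [hl, hw₁i]; linarith
          · rw [hw₁other l hl]; exact hpos l
        have hmem₁ : ∀ l, w₁ l ∈ N := by
          intro l
          by_cases hl : l = i
          · rw [hl, hw₁i]; exact sub_mem (hmem i) (hmem j)
          · rw [hw₁other l hl]; exact hmem l
        have hperm₁ : PermLE w₁ u := permLE_update_le hperm (by linarith [hpos j])
        have hspan₁ : N ≤ Submodule.span ℤ (Set.range w₁) := by
          have hw : w i ∈ Submodule.span ℤ (Set.range w₁) := by
            have h1 : w i = w₁ i + w₁ j := by rw [hw₁i, hw₁j]; ring
            rw [h1]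
            exact add_mem (mem_span_range_self' w₁ i) (mem_span_range_self' w₁ j)
          rw [hw₁def] at hw ⊢
          exact le_trans hspan (span_le_update _ hw)
        have hirr₁ : ∀ q : ℚ, w₁ i ≠ (q : ℝ) * w₁ j := by
          intro q hq
          rw [hw₁i, hw₁j] at hq
          apply hirr (q + 1)
          push_cast
          linarith [hq]
        have hstep : Step u w w₁ :=
          ⟨⟨i, j, hij, Or.inr (Or.inl rfl)⟩, hpos₁, hperm₁⟩
        have hK₁ : w₁ i + w₁ j ≤ K * ε := by
          rw [hw₁i, hw₁j]
          push_cast at hK ⊢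
          linarith
        obtain ⟨w', hreach, hp, hm, hpm, hsp, hmono, hsmall⟩ :=
          IH w₁ hpos₁ hmem₁ hperm₁ hspan₁ hirr₁ hK₁
        refine ⟨w', Relation.ReflTransGen.head hstep hreach, hp, hm, hpm, hsp, ?_, hsmall⟩
        intro l
        by_cases hl : l = i
        · rw [hl]
          calc w' i ≤ w₁ i := hmono i
          _ ≤ w i := by rw [hw₁i]; linarith [hpos j]
        · rw [← hw₁other l hl]; exact hmono l

/-- Reduce one component below `ε` by repeatedly subtracting a fixed small
component `t`. -/
lemma modred (u : Fin n → ℝ) (N : Submodule ℤ ℝ) (t l : Fin n) (htl : t ≠ l)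
    (ε : ℝ) (hε : 0 < ε) :
    ∀ K : ℕ, ∀ w : Fin n → ℝ,
      (∀ m, 0 < w m) → (∀ m, w m ∈ N) → PermLE w u →
      N ≤ Submodule.span ℤ (Set.range w) →
      w t < ε →
      w l ≤ K * (w t) + ε →
      ∃ w', Reach u w w' ∧ (∀ m, 0 < w' m) ∧ (∀ m, w' m ∈ N) ∧ PermLE w' u ∧
        N ≤ Submodule.span ℤ (Set.range w') ∧ (∀ m, m ≠ l → w' m = w m) ∧
        w' l ≤ ε := by
  intro K
  induction K with
  | zero =>
      intro w hpos hmem hperm hspan _ hK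
      refine ⟨w, Relation.ReflTransGen.refl, hpos, hmem, hperm, hspan,
        fun m _ => rfl, ?_⟩
      simpa using hK
  | succ K IH =>
      intro w hpos hmem hperm hspan ht hK
      by_cases hl : w l ≤ ε
      · exact ⟨w, Relation.ReflTransGen.refl, hpos, hmem, hperm, hspan,
          fun m _ => rfl, hl⟩
      push_neg at hl
      set w₁ := Function.update w l (w l - w t) with hw₁def
      have hw₁l : w₁ l = w l - w t := Function.update_self _ _ _
      have hw₁other : ∀ m, m ≠ l → w₁ m = w m := fun m hm => Function.update_of_ne hm _ _
      have hw₁t : w₁ t = w t := hw₁other t htl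
      have hpos₁ : ∀ m, 0 < w₁ m := by
        intro m
        by_cases hm : m = l
        · rw [hm, hw₁l]; linarith
        · rw [hw₁other m hm]; exact hpos m
      have hmem₁ : ∀ m, w₁ m ∈ N := by
        intro m
        by_cases hm : m = l
        · rw [hm, hw₁l]; exact sub_mem (hmem l) (hmem t)
        · rw [hw₁other m hm]; exact hmem m
      have hperm₁ : PermLE w₁ u := permLE_update_le hperm (by linarith [hpos t])
      have hspan₁ : N ≤ Submodule.span ℤ (Set.range w₁) := by
        have hw : w l ∈ Submodule.span ℤ (Set.range w₁) := by
          have h1 : w l = w₁ l + w₁ t := by rw [hw₁l, hw₁t]; ring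
          rw [h1]
          exact add_mem (mem_span_range_self' w₁ l) (mem_span_range_self' w₁ t)
        rw [hw₁def] at hw ⊢
        exact le_trans hspan (span_le_update _ hw)
      have hstep : Step u w w₁ :=
        ⟨⟨l, t, fun h => htl h.symm, Or.inr (Or.inl rfl)⟩, hpos₁, hperm₁⟩
      have hK₁ : w₁ l ≤ K * (w₁ t) + ε := by
        rw [hw₁l, hw₁t]
        push_cast at hK ⊢
        linarith
      obtain ⟨w', hreach, hp, hm, hpm, hsp, hother, hfin⟩ :=
        IH w₁ hpos₁ hmem₁ hperm₁ hspan₁ (by rw [hw₁t]; exact ht) hK₁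
      refine ⟨w', Relation.ReflTransGen.head hstep hreach, hp, hm, hpm, hsp, ?_, hfin⟩
      intro m hm2
      rw [hother m hm2, hw₁other m hm2]

/-- Subtractive Euclid in the cyclic case: all components are positive integer
multiples of `g`; reach a constant vector. -/
lemma euclidR (u : Fin n → ℝ) (hn : 0 < n) (N : Submodule ℤ ℝ) (g : ℝ) (hg : 0 < g) :
    ∀ M : ℕ, ∀ w : Fin n → ℝ, ∀ m : Fin n → ℤ,
      (∀ i, 0 < m i) → (∀ i, w i = m i • g) → (∑ i, (m i).toNat) = M →
      (∀ i, w i ∈ N) → PermLE w u → N ≤ Submodule.span ℤ (Set.range w) →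
      ∃ w' : Fin n → ℝ, ∃ e : ℝ, Reach u w w' ∧ (∀ i, w' i = e) ∧ 0 < e ∧ e ∈ N ∧
        N ≤ Submodule.span ℤ (Set.range w') ∧ PermLE w' u := by
  intro M
  induction M using Nat.strong_induction_on with
  | _ M IH =>
  intro w m hm hwm hM hmem hperm hspan
  have hpos : ∀ i, 0 < w i := by
    intro i
    rw [hwm i, zsmul_eq_mul]
    have : (0:ℝ) < (m i : ℝ) := by exact_mod_cast hm i
    positivity
  by_cases hne : ∃ i j, w j < w i
  · obtain ⟨i, j, hij2⟩ := hne
    have hij : i ≠ j := by intro h; rw [h] at hij2; exact lt_irrefl _ hij2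
    set w₁ := Function.update w i (w i - w j) with hw₁def
    have hw₁i : w₁ i = w i - w j := Function.update_self _ _ _
    have hw₁other : ∀ l, l ≠ i → w₁ l = w l := fun l hl => Function.update_of_ne hl _ _
    set m₁ := Function.update m i (m i - m j) with hm₁def
    have hm₁i : m₁ i = m i - m j := Function.update_self _ _ _
    have hm₁other : ∀ l, l ≠ i → m₁ l = m l := fun l hl => Function.update_of_ne hl _ _
    have hm₁pos : ∀ l, 0 < m₁ l := by
      intro l
      by_cases hl : l = i
      · rw [hl, hm₁i]
        -- w j < w i gives m j < m i
        have : (m j : ℝ) * g < (m i : ℝ) * g := by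
          rw [← zsmul_eq_mul, ← zsmul_eq_mul, ← hwm i, ← hwm j]; exact hij2
        have : (m j : ℝ) < (m i : ℝ) := lt_of_mul_lt_mul_right this hg.le
        have : m j < m i := by exact_mod_cast this
        omega
      · rw [hm₁other l hl]; exact hm l
    have hw₁m : ∀ l, w₁ l = m₁ l • g := by
      intro l
      by_cases hl : l = i
      · rw [hl, hw₁i, hm₁i, hwm i, hwm j]
        simp only [zsmul_eq_mul]
        push_cast
        ring
      · rw [hw₁other l hl, hm₁other l hl]; exact hwm l
    have hpos₁ : ∀ l, 0 < w₁ l := by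
      intro l
      by_cases hl : l = i
      · rw [hl, hw₁i]; linarith
      · rw [hw₁other l hl]; exact hpos l
    have hmem₁ : ∀ l, w₁ l ∈ N := by
      intro l
      by_cases hl : l = i
      · rw [hl, hw₁i]; exact sub_mem (hmem i) (hmem j)
      · rw [hw₁other l hl]; exact hmem l
    have hperm₁ : PermLE w₁ u := permLE_update_le hperm (by linarith [hpos j])
    have hspan₁ : N ≤ Submodule.span ℤ (Set.range w₁) := by
      have hw : w i ∈ Submodule.span ℤ (Set.range w₁) := by
        have h1 : w i = w₁ i + w₁ j := by
          rw [hw₁i, hw₁other j (fun h => hij h.symm)]; ring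
        rw [h1]
        exact add_mem (mem_span_range_self' w₁ i) (mem_span_range_self' w₁ j)
      rw [hw₁def] at hw ⊢
      exact le_trans hspan (span_le_update _ hw)
    have hstep : Step u w w₁ :=
      ⟨⟨i, j, hij, Or.inr (Or.inl rfl)⟩, hpos₁, hperm₁⟩
    have hMlt : ∑ l, (m₁ l).toNat < M := by
      rw [← hM]
      rw [Finset.sum_eq_add_sum_sdiff_singleton_of_mem (Finset.mem_univ i) (fun l => (m l).toNat),
        Finset.sum_eq_add_sum_sdiff_singleton_of_mem (Finset.mem_univ i) (fun l => (m₁ l).toNat)]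
      have hrest : ∑ l ∈ univ \ {i}, (m₁ l).toNat = ∑ l ∈ univ \ {i}, (m l).toNat := by
        apply Finset.sum_congr rfl
        intro l hl
        have : l ≠ i := by
          rcases Finset.mem_sdiff.mp hl with ⟨_, h⟩
          simpa using h
        rw [hm₁other l this]
      rw [hrest, hm₁i]
      have h1 := hm i
      have h2 := hm j
      have h3 := hm₁pos i
      rw [hm₁i] at h3
      omega
    obtain ⟨w', e, hreach, heq, he, heN, hsp, hpm⟩ :=
      IH _ hMlt w₁ m₁ hm₁pos hw₁m rfl hmem₁ hperm₁ hspan₁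
    exact ⟨w', e, Relation.ReflTransGen.head hstep hreach, heq, he, heN, hsp, hpm⟩
  · push_neg at hne
    have hall : ∀ i j, w i = w j := by
      intro i j
      exact le_antisymm (hne i j) (hne j i)
    set i₀ : Fin n := ⟨0, hn⟩ with hi₀def
    exact ⟨w, w i₀, Relation.ReflTransGen.refl, fun i => hall i i₀, hpos i₀,
      hmem i₀, hspan, hperm⟩

end CSAux

/-- **Lemma B.7 of Chekanov–Schlenk.** From any `u ∈ ℝ₊ᵏ` there is a low admissible
path to a vector `u⁺ ∈ ℝ₊ᵏ` with `u⁺ ≤ u`, whose last component is the smallest one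
and is indivisible (primitive) in the additive subgroup of `ℝ` generated by the
components of `u`. -/
theorem lowAdmPath_to_indivisible
    (k : ℕ) (u : Fin (k + 1) → ℝ) (hu : ∀ i, 0 < u i) :
    ∃ uplus : Fin (k + 1) → ℝ,
      (∀ i, 0 < uplus i) ∧
      LowAdmPath u uplus ∧
      PermLE uplus u ∧
      (∀ j, uplus (Fin.last k) ≤ uplus j) ∧
      uplus (Fin.last k) ∈ AddSubgroup.closure (Set.range u) ∧
      (∀ y ∈ AddSubgroup.closure (Set.range u), ∀ n : ℕ, 0 < n →
        uplus (Fin.last k) = n • y → n = 1) := by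
  classical
  set Γ := AddSubgroup.closure (Set.range u) with hΓ
  set N := Submodule.span ℤ (Set.range u) with hN
  have hNΓ : ∀ z : ℝ, z ∈ N ↔ z ∈ Γ := by
    intro z
    rw [hΓ, ← Submodule.span_int_eq_addSubgroupClosure, hN]
    rfl
  have huN : ∀ i, u i ∈ N := fun i => Submodule.subset_span (Set.mem_range_self i)
  obtain ⟨i₀, hi₀⟩ : ∃ i₀, ∀ i, u i₀ ≤ u i := by
    obtain ⟨i₀, _, h⟩ := Finset.exists_min_image Finset.univ u ⟨0, Finset.mem_univ 0⟩
    exact ⟨i₀, fun i => h i (Finset.mem_univ i)⟩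
  set μ := u i₀ with hμdef
  have hμpos : 0 < μ := hu i₀
  have hμ : ∀ i, μ ≤ u i := hi₀
  rcases AddSubgroup.dense_or_cyclic Γ with hdense | ⟨a, ha⟩
  · -- DENSE CASE
    -- an irrational pair exists
    obtain ⟨ip, jp, hipjp⟩ : ∃ i j : Fin (k+1), ∀ q : ℚ, u i ≠ (q : ℝ) * u j := by
      by_contra hcon
      push_neg at hcon
      choose qf hqf using fun i => hcon i i₀
      set D : ℕ := ∏ i, (qf i).den with hD
      have hD0 : 0 < D := Finset.prod_pos (fun i _ => (qf i).pos)
      have hD0' : (0:ℝ) < (D:ℝ) := by exact_mod_cast hD0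
      set β := u i₀ / D with hβ
      have hβ0 : 0 < β := by positivity
      have hsub : ∀ i, u i ∈ Submodule.span ℤ {β} := by
        intro i
        refine Submodule.mem_span_singleton.mpr
          ⟨(qf i).num * ((D / (qf i).den : ℕ) : ℤ), ?_⟩
        have hdvd : (qf i).den ∣ D := Finset.dvd_prod_of_mem _ (Finset.mem_univ i)
        have hden0 : ((qf i).den : ℝ) ≠ 0 := by
          exact_mod_cast (qf i).den_nz
        have hcast : (((D / (qf i).den : ℕ)) : ℝ) = (D : ℝ) / ((qf i).den : ℝ) :=
          Nat.cast_div hdvd hden0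
        rw [zsmul_eq_mul, Int.cast_mul, Int.cast_natCast, hcast, hqf i, Rat.cast_def, hβ]
        field_simp
      have hNβ : N ≤ Submodule.span ℤ {β} := by
        rw [hN]
        apply Submodule.span_le.mpr
        rintro _ ⟨i, rfl⟩
        exact hsub i
      obtain ⟨γ, hγΓ, hγIoo⟩ := hdense.exists_mem_open isOpen_Ioo
        (⟨β/2, by constructor <;> nlinarith⟩ : (Set.Ioo (0:ℝ) β).Nonempty)
      obtain ⟨t, ht⟩ := Submodule.mem_span_singleton.mp (hNβ ((hNΓ γ).mpr hγΓ))
      rw [zsmul_eq_mul] at ht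
      have h1 : 0 < (t:ℝ) * β := ht.symm ▸ hγIoo.1
      have h2 : (t:ℝ) * β < β := ht.symm ▸ hγIoo.2
      have ht0 : 0 < (t:ℝ) := by nlinarith
      have ht1 : (1:ℝ) ≤ (t:ℝ) := by
        have : 0 < t := by exact_mod_cast ht0
        exact_mod_cast this
      nlinarith
    have hipjpne : ip ≠ jp := by
      intro h
      exact hipjp 1 (by rw [h]; norm_num)
    -- a small indivisible x
    obtain ⟨γ, hγΓ, hγIoo⟩ := hdense.exists_mem_open isOpen_Ioo
      (⟨μ/8, by constructor <;> nlinarith⟩ : (Set.Ioo (0:ℝ) (μ/4)).Nonempty)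
    obtain ⟨x, hxN, hx0, hxle, hxind⟩ :=
      CSAux.exists_indivisible N (by rw [hN]; exact Submodule.fg_span (Set.finite_range u))
        γ ((hNΓ γ).mpr hγΓ) hγIoo.1
    have hxμ4 : x < μ/4 := lt_of_le_of_lt hxle hγIoo.2
    have h2x : 2 * x ≤ μ := by linarith
    -- Phase 1 : shrink the irrational pair
    obtain ⟨K1, hK1⟩ := exists_nat_ge ((u ip + u jp) / (μ/4))
    have hK1' : u ip + u jp ≤ (K1 : ℝ) * (μ/4) := by
      rw [div_le_iff₀ (by positivity)] at hK1
      linarith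
    obtain ⟨w₁, hre1, hpos1, hmem1, hperm1, hspan1, hmono1, hsmall1⟩ :=
      CSAux.pairE u (CSAux.permLE_refl u) N ip jp hipjpne (μ/4) (by positivity) K1 u
        hu huN (CSAux.permLE_refl u) (le_of_eq hN) hipjp hK1'
    obtain ⟨t, htval⟩ : ∃ t, w₁ t < μ/4 := by
      rcases hsmall1 with h | h
      · exact ⟨ip, h⟩
      · exact ⟨jp, h⟩
    -- Phase 2 : reduce all other components below μ/4
    have hred : ∀ s : ℕ, s ≤ k + 1 →
        ∃ w₂, CSAux.Reach u w₁ w₂ ∧ (∀ m, 0 < w₂ m) ∧ (∀ m, w₂ m ∈ N) ∧ PermLE w₂ u ∧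
          N ≤ Submodule.span ℤ (Set.range w₂) ∧ w₂ t = w₁ t ∧
          (∀ m : Fin (k+1), (m : ℕ) < s → w₂ m < μ/4 ∨ w₂ m ≤ μ/4) := by
      intro s
      induction s with
      | zero =>
          intro _
          exact ⟨w₁, Relation.ReflTransGen.refl, hpos1, hmem1, hperm1, hspan1, rfl,
            fun m hm => absurd hm (by omega)⟩
      | succ s IH =>
          intro hs
          obtain ⟨w₂, hre, hp, hm, hpm, hsp, htv, hdone⟩ := IH (by omega)
          set l : Fin (k+1) := ⟨s, hs⟩ with hldef
          have hlval : (l : ℕ) = s := rfl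
          by_cases hlt : l = t
          · refine ⟨w₂, hre, hp, hm, hpm, hsp, htv, ?_⟩
            intro m hm2
            rcases Nat.lt_or_ge (m : ℕ) s with h | h
            · exact hdone m h
            · have : m = l := Fin.ext (by omega)
              rw [this, hlt]
              left
              rw [htv]
              exact htval
          · obtain ⟨K2, hK2⟩ := exists_nat_ge (w₂ l / (w₂ t))
            have hbound : w₂ l ≤ (K2 : ℝ) * (w₂ t) + μ/4 := by
              rw [div_le_iff₀ (hp t)] at hK2
              linarith
            have htne : t ≠ l := fun h => hlt h.symm
            obtain ⟨w₃, hre3, hp3, hm3, hpm3, hsp3, hother3, hfin3⟩ :=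
              CSAux.modred u N t l htne (μ/4) (by positivity) K2 w₂ hp hm hpm hsp
                (by rw [htv]; exact htval) hbound
            refine ⟨w₃, hre.trans hre3, hp3, hm3, hpm3, hsp3, ?_, ?_⟩
            · rw [hother3 t htne, htv]
            · intro m hm2
              rcases Nat.lt_or_ge (m : ℕ) s with h | h
              · have hml : m ≠ l := by
                  intro hcon
                  rw [hcon] at h
                  simp [hldef] at h
                rw [hother3 m hml]
                exact hdone m h
              · have : m = l := Fin.ext (by omega)
                rw [this]
                right
                exact hfin3
    obtain ⟨w₂, hre2, hp2, hm2, hpm2, hsp2, _, hdone2⟩ := hred (k+1) le_rfl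
    have hall2 : ∀ m, w₂ m ≤ μ/4 := by
      intro m
      rcases hdone2 m m.isLt with h | h
      · exact h.le
      · exact h
    have hle2 : ∀ i, w₂ i ≤ μ := fun i => by linarith [hall2 i]
    -- representation of x over w₂
    obtain ⟨c, hc⟩ := (Submodule.mem_span_range_iff_exists_fun ℤ).mp (hsp2 hxN)
    have hc' : ∑ l, (c l : ℝ) * w₂ l = x := by
      rw [← hc]
      apply Finset.sum_congr rfl
      intro l _
      rw [zsmul_eq_mul]
    -- Phase 3 : the core extraction
    obtain ⟨w₃, iw, hre3, hwx, hp3, hl3, hmN3⟩ :=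
      CSAux.core u μ hμ N x hx0 h2x hxind _ _ w₂ c rfl rfl hp2 hle2
        (fun i _ => by nlinarith [hall2 i]) hm2 hc'
    -- Phase 4 : swap the x-slot into the last position
    obtain ⟨w₄, hre4, hw4last, hp4, hl4⟩ :
        ∃ w₄ : Fin (k+1) → ℝ, CSAux.Reach u w₃ w₄ ∧ w₄ (Fin.last k) = x ∧
          (∀ i, 0 < w₄ i) ∧ (∀ i, w₄ i ≤ μ) := by
      by_cases hiw : iw = Fin.last k
      · exact ⟨w₃, Relation.ReflTransGen.refl, hiw ▸ hwx, hp3, hl3⟩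
      · refine ⟨w₃ ∘ Equiv.swap iw (Fin.last k),
          Relation.ReflTransGen.single
            ⟨⟨iw, Fin.last k, hiw, Or.inr (Or.inr rfl)⟩,
              fun i => hp3 _, CSAux.permLE_of_le_min hμ (fun i => hl3 _)⟩, ?_,
          fun i => hp3 _, fun i => hl3 _⟩
        show w₃ (Equiv.swap iw (Fin.last k) (Fin.last k)) = x
        rw [Equiv.swap_apply_right]
        exact hwx
    -- Phase 5 : raise all other components above x
    have hraise : ∀ s : ℕ, s ≤ k + 1 →
        ∃ w₅ : Fin (k+1) → ℝ, CSAux.Reach u w₄ w₅ ∧ w₅ (Fin.last k) = x ∧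
          (∀ i, 0 < w₅ i) ∧ (∀ i, w₅ i ≤ μ) ∧
          (∀ j : Fin (k+1), (j : ℕ) < s → x ≤ w₅ j) := by
      intro s
      induction s with
      | zero =>
          intro _
          exact ⟨w₄, Relation.ReflTransGen.refl, hw4last, hp4, hl4,
            fun j hj => absurd hj (by omega)⟩
      | succ s IH =>
          intro hs
          obtain ⟨w₅, hre5, hlast5, hp5, hl5, hge5⟩ := IH (by omega)
          set j : Fin (k+1) := ⟨s, hs⟩ with hjdef
          have hjval : (j : ℕ) = s := rfl
          by_cases hxle : x ≤ w₅ j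
          · refine ⟨w₅, hre5, hlast5, hp5, hl5, ?_⟩
            intro j' hj'
            rcases Nat.lt_or_ge (j' : ℕ) s with h | h
            · exact hge5 j' h
            · have : j' = j := Fin.ext (by omega)
              rw [this]
              exact hxle
          · push_neg at hxle
            have hjlast : j ≠ Fin.last k := by
              intro h
              rw [h, hlast5] at hxle
              exact lt_irrefl x hxle
            set w₆ := Function.update w₅ j (w₅ j + w₅ (Fin.last k)) with hw₆def
            have hw₆j : w₆ j = w₅ j + x := by
              rw [hw₆def, Function.update_self, hlast5]
            have hw₆other : ∀ l, l ≠ j → w₆ l = w₅ l := fun l hl =>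
              Function.update_of_ne hl _ _
            have hp6 : ∀ i, 0 < w₆ i := by
              intro i
              by_cases hi : i = j
              · rw [hi, hw₆j]; linarith [hp5 j]
              · rw [hw₆other i hi]; exact hp5 i
            have hl6 : ∀ i, w₆ i ≤ μ := by
              intro i
              by_cases hi : i = j
              · rw [hi, hw₆j]; linarith [hxle]
              · rw [hw₆other i hi]; exact hl5 i
            have hstep : CSAux.Step u w₅ w₆ :=
              ⟨⟨j, Fin.last k, hjlast, Or.inl rfl⟩, hp6,
                CSAux.permLE_of_le_min hμ hl6⟩
            refine ⟨w₆, Relation.ReflTransGen.tail hre5 hstep,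
              by rw [hw₆other _ (Ne.symm hjlast)]; exact hlast5, hp6, hl6, ?_⟩
            intro j' hj'
            rcases Nat.lt_or_ge (j' : ℕ) s with h | h
            · have hj'j : j' ≠ j := by
                intro hcon
                rw [hcon] at h
                simp [hjdef] at h
              rw [hw₆other j' hj'j]
              exact hge5 j' h
            · have hj'j : j' = j := Fin.ext (by omega)
              rw [hj'j, hw₆j]
              linarith [hp5 j]
    obtain ⟨uplus, hre6, huplast, huppos, huple, hupge⟩ := hraise (k+1) le_rfl
    have hreachall : CSAux.Reach u u uplus :=
      ((hre1.trans hre2).trans hre3).trans (hre4.trans hre6)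
    obtain ⟨l, f, hf0, hfl, hfstep, hfpos, hfperm⟩ :=
      CSAux.reach_to_path hreachall hu (CSAux.permLE_refl u)
    refine ⟨uplus, huppos, ⟨l, f, hf0, hfl, hfstep, hfpos,
        fun s hs => Or.inl (hfperm s hs)⟩, CSAux.permLE_of_le_min hμ huple, ?_, ?_, ?_⟩
    · intro j
      rw [huplast]
      exact hupge j (j.isLt)
    · rw [huplast]
      exact (hNΓ x).mp hxN
    · intro y hyΓ d hd hyd
      exact hxind y ((hNΓ y).mpr hyΓ) d hd (huplast ▸ hyd)
  · -- CYCLIC CASE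
    have hu0Γ : u i₀ ∈ Γ := (hNΓ _).mp (huN i₀)
    have hane : a ≠ 0 := by
      intro h
      rw [ha, h] at hu0Γ
      rw [AddSubgroup.mem_closure_singleton] at hu0Γ
      obtain ⟨t, ht⟩ := hu0Γ
      simp at ht
      exact (hu i₀).ne' ht.symm
    set g := |a| with hgdef
    have hg0 : 0 < g := abs_pos.mpr hane
    have hmemg : ∀ z : ℝ, z ∈ Γ ↔ ∃ t : ℤ, t • g = z := by
      intro z
      rw [ha, AddSubgroup.mem_closure_singleton]
      rcases abs_cases a with ⟨h1, _⟩ | ⟨h1, _⟩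
      · rw [hgdef, h1]
      · rw [hgdef, h1]
        constructor
        · rintro ⟨t, ht⟩; exact ⟨-t, by rw [← ht]; rw [neg_zsmul, zsmul_neg, neg_neg]⟩
        · rintro ⟨t, ht⟩; exact ⟨-t, by rw [← ht]; rw [neg_zsmul, zsmul_neg]⟩
    have hmall : ∀ i, ∃ t : ℤ, 0 < t ∧ u i = t • g := by
      intro i
      obtain ⟨t, ht⟩ := (hmemg (u i)).mp ((hNΓ _).mp (huN i))
      refine ⟨t, ?_, ht.symm⟩
      by_contra hcon
      push_neg at hcon
      have : t • g ≤ 0 := by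
        rw [zsmul_eq_mul]
        apply mul_nonpos_of_nonpos_of_nonneg _ hg0.le
        exact_mod_cast hcon
      linarith [ht.symm ▸ hu i]
    choose mfun hmpos hmval using hmall
    obtain ⟨w', e, hre, heq, he0, heN, hsp', hpm'⟩ :=
      CSAux.euclidR u (by omega) N g hg0 _ u mfun hmpos hmval rfl huN
        (CSAux.permLE_refl u) (le_of_eq hN)
    obtain ⟨l, f, hf0, hfl, hfstep, hfpos, hfperm⟩ :=
      CSAux.reach_to_path hre hu (CSAux.permLE_refl u)
    have hw'pos : ∀ i, 0 < w' i := fun i => by rw [heq i]; exact he0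
    refine ⟨w', hw'pos, ⟨l, f, hf0, hfl, hfstep, hfpos,
        fun s hs => Or.inl (hfperm s hs)⟩, hpm', ?_, ?_, ?_⟩
    · intro j
      rw [heq (Fin.last k), heq j]
    · rw [heq (Fin.last k)]
      exact (hNΓ e).mp heN
    · intro y hyΓ d hd hyd
      have hy2 : y ∈ Submodule.span ℤ {e} := by
        have hsub : Submodule.span ℤ (Set.range w') ≤ Submodule.span ℤ {e} := by
          apply Submodule.span_le.mpr
          rintro _ ⟨l', rfl⟩
          rw [heq l']
          exact Submodule.mem_span_singleton_self e
        exact hsub (hsp' ((hNΓ y).mpr hyΓ))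
      obtain ⟨t, ht⟩ := Submodule.mem_span_singleton.mp hy2
      rw [heq (Fin.last k)] at hyd
      have he2 : e = ((d : ℤ) * t) • e := by
        conv_lhs => rw [hyd]
        rw [← ht, mul_smul, natCast_zsmul]
      have ht1 : (d : ℤ) * t = 1 := by
        have h3 : (((d : ℤ) * t : ℤ) : ℝ) * e = 1 * e := by
          rw [← zsmul_eq_mul]
          rw [← he2]
          ring
        have := mul_right_cancel₀ he0.ne' h3
        exact_mod_cast this
      have hdvd : (d : ℤ) ∣ 1 := ⟨t, ht1.symm⟩
      have : d ∣ 1 := by exact_mod_cast hdvd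
      exact Nat.dvd_one.mp this
end

section
/- Define Ψ : W → ℂ², where W = {(z₁,z₂) ∈ ℂ² : |z₁| < |z₂|}, by Ψ(z₁,z₂) = (z₁ z₂/|z₂|, z₂ √(|z₂|² − |z₁|²)/|z₂|). Then Ψ is an injective map whose image is ℂ² ∖ {z₂ = 0}, and Ψ preserves the standard symplectic form ω₂ = dx₁∧dy₁ + dx₂∧dy₂. -/
open Complex

noncomputable def Psi : ℂ × ℂ → ℂ × ℂ := fun p =>
        (p.1 * p.2 / (‖p.2‖ : ℂ),
         p.2 * (Real.sqrt ((‖p.2‖) ^ 2 - (‖p.1‖) ^ 2) : ℂ)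
           / (‖p.2‖ : ℂ))

lemma psi_eq : Psi = fun p : ℂ × ℂ =>
    ((Real.sqrt (p.2.re*p.2.re+p.2.im*p.2.im))⁻¹ • (p.1*p.2),
     (Real.sqrt (p.2.re*p.2.re+p.2.im*p.2.im))⁻¹ •
       ((Real.sqrt ((p.2.re*p.2.re+p.2.im*p.2.im) - (p.1.re*p.1.re+p.1.im*p.1.im))) • p.2)) := by
  funext p
  have h2 : ((‖p.2‖)^2 - (‖p.1‖)^2)
      = (p.2.re*p.2.re+p.2.im*p.2.im) - (p.1.re*p.1.re+p.1.im*p.1.im) := by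
    rw [Complex.sq_norm, Complex.sq_norm, Complex.normSq_apply, Complex.normSq_apply]
  have h3 : ‖p.2‖ = Real.sqrt (p.2.re*p.2.re+p.2.im*p.2.im) := by
    rw [Complex.norm_def, Complex.normSq_apply]
  refine Prod.ext ?_ ?_
  · simp only [Psi]
    simp only [h3, div_eq_mul_inv, Complex.real_smul, Complex.ofReal_inv]
    ring
  · simp only [Psi]
    rw [h2]
    simp only [h3, div_eq_mul_inv, Complex.real_smul, Complex.ofReal_inv]
    ring

set_option maxHeartbeats 1000000 in
lemma fderiv_psi (a b : ℂ) (hb2 : 0 < b.re*b.re+b.im*b.im)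
    (hd : 0 < (b.re*b.re+b.im*b.im) - (a.re*a.re+a.im*a.im)) (v : ℂ × ℂ) :
    fderiv ℝ Psi (a,b) v =
      ((v.1*b*((b.re*b.re+b.im*b.im : ℝ):ℂ) + a*v.2*((b.re*b.re+b.im*b.im : ℝ):ℂ)
          - a*b*((b.re*v.2.re+b.im*v.2.im : ℝ):ℂ))
        / (((b.re*b.re+b.im*b.im : ℝ):ℂ) * ((Real.sqrt (b.re*b.re+b.im*b.im) : ℝ):ℂ)),
       (v.2*(((b.re*b.re+b.im*b.im) - (a.re*a.re+a.im*a.im) : ℝ):ℂ)*((b.re*b.re+b.im*b.im : ℝ):ℂ)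
          + b*((b.re*b.re+b.im*b.im : ℝ):ℂ)*(((b.re*v.2.re+b.im*v.2.im) - (a.re*v.1.re+a.im*v.1.im) : ℝ):ℂ)
          - b*(((b.re*b.re+b.im*b.im) - (a.re*a.re+a.im*a.im) : ℝ):ℂ)*((b.re*v.2.re+b.im*v.2.im : ℝ):ℂ))
        / ((((b.re*b.re+b.im*b.im : ℝ):ℂ) * ((Real.sqrt (b.re*b.re+b.im*b.im) : ℝ):ℂ))
            * ((Real.sqrt ((b.re*b.re+b.im*b.im) - (a.re*a.re+a.im*a.im)) : ℝ):ℂ))) := by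
  set p : ℂ × ℂ := (a, b) with hp
  have hb2' : 0 < p.2.re*p.2.re+p.2.im*p.2.im := hb2
  have hd' : 0 < (p.2.re*p.2.re+p.2.im*p.2.im) - (p.1.re*p.1.re+p.1.im*p.1.im) := hd
  have hr0 : Real.sqrt (p.2.re*p.2.re+p.2.im*p.2.im) ≠ 0 := by positivity
  have hN2 := ((Complex.reCLM.comp (ContinuousLinearMap.snd ℝ ℂ ℂ)).hasFDerivAt (x := p)).mul
      ((Complex.reCLM.comp (ContinuousLinearMap.snd ℝ ℂ ℂ)).hasFDerivAt) |>.add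
      (((Complex.imCLM.comp (ContinuousLinearMap.snd ℝ ℂ ℂ)).hasFDerivAt).mul
      ((Complex.imCLM.comp (ContinuousLinearMap.snd ℝ ℂ ℂ)).hasFDerivAt))
  have hN1 := ((Complex.reCLM.comp (ContinuousLinearMap.fst ℝ ℂ ℂ)).hasFDerivAt (x := p)).mul
      ((Complex.reCLM.comp (ContinuousLinearMap.fst ℝ ℂ ℂ)).hasFDerivAt) |>.add
      (((Complex.imCLM.comp (ContinuousLinearMap.fst ℝ ℂ ℂ)).hasFDerivAt).mul
      ((Complex.imCLM.comp (ContinuousLinearMap.fst ℝ ℂ ℂ)).hasFDerivAt))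
  simp only [ContinuousLinearMap.comp_apply, ContinuousLinearMap.coe_fst',
    ContinuousLinearMap.coe_snd', Complex.reCLM_apply, Complex.imCLM_apply] at hN2 hN1
  have hr := hN2.sqrt (ne_of_gt hb2')
  have hrinv := (hasDerivAt_inv hr0).comp_hasFDerivAt p hr
  simp only [Function.comp_def] at hrinv
  have hmul := (hasFDerivAt_fst (𝕜 := ℝ) (p := p) (E := ℂ) (F := ℂ)).mul hasFDerivAt_snd
  have hc1 := hrinv.smul hmul
  have hs := (hN2.sub hN1).sqrt (ne_of_gt hd')
  have hin := hs.smul (hasFDerivAt_snd (𝕜 := ℝ) (p := p) (E := ℂ) (F := ℂ))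
  have hc2 := hrinv.smul hin
  have hF := hc1.prodMk hc2
  have hfd := hF.fderiv
  replace hfd := HasFDerivAt.fderiv (f := Psi) (by rw [psi_eq]; exact hF)
  rw [hfd]
  simp only [ContinuousLinearMap.prod_apply, ContinuousLinearMap.add_apply,
    ContinuousLinearMap.smul_apply, ContinuousLinearMap.comp_apply,
    ContinuousLinearMap.smulRight_apply, ContinuousLinearMap.coe_fst',
    ContinuousLinearMap.coe_snd', Complex.reCLM_apply, Complex.imCLM_apply,
    ContinuousLinearMap.sub_apply, smul_eq_mul]
  simp only [hp, Prod.fst, Prod.snd, Complex.real_smul, Complex.ofReal_inv, Complex.ofReal_mul,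
    Complex.ofReal_add, Complex.ofReal_sub, Complex.ofReal_neg, Complex.ofReal_ofNat,
    Complex.ofReal_one, Complex.ofReal_div, Complex.ofReal_pow, Pi.mul_apply, Pi.add_apply,
    Pi.sub_apply, Pi.smul_apply', Function.comp_apply, Complex.reCLM_apply, Complex.imCLM_apply]
  simp only [ContinuousLinearMap.coe_comp', ContinuousLinearMap.coe_fst', ContinuousLinearMap.coe_snd',
    Function.comp_apply, Complex.reCLM_apply, Complex.imCLM_apply]
  have hrC : ((Real.sqrt (b.re*b.re+b.im*b.im) : ℝ):ℂ)^2 = ((b.re*b.re+b.im*b.im : ℝ):ℂ) := by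
    rw [← Complex.ofReal_pow, Real.sq_sqrt hb2.le]
  have hsC : ((Real.sqrt ((b.re*b.re+b.im*b.im) - (a.re*a.re+a.im*a.im)) : ℝ):ℂ)^2
      = (((b.re*b.re+b.im*b.im) - (a.re*a.re+a.im*a.im) : ℝ):ℂ) := by
    rw [← Complex.ofReal_pow, Real.sq_sqrt hd.le]
  have hr1 : ((Real.sqrt (b.re*b.re+b.im*b.im) : ℝ):ℂ) ≠ 0 := by
    simp only [ne_eq, Complex.ofReal_eq_zero]; positivity
  have hs1 : ((Real.sqrt ((b.re*b.re+b.im*b.im) - (a.re*a.re+a.im*a.im)) : ℝ):ℂ) ≠ 0 := by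
    simp only [ne_eq, Complex.ofReal_eq_zero]; positivity
  clear hfd hF hc1 hc2 hin hs hmul hrinv hr hN1 hN2 hr0 hd' hb2' hp
  generalize hgr : Real.sqrt (b.re*b.re+b.im*b.im) = r at *
  generalize hgs : Real.sqrt ((b.re*b.re+b.im*b.im) - (a.re*a.re+a.im*a.im)) = s at *
  have hN0 : ((b.re:ℂ)*b.re+(b.im:ℂ)*b.im) ≠ 0 := by
    rw [show ((b.re:ℂ)*b.re+(b.im:ℂ)*b.im) = ((b.re*b.re+b.im*b.im : ℝ):ℂ) by push_cast; ring]
    exact Complex.ofReal_ne_zero.2 hb2.ne'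
  have hM0 : ((b.re:ℂ)*b.re+(b.im:ℂ)*b.im - ((a.re:ℂ)*a.re+(a.im:ℂ)*a.im)) ≠ 0 := by
    rw [show ((b.re:ℂ)*b.re+(b.im:ℂ)*b.im - ((a.re:ℂ)*a.re+(a.im:ℂ)*a.im))
      = (((b.re*b.re+b.im*b.im) - (a.re*a.re+a.im*a.im) : ℝ):ℂ) by push_cast; ring]
    exact Complex.ofReal_ne_zero.2 hd.ne'
  push_cast at hrC hsC ⊢
  have hN0' : ((b.re:ℂ)^2+(b.im:ℂ)^2) ≠ 0 := by rw [pow_two, pow_two]; exact hN0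
  refine Prod.ext ?_ ?_
  · show _ = _
    field_simp [hr1, hs1, hN0, hM0, hN0']
    linear_combination (2*a*b*((b.im:ℂ)*(v.2.im:ℂ) + (b.re:ℂ)*(v.2.re:ℂ))) * hrC
  · show _ = _
    field_simp [hr1, hs1, hN0, hM0, hN0']
    linear_combination
      (2*((b.re:ℂ)^2+(b.im:ℂ)^2)
        *(v.2*((r:ℂ))^2 - b*((b.re:ℂ)*(v.2.re:ℂ)+(b.im:ℂ)*(v.2.im:ℂ)))) * hsC
      + (2*b*((b.re:ℂ)*(v.2.re:ℂ)+(b.im:ℂ)*(v.2.im:ℂ))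
        *((b.re:ℂ)^2+(b.im:ℂ)^2-(a.re:ℂ)^2-(a.im:ℂ)^2)) * hrC

lemma combine {A B C D E F G H R c1 c2 n m : ℝ} (h1 : c1*c1 = n^3) (h2 : c2*c2 = n^3*m)
    (hn : n ≠ 0) (hm : m ≠ 0)
    (hkey : (A*B - C*D)*m + (E*F - G*H) = R * (n^3*m)) :
    (A/c1)*(B/c1) - (C/c1)*(D/c1) + (E/c2)*(F/c2) - (G/c2)*(H/c2) = R := by
  rw [div_mul_div_comm, div_mul_div_comm, div_mul_div_comm, div_mul_div_comm, h1, h2]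
  have hn3 : (n^3) ≠ 0 := pow_ne_zero _ hn
  have hnm : (n^3*m) ≠ 0 := mul_ne_zero hn3 hm
  calc A*B/(n^3) - C*D/(n^3) + E*F/(n^3*m) - G*H/(n^3*m)
      = ((A*B - C*D)*m + (E*F - G*H))/(n^3*m) := by field_simp; ring
    _ = R := by rw [hkey]; exact mul_div_cancel_right₀ R hnm

set_option maxHeartbeats 4000000 in
lemma psi_symp (a b : ℂ) (hb2 : 0 < b.re*b.re+b.im*b.im)
    (hd : 0 < (b.re*b.re+b.im*b.im) - (a.re*a.re+a.im*a.im)) (v w : ℂ × ℂ) :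
    (fderiv ℝ Psi (a,b) v).1.re * (fderiv ℝ Psi (a,b) w).1.im
      - (fderiv ℝ Psi (a,b) v).1.im * (fderiv ℝ Psi (a,b) w).1.re
      + (fderiv ℝ Psi (a,b) v).2.re * (fderiv ℝ Psi (a,b) w).2.im
      - (fderiv ℝ Psi (a,b) v).2.im * (fderiv ℝ Psi (a,b) w).2.re
    = v.1.re * w.1.im - v.1.im * w.1.re + v.2.re * w.2.im - v.2.im * w.2.re := by
  rw [fderiv_psi a b hb2 hd v, fderiv_psi a b hb2 hd w]
  have hr2 : (Real.sqrt (b.re*b.re+b.im*b.im))^2 = b.re*b.re+b.im*b.im := Real.sq_sqrt hb2.le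
  have hs2 : (Real.sqrt ((b.re*b.re+b.im*b.im) - (a.re*a.re+a.im*a.im)))^2
      = (b.re*b.re+b.im*b.im) - (a.re*a.re+a.im*a.im) := Real.sq_sqrt hd.le
  have hr0 : Real.sqrt (b.re*b.re+b.im*b.im) ≠ 0 := by positivity
  have hs0 : Real.sqrt ((b.re*b.re+b.im*b.im) - (a.re*a.re+a.im*a.im)) ≠ 0 := by positivity
  generalize hgr : Real.sqrt (b.re*b.re+b.im*b.im) = r at *
  generalize hgs : Real.sqrt ((b.re*b.re+b.im*b.im) - (a.re*a.re+a.im*a.im)) = s at *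
  have hN0 : (b.re*b.re+b.im*b.im) ≠ 0 := hb2.ne'
  have hM0 : ((b.re*b.re+b.im*b.im) - (a.re*a.re+a.im*a.im)) ≠ 0 := hd.ne'
  simp only [← Complex.ofReal_mul, Complex.div_ofReal_re, Complex.div_ofReal_im,
    Complex.add_re, Complex.add_im, Complex.sub_re, Complex.sub_im,
    Complex.mul_re, Complex.mul_im, Complex.ofReal_re, Complex.ofReal_im]
  refine combine (n := b.re*b.re+b.im*b.im) (m := (b.re*b.re+b.im*b.im) - (a.re*a.re+a.im*a.im))
    ?_ ?_ hN0 hM0 (by ring)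
  · linear_combination ((b.re*b.re+b.im*b.im)^2) * hr2
  · linear_combination ((b.re*b.re+b.im*b.im)^2*s^2)*hr2 + ((b.re*b.re+b.im*b.im)^3)*hs2

noncomputable def Phi : ℂ × ℂ → ℂ × ℂ := fun w =>
  (w.1 * (‖w.2‖ : ℂ) / w.2,
   w.2 * (Real.sqrt ((‖w.1‖)^2 + (‖w.2‖)^2) : ℂ) / (‖w.2‖ : ℂ))

lemma psi_snd_ne (p : ℂ × ℂ) (h : ‖p.1‖ < ‖p.2‖) : (Psi p).2 ≠ 0 := by
  have hb : p.2 ≠ 0 := by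
    intro h0; rw [h0] at h; simp at h; exact (norm_nonneg p.1).not_gt h
  have hr : (0:ℝ) < ‖p.2‖ := norm_pos_iff.mpr hb
  have hd : (0:ℝ) < (‖p.2‖)^2 - (‖p.1‖)^2 := by
    have := pow_lt_pow_left₀ h (norm_nonneg p.1) (n := 2) (by norm_num)
    linarith
  have hs : (0:ℝ) < Real.sqrt ((‖p.2‖)^2 - (‖p.1‖)^2) := Real.sqrt_pos.2 hd
  simp only [Psi]
  apply div_ne_zero (mul_ne_zero hb _) _
  · exact Complex.ofReal_ne_zero.2 hs.ne'
  · exact Complex.ofReal_ne_zero.2 hr.ne'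

lemma psi_left_inv (p : ℂ × ℂ) (h : ‖p.1‖ < ‖p.2‖) : Phi (Psi p) = p := by
  have hb : p.2 ≠ 0 := by
    intro h0; rw [h0] at h; simp at h; exact (norm_nonneg p.1).not_gt h
  have hr : (0:ℝ) < ‖p.2‖ := norm_pos_iff.mpr hb
  have hd : (0:ℝ) < (‖p.2‖)^2 - (‖p.1‖)^2 := by
    have := pow_lt_pow_left₀ h (norm_nonneg p.1) (n := 2) (by norm_num)
    linarith
  have hs : (0:ℝ) < Real.sqrt ((‖p.2‖)^2 - (‖p.1‖)^2) := Real.sqrt_pos.2 hd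
  have habs2 : ‖(Psi p).2‖ = Real.sqrt ((‖p.2‖)^2 - (‖p.1‖)^2) := by
    simp only [Psi, norm_div, norm_mul, Complex.norm_real, Real.norm_eq_abs, abs_of_pos hr, abs_of_pos hs]
    field_simp
  have habs1 : ‖(Psi p).1‖ = ‖p.1‖ := by
    simp only [Psi, norm_div, norm_mul, Complex.norm_real, Real.norm_eq_abs, abs_of_pos hr]
    field_simp
  have hrC : ((‖p.2‖ : ℝ):ℂ) ≠ 0 := Complex.ofReal_ne_zero.2 hr.ne'
  have hsC : ((Real.sqrt ((‖p.2‖)^2 - (‖p.1‖)^2) : ℝ):ℂ) ≠ 0 :=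
    Complex.ofReal_ne_zero.2 hs.ne'
  refine Prod.ext ?_ ?_
  · show (Psi p).1 * (‖(Psi p).2‖ : ℂ) / (Psi p).2 = p.1
    rw [habs2]
    simp only [Psi]
    field_simp [hb, hrC, hsC]
  · show (Psi p).2 * (Real.sqrt ((‖(Psi p).1‖)^2 + (‖(Psi p).2‖)^2) : ℂ)
        / (‖(Psi p).2‖ : ℂ) = p.2
    rw [habs1, habs2, Real.sq_sqrt hd.le]
    rw [show (‖p.1‖)^2 + ((‖p.2‖)^2 - (‖p.1‖)^2)
        = (‖p.2‖)^2 by ring]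
    rw [Real.sqrt_sq hr.le]
    simp only [Psi]
    field_simp [hb, hrC, hsC]

lemma phi_mem (w : ℂ × ℂ) (hw : w.2 ≠ 0) :
    ‖(Phi w).1‖ < ‖(Phi w).2‖ := by
  have hc : (0:ℝ) < ‖w.2‖ := norm_pos_iff.mpr hw
  have hR : (0:ℝ) < Real.sqrt ((‖w.1‖)^2 + (‖w.2‖)^2) := by positivity
  have h1 : ‖(Phi w).1‖ = ‖w.1‖ := by
    simp only [Phi, norm_div, norm_mul, Complex.norm_real, Real.norm_eq_abs, abs_of_pos hc]
    field_simp
  have h2 : ‖(Phi w).2‖ = Real.sqrt ((‖w.1‖)^2 + (‖w.2‖)^2) := by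
    simp only [Phi, norm_div, norm_mul, Complex.norm_real, Real.norm_eq_abs, abs_of_pos hc, abs_of_pos hR]
    field_simp
  rw [h1, h2]
  have h3 := Real.sqrt_lt_sqrt (sq_nonneg (‖w.1‖))
    (show (‖w.1‖)^2 < (‖w.1‖)^2 + (‖w.2‖)^2 by nlinarith [hc])
  rwa [Real.sqrt_sq (norm_nonneg _)] at h3

lemma psi_right_inv (w : ℂ × ℂ) (hw : w.2 ≠ 0) : Psi (Phi w) = w := by
  have hc : (0:ℝ) < ‖w.2‖ := norm_pos_iff.mpr hw
  have hR : (0:ℝ) < Real.sqrt ((‖w.1‖)^2 + (‖w.2‖)^2) := by positivity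
  have h1 : ‖(Phi w).1‖ = ‖w.1‖ := by
    simp only [Phi, norm_div, norm_mul, Complex.norm_real, Real.norm_eq_abs, abs_of_pos hc]
    field_simp
  have h2 : ‖(Phi w).2‖ = Real.sqrt ((‖w.1‖)^2 + (‖w.2‖)^2) := by
    simp only [Phi, norm_div, norm_mul, Complex.norm_real, Real.norm_eq_abs, abs_of_pos hc, abs_of_pos hR]
    field_simp
  have hcC : ((‖w.2‖ : ℝ):ℂ) ≠ 0 := Complex.ofReal_ne_zero.2 hc.ne'
  have hRC : ((Real.sqrt ((‖w.1‖)^2 + (‖w.2‖)^2) : ℝ):ℂ) ≠ 0 :=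
    Complex.ofReal_ne_zero.2 hR.ne'
  have hdiff : (‖(Phi w).2‖)^2 - (‖(Phi w).1‖)^2 = (‖w.2‖)^2 := by
    rw [h1, h2, Real.sq_sqrt (by positivity)]
    ring
  refine Prod.ext ?_ ?_
  · show (Phi w).1 * (Phi w).2 / (‖(Phi w).2‖ : ℂ) = w.1
    rw [h2]
    simp only [Phi]
    field_simp [hw, hcC, hRC]
  · show (Phi w).2 * (Real.sqrt ((‖(Phi w).2‖)^2 - (‖(Phi w).1‖)^2) : ℂ)
        / (‖(Phi w).2‖ : ℂ) = w.2
    rw [hdiff, Real.sqrt_sq hc.le, h2]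
    simp only [Phi]
    field_simp [hw, hcC, hRC]

/-- **The map `Ψ` of Lemma 4.1 of Chekanov–Schlenk.** On
`W = {(z₁,z₂) ∈ ℂ² : |z₁| < |z₂|}`, the map
`Ψ(z₁,z₂) = (z₁z₂/|z₂|, z₂√(|z₂|²−|z₁|²)/|z₂|)` is injective, has image
`ℂ² ∖ {z₂ = 0}`, and preserves the standard symplectic form
`ω₂ = dx₁∧dy₁ + dx₂∧dy₂`. -/
theorem psi_injective_image_symplectic :
    ∀ (W : Set (ℂ × ℂ)) (Ψ : ℂ × ℂ → ℂ × ℂ),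
      W = {p : ℂ × ℂ | ‖p.1‖ < ‖p.2‖} →
      (Ψ = fun p =>
        (p.1 * p.2 / (‖p.2‖ : ℂ),
         p.2 * (Real.sqrt ((‖p.2‖) ^ 2 - (‖p.1‖) ^ 2) : ℂ)
           / (‖p.2‖ : ℂ))) →
      Set.InjOn Ψ W ∧
      Ψ '' W = {p : ℂ × ℂ | p.2 ≠ 0} ∧
      ∀ p ∈ W, ∀ v w : ℂ × ℂ,
        (fderiv ℝ Ψ p v).1.re * (fderiv ℝ Ψ p w).1.im
          - (fderiv ℝ Ψ p v).1.im * (fderiv ℝ Ψ p w).1.re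
          + (fderiv ℝ Ψ p v).2.re * (fderiv ℝ Ψ p w).2.im
          - (fderiv ℝ Ψ p v).2.im * (fderiv ℝ Ψ p w).2.re
        = v.1.re * w.1.im - v.1.im * w.1.re + v.2.re * w.2.im - v.2.im * w.2.re := by
  intro W Ψ hW hΨ
  have hΨ' : Ψ = Psi := hΨ
  subst hΨ' hW
  refine ⟨?_, ?_, ?_⟩
  · intro p hp q hq h
    have h1 := congrArg Phi h
    rwa [psi_left_inv p hp, psi_left_inv q hq] at h1
  · ext w
    constructor
    · rintro ⟨p, hp, rfl⟩
      exact psi_snd_ne p hp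
    · intro hw
      exact ⟨Phi w, phi_mem w hw, psi_right_inv w hw⟩
  · rintro ⟨a, b⟩ hp v w
    have hab : ‖a‖ < ‖b‖ := hp
    have hb : b ≠ 0 := by
      intro h0; rw [h0] at hab; simp at hab
      exact (norm_nonneg a).not_gt hab
    have hb2 : 0 < b.re*b.re+b.im*b.im := by
      have := Complex.normSq_pos.2 hb
      rwa [Complex.normSq_apply] at this
    have hd : 0 < (b.re*b.re+b.im*b.im) - (a.re*a.re+a.im*a.im) := by
      have h2 := pow_lt_pow_left₀ hab (norm_nonneg a) (by norm_num : (2:ℕ) ≠ 0)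
      rw [Complex.sq_norm, Complex.sq_norm, Complex.normSq_apply, Complex.normSq_apply] at h2
      linarith
    exact psi_symp a b hb2 hd v w
end
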